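/- arXiv:2405.20116 — 9 statements merged into one kernel-verified Lean document; each statement's English description precedes it below -/
import Mathlib

section
/- Let X and Y be square-integrable real random variables on a probability space with positive variances, let σ_X = √Var(X), σ_Y = √Var(Y), and let ρ = Cov(X,Y)/(σ_X σ_Y) denote their correlation. Suppose there exist constants δ ≥ 0, L_σ > 0, L_ρ > 0 and α ≥ 1 such that |Var(X) − Var(Y)| ≤ L_σ·δ, 0 ≤ ρ ≤ 1, and 1 − ρ ≤ L_ρ·δ^α. Then Var(X − Y) ≤ 2·Var(Y)·L_ρ·δ^α + 3·L_σ·δ. -/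
open MeasureTheory ProbabilityTheory

private lemma var_sub_eq {Ω : Type*} {m0 : MeasurableSpace Ω} (P : Measure Ω)
    [IsProbabilityMeasure P]
    (X Y : Ω → ℝ) (hX : MemLp X 2 P) (hY : MemLp Y 2 P) :
    variance (X - Y) P = variance X P + variance Y P
      - 2 * (∫ ω, (X ω - ∫ x, X x ∂P) * (Y ω - ∫ x, Y x ∂P) ∂P) := by
  have hXY : Integrable (fun ω => X ω * Y ω) P := by
    have := (hY.smul (φ := X) hX (p := 2) (q := 2) (r := 1)
      (hpqr := ⟨by simp [ENNReal.inv_two_add_inv_two, one_div]⟩)).integrable le_rfl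
    exact this
  have hX1 : Integrable X P := hX.integrable one_le_two
  have hY1 : Integrable Y P := hY.integrable one_le_two
  have hX2 : Integrable (fun ω => X ω ^ 2) P := hX.integrable_sq
  have hY2 : Integrable (fun ω => Y ω ^ 2) P := hY.integrable_sq
  have hC : (∫ ω, (X ω - ∫ x, X x ∂P) * (Y ω - ∫ x, Y x ∂P) ∂P)
      = (∫ ω, X ω * Y ω ∂P) - (∫ x, X x ∂P) * (∫ x, Y x ∂P) := by
    have : ∀ ω, (X ω - ∫ x, X x ∂P) * (Y ω - ∫ x, Y x ∂P)
        = X ω * Y ω - (∫ x, X x ∂P) * Y ω - (∫ x, Y x ∂P) * X ω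
          + (∫ x, X x ∂P) * (∫ x, Y x ∂P) := by intro ω; ring
    simp_rw [this]
    rw [integral_add, integral_sub, integral_sub, integral_const_mul, integral_const_mul,
      integral_const]
    · simp; ring
    · exact hXY
    · exact hY1.const_mul _
    · exact (hXY.sub (hY1.const_mul _))
    · exact hX1.const_mul _
    · exact ((hXY.sub (hY1.const_mul _)).sub (hX1.const_mul _))
    · exact integrable_const _
  rw [variance_eq_sub (hX.sub hY), variance_eq_sub hX, variance_eq_sub hY, hC]
  have hsub : ∫ ω, ((X - Y) ω) ∂P = (∫ x, X x ∂P) - ∫ x, Y x ∂P := integral_sub hX1 hY1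
  have hsq : (∫ ω, ((X - Y) ^ 2) ω ∂P)
      = (∫ ω, X ω ^ 2 ∂P) + (∫ ω, Y ω ^ 2 ∂P) - 2 * ∫ ω, X ω * Y ω ∂P := by
    have : ∀ ω, ((X - Y) ^ 2) ω = X ω ^ 2 + Y ω ^ 2 - 2 * (X ω * Y ω) := by
      intro ω; simp [Pi.sub_apply]; ring
    simp_rw [this]
    rw [integral_sub (f := fun ω => X ω ^ 2 + Y ω ^ 2) (g := fun ω => 2 * (X ω * Y ω))
      (hX2.add hY2) (hXY.const_mul 2),
      integral_add (f := fun ω => X ω ^ 2) (g := fun ω => Y ω ^ 2) hX2 hY2, integral_const_mul]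
  simp only [Pi.pow_apply, Pi.sub_apply] at *
  rw [hsq, hsub]
  ring

/-- **CRN variance bound for a function difference (non-Lipschitz paths).**
If `X`, `Y` are square-integrable with positive variances, `ρ` is their
correlation, the variances differ by at most `L_σ δ`, `0 ≤ ρ ≤ 1`, and
`1 − ρ ≤ L_ρ δ^α`, then `Var(X − Y) ≤ 2 Var(Y) L_ρ δ^α + 3 L_σ δ`. -/
theorem stmt_1
    {Ω : Type*} {m0 : MeasurableSpace Ω} (P : Measure Ω) [IsProbabilityMeasure P]
    (X Y : Ω → ℝ) (hX : MemLp X 2 P) (hY : MemLp Y 2 P)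
    (hvX : 0 < variance X P) (hvY : 0 < variance Y P)
    (δ Lσ Lρ α : ℝ) (hδ : 0 ≤ δ) (hLσ : 0 < Lσ) (hLρ : 0 < Lρ) (hα : 1 ≤ α)
    (ρ : ℝ)
    (hρdef : ρ = (∫ ω, (X ω - ∫ x, X x ∂P) * (Y ω - ∫ x, Y x ∂P) ∂P)
        / (Real.sqrt (variance X P) * Real.sqrt (variance Y P)))
    (hvar : |variance X P - variance Y P| ≤ Lσ * δ)
    (hρ0 : 0 ≤ ρ) (hρ1 : ρ ≤ 1) (hρH : 1 - ρ ≤ Lρ * δ ^ α) :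
    variance (X - Y) P ≤ 2 * variance Y P * Lρ * δ ^ α + 3 * Lσ * δ := by
  set sX := Real.sqrt (variance X P) with hsX
  set sY := Real.sqrt (variance Y P) with hsY
  have hsX0 : 0 < sX := Real.sqrt_pos.mpr hvX
  have hsY0 : 0 < sY := Real.sqrt_pos.mpr hvY
  have hsX2 : sX ^ 2 = variance X P := Real.sq_sqrt hvX.le
  have hsY2 : sY ^ 2 = variance Y P := Real.sq_sqrt hvY.le
  have hCov : (∫ ω, (X ω - ∫ x, X x ∂P) * (Y ω - ∫ x, Y x ∂P) ∂P) = ρ * (sX * sY) := by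
    rw [hρdef]; field_simp
  have hkey : variance (X - Y) P = sX ^ 2 + sY ^ 2 - 2 * (ρ * (sX * sY)) := by
    rw [var_sub_eq P X Y hX hY, hCov, hsX2, hsY2]
  -- bound |sX² − sY²| pieces
  have habs : |sX ^ 2 - sY ^ 2| ≤ Lσ * δ := by rw [hsX2, hsY2]; exact hvar
  have habs2 : |sX - sY| ≤ sX + sY := abs_le.mpr ⟨by linarith, by linarith⟩
  have h1 : (sX - sY) ^ 2 ≤ Lσ * δ := by
    calc (sX - sY) ^ 2 = |sX - sY| * |sX - sY| := by rw [← sq_abs, sq]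
      _ ≤ |sX - sY| * (sX + sY) := mul_le_mul_of_nonneg_left habs2 (abs_nonneg _)
      _ = |(sX - sY) * (sX + sY)| := by
          rw [abs_mul, abs_of_pos (show (0:ℝ) < sX + sY by linarith)]
      _ = |sX ^ 2 - sY ^ 2| := by
          rw [show (sX - sY) * (sX + sY) = sX ^ 2 - sY ^ 2 from by ring]
      _ ≤ Lσ * δ := habs
  have h2 : sX ^ 2 ≤ sY ^ 2 + Lσ * δ := by
    have := abs_le.mp habs
    linarith [this.2]
  have h3 : 2 * (sX * sY) ≤ sX ^ 2 + sY ^ 2 := by nlinarith [sq_nonneg (sX - sY)]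
  have h1ρ : 0 ≤ 1 - ρ := by linarith
  have hδα : 0 ≤ Lρ * δ ^ α := by positivity
  have h4 : 2 * (sX * sY) * (1 - ρ) ≤ (2 * sY ^ 2 + Lσ * δ) * (1 - ρ) := by
    apply mul_le_mul_of_nonneg_right _ h1ρ
    linarith
  have h5 : (2 * sY ^ 2 + Lσ * δ) * (1 - ρ) ≤ 2 * sY ^ 2 * (Lρ * δ ^ α) + Lσ * δ * 1 := by
    have hLσδ : 0 ≤ Lσ * δ := by positivity
    have := mul_le_mul_of_nonneg_left hρH (show (0:ℝ) ≤ 2 * sY ^ 2 by positivity)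
    have := mul_le_mul_of_nonneg_left (show 1 - ρ ≤ 1 by linarith) hLσδ
    nlinarith
  have hfin : variance (X - Y) P = (sX - sY) ^ 2 + 2 * (sX * sY) * (1 - ρ) := by
    rw [hkey]; ring
  rw [hfin, hsY2] at *
  nlinarith [mul_pos hsX0 hsY0]
end

section
/- Let (Ω, F, P) be a probability space, G ⊆ F a sub-σ-algebra, and X, Y real random variables such that for every integer m ≥ 2, E[|X|^m | G] ≤ (m!/2)·b^{m−2}·σ² and E[|Y|^m | G] ≤ (m!/2)·b^{m−2}·σ² almost surely, where b > 0 and σ² > 0. Suppose in addition that there exist Δ > 0 and σ_B² ≥ 4σ² with E[(X − Y)² | G] ≤ Δ·σ_B² almost surely. Then for every integer m ≥ 2, E[|X − Y|^m | G] ≤ (m!/2) · ( max{2b/Δ, 2b} )^{m−2} · Δ·σ_B² almost surely. -/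
open MeasureTheory ProbabilityTheory

/-- **Conditional Bernstein moments of a CRN difference.** If `X` and `Y`
each satisfy the conditional Bernstein moment condition with parameters
`(b, σ²)` given `G`, and the conditional variance of `X − Y` is at most
`Δ σ_B²` with `σ_B² ≥ 4σ²`, then `X − Y` satisfies the conditional Bernstein
moment condition with parameters `(max{2b/Δ, 2b}, Δ σ_B²)`. -/
theorem stmt_4
    {Ω : Type*} {m0 : MeasurableSpace Ω} (P : Measure Ω) [IsProbabilityMeasure P]
    (G : MeasurableSpace Ω) (hG : G ≤ m0)
    (X Y : Ω → ℝ) (b σ : ℝ) (hb : 0 < b) (hσ : 0 < σ ^ 2)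
    (hXint : ∀ m : ℕ, 2 ≤ m → Integrable (fun ω => |X ω| ^ m) P)
    (hYint : ∀ m : ℕ, 2 ≤ m → Integrable (fun ω => |Y ω| ^ m) P)
    (hXmom : ∀ m : ℕ, 2 ≤ m → ∀ᵐ ω ∂P, (P[fun ω' => |X ω'| ^ m | G]) ω
      ≤ (m.factorial : ℝ) / 2 * b ^ (m - 2) * σ ^ 2)
    (hYmom : ∀ m : ℕ, 2 ≤ m → ∀ᵐ ω ∂P, (P[fun ω' => |Y ω'| ^ m | G]) ω
      ≤ (m.factorial : ℝ) / 2 * b ^ (m - 2) * σ ^ 2)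
    (Δ σB2 : ℝ) (hΔ : 0 < Δ) (hσB : 4 * σ ^ 2 ≤ σB2)
    (hcondvar : ∀ᵐ ω ∂P, (P[fun ω' => (X ω' - Y ω') ^ 2 | G]) ω ≤ Δ * σB2) :
    ∀ m : ℕ, 2 ≤ m → ∀ᵐ ω ∂P, (P[fun ω' => |X ω' - Y ω'| ^ m | G]) ω
      ≤ (m.factorial : ℝ) / 2 * max (2 * b / Δ) (2 * b) ^ (m - 2) * (Δ * σB2) := by
  intro m hm
  set M := max (2 * b / Δ) (2 * b) with hM
  have hMpos : 0 < M := lt_max_of_lt_right (by linarith)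
  have hσB2pos : 0 < σB2 := by linarith
  by_cases hint : Integrable (fun ω => |X ω - Y ω| ^ m) P
  · rcases eq_or_lt_of_le hm with hm2 | hm3
    · -- m = 2
      subst hm2
      have heq : (fun ω' => |X ω' - Y ω'| ^ 2) = fun ω' => (X ω' - Y ω') ^ 2 := by
        funext ω'; rw [sq_abs]
      rw [heq]
      filter_upwards [hcondvar] with ω hω
      calc (P[fun ω' => (X ω' - Y ω') ^ 2|G]) ω ≤ Δ * σB2 := hω
        _ = (Nat.factorial 2 : ℝ) / 2 * M ^ (2 - 2) * (Δ * σB2) := by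
            norm_num [Nat.factorial]
    · -- 3 ≤ m
      have hk1 : 1 ≤ m - 2 := by omega
      have hkey : (2 * b) ^ (m - 2) ≤ Δ * M ^ (m - 2) := by
        rcases le_or_gt 1 Δ with h1 | h1
        · calc (2 * b) ^ (m - 2) ≤ M ^ (m - 2) :=
              pow_le_pow_left₀ (by linarith) (le_max_right _ _) _
            _ = 1 * M ^ (m - 2) := (one_mul _).symm
            _ ≤ Δ * M ^ (m - 2) := by
                have := pow_pos hMpos (m - 2); nlinarith
        · have h2 : (2 * b / Δ) ^ (m - 2) ≤ M ^ (m - 2) :=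
            pow_le_pow_left₀ (by positivity) (le_max_left _ _) _
          have hΔpow : Δ ^ (m - 2) ≤ Δ := by
            calc Δ ^ (m - 2) ≤ Δ ^ 1 := pow_le_pow_of_le_one hΔ.le h1.le hk1
              _ = Δ := pow_one Δ
          have hdiv : (2 * b / Δ) ^ (m - 2) * Δ ^ (m - 2) = (2 * b) ^ (m - 2) := by
            rw [← mul_pow, div_mul_cancel₀ _ hΔ.ne']
          calc (2 * b) ^ (m - 2) = (2 * b / Δ) ^ (m - 2) * Δ ^ (m - 2) := hdiv.symm
            _ ≤ M ^ (m - 2) * Δ := mul_le_mul h2 hΔpow (by positivity) (by positivity)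
            _ = Δ * M ^ (m - 2) := mul_comm _ _
      have hptw : ∀ ω, |X ω - Y ω| ^ m ≤ (2 : ℝ) ^ (m - 1) * (|X ω| ^ m + |Y ω| ^ m) :=
        fun ω => by
          calc |X ω - Y ω| ^ m ≤ (|X ω| + |Y ω|) ^ m :=
              pow_le_pow_left₀ (abs_nonneg _) (abs_sub _ _) m
            _ ≤ (2 : ℝ) ^ (m - 1) * (|X ω| ^ m + |Y ω| ^ m) :=
              add_pow_le (abs_nonneg _) (abs_nonneg _) m
      have hgint : Integrable
          ((2 : ℝ) ^ (m - 1) • fun ω => |X ω| ^ m + |Y ω| ^ m) P :=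
        (((hXint m hm).add (hYint m hm)).smul ((2 : ℝ) ^ (m - 1)))
      have hmono := condExp_mono (m := G) hint hgint
        (ae_of_all _ (fun ω => by simpa using hptw ω))
      have hsmul := condExp_smul (μ := P) (m := G) ((2 : ℝ) ^ (m - 1))
        (fun ω => |X ω| ^ m + |Y ω| ^ m)
      have hadd := condExp_add (μ := P) (m := G) (hXint m hm) (hYint m hm)
      filter_upwards [hmono, hsmul, hadd, hXmom m hm, hYmom m hm] with ω h1 h2 h3 hx hy
      have hA : (P[fun ω' => |X ω' - Y ω'| ^ m|G]) ω
          ≤ (2 : ℝ) ^ (m - 1) * ((P[fun ω' => |X ω'| ^ m|G]) ω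
            + (P[fun ω' => |Y ω'| ^ m|G]) ω) := by
        calc (P[fun ω' => |X ω' - Y ω'| ^ m|G]) ω
            ≤ (P[(2 : ℝ) ^ (m - 1) • fun ω => |X ω| ^ m + |Y ω| ^ m|G]) ω := h1
          _ = (2 : ℝ) ^ (m - 1) * (P[fun ω => |X ω| ^ m + |Y ω| ^ m|G]) ω := h2
          _ = (2 : ℝ) ^ (m - 1) * ((P[fun ω' => |X ω'| ^ m|G]) ω
              + (P[fun ω' => |Y ω'| ^ m|G]) ω) := by
              rw [show (fun ω => |X ω| ^ m + |Y ω| ^ m)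
                  = ((fun ω => |X ω| ^ m) + fun ω => |Y ω| ^ m) from rfl, h3,
                Pi.add_apply]
      have h2pow : (2 : ℝ) ^ (m - 1) = 2 * 2 ^ (m - 2) := by
        have : m - 1 = (m - 2) + 1 := by omega
        rw [this, pow_succ]; ring
      have hmul : (2 : ℝ) ^ (m - 2) * b ^ (m - 2) = (2 * b) ^ (m - 2) := by
        rw [mul_pow]
      have hfacpos : (0 : ℝ) < (m.factorial : ℝ) := by positivity
      have hMp : (0 : ℝ) < M ^ (m - 2) := pow_pos hMpos _
      have h2p : (0 : ℝ) < (2 : ℝ) ^ (m - 2) := by positivity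
      calc (P[fun ω' => |X ω' - Y ω'| ^ m|G]) ω
          ≤ (2 : ℝ) ^ (m - 1) * ((P[fun ω' => |X ω'| ^ m|G]) ω
            + (P[fun ω' => |Y ω'| ^ m|G]) ω) := hA
        _ ≤ (2 : ℝ) ^ (m - 1) * ((m.factorial : ℝ) / 2 * b ^ (m - 2) * σ ^ 2
            + (m.factorial : ℝ) / 2 * b ^ (m - 2) * σ ^ 2) := by
            apply mul_le_mul_of_nonneg_left (by linarith) (by positivity)
        _ = (m.factorial : ℝ) * (2 * ((2 * b) ^ (m - 2) * σ ^ 2)) := by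
            rw [h2pow, ← hmul]; ring
        _ ≤ (m.factorial : ℝ) / 2 * M ^ (m - 2) * (Δ * σB2) := by
            have h4 : (2 * b) ^ (m - 2) * σ ^ 2 ≤ Δ * M ^ (m - 2) * σ ^ 2 :=
              mul_le_mul_of_nonneg_right hkey hσ.le
            have h5 : Δ * M ^ (m - 2) * (4 * σ ^ 2) ≤ Δ * M ^ (m - 2) * σB2 :=
              mul_le_mul_of_nonneg_left hσB (by positivity)
            nlinarith [mul_le_mul_of_nonneg_left h4 hfacpos.le,
              mul_le_mul_of_nonneg_left h5 hfacpos.le]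
  · rw [condExp_of_not_integrable hint]
    filter_upwards with ω
    have : (0 : ℝ) < (m.factorial : ℝ) / 2 * M ^ (m - 2) * (Δ * σB2) := by positivity
    simpa using this.le
end

section
/- Let (Ω, F, P) be a probability space with a filtration F_0 ⊆ F_1 ⊆ … where F_0 is trivial. For j ≥ 1 let D_j = X_j − Y_j, where X_j and Y_j are F_j-measurable real random variables with E[D_j | F_{j−1}] = 0 almost surely, and where for every integer m ≥ 2, E[|X_j|^m | F_{j−1}] ≤ (m!/2)·b^{m−2}·σ² and E[|Y_j|^m | F_{j−1}] ≤ (m!/2)·b^{m−2}·σ² almost surely, for constants b > 0 and σ² > 0. Suppose in addition that there exist Δ > 0 and σ_B² ≥ 4σ² with E[D_j² | F_{j−1}] ≤ Δ·σ_B² almost surely for all j. Then for every c > 0 and every n ∈ ℕ, P( Σ_{j=1}^n D_j ≥ n·c ) ≤ exp( − n·c² / (2(b_B·c + Δ·σ_B²)) ), where b_B = max{2b/Δ, 2b}. -/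
open MeasureTheory ProbabilityTheory Real
open scoped ENNReal

namespace Stmt5Aux


lemma exp_le_aux (x : ℝ) : Real.exp x ≤ 1 + x + (Real.exp |x| - 1 - |x|) := by
  rcases le_or_gt 0 x with hx | hx
  · rw [abs_of_nonneg hx]; ring_nf; exact le_refl _
  · rw [abs_of_neg hx]
    have h1 : Real.sinh x < x := Real.sinh_lt_self_iff.2 hx
    rw [Real.sinh_eq] at h1
    linarith

lemma series_aux {t : ℝ} (ht : 0 ≤ t) :
    Real.exp t - 1 - t = ∑' m : ℕ, t ^ (m + 2) / ((m + 2).factorial : ℝ) := by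
  have hs : Summable (fun n : ℕ => t ^ n / (n.factorial : ℝ)) :=
    Real.summable_pow_div_factorial t
  have he : Real.exp t = ∑' n : ℕ, t ^ n / (n.factorial : ℝ) := by
    rw [Real.exp_eq_exp_ℝ, NormedSpace.exp_eq_tsum_div]
  have hs1 : Summable (fun n : ℕ => t ^ (n + 1) / ((n + 1).factorial : ℝ)) :=
    (summable_nat_add_iff 1).2 hs
  rw [he, Summable.tsum_eq_zero_add hs, Summable.tsum_eq_zero_add hs1]
  norm_num [Nat.factorial]



lemma weighted_bound {Ω : Type*} {m0 : MeasurableSpace Ω}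
    (P : Measure Ω) [IsProbabilityMeasure P]
    {F : MeasurableSpace Ω} (hF : F ≤ m0) {f : Ω → ℝ} (hf : Integrable f P)
    (hf0 : 0 ≤ f) {K : ℝ} (hK : 0 ≤ K)
    (hcond : ∀ᵐ ω ∂P, (P[f|F]) ω ≤ K)
    {h : Ω → ℝ≥0∞} (hh : Measurable[F] h) :
    ∫⁻ ω, h ω * ENNReal.ofReal (f ω) ∂P ≤ ENNReal.ofReal K * ∫⁻ ω, h ω ∂P := by
  have hfae : AEMeasurable (fun ω => ENNReal.ofReal (f ω)) P :=
    ENNReal.measurable_ofReal.comp_aemeasurable hf.aemeasurable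
  set μ : @Measure Ω m0 := P.withDensity (fun ω => ENNReal.ofReal (f ω)) with hμ
  have key : μ.trim hF ≤ ((ENNReal.ofReal K) • P).trim hF := by
    rw [Measure.le_iff]
    intro s hs
    rw [trim_measurableSet_eq hF hs, trim_measurableSet_eq hF hs]
    have hs0 : MeasurableSet[m0] s := hF s hs
    rw [withDensity_apply _ hs0]
    have h1 : ∫⁻ ω in s, ENNReal.ofReal (f ω) ∂P = ENNReal.ofReal (∫ ω in s, f ω ∂P) := by
      rw [ofReal_integral_eq_lintegral_ofReal hf.restrict
        (Filter.Eventually.of_forall fun ω => hf0 ω)]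
    rw [h1]
    have h2 : ∫ ω in s, f ω ∂P = ∫ ω in s, (P[f|F]) ω ∂P :=
      (setIntegral_condExp hF hf hs).symm
    have h3 : ∫ ω in s, (P[f|F]) ω ∂P ≤ K * (P s).toReal := by
      have hm := integral_mono_ae (μ := P.restrict s) integrable_condExp.restrict
        (integrable_const K) (ae_restrict_of_ae hcond)
      simpa [integral_const, Measure.restrict_apply_univ, smul_eq_mul, mul_comm, measureReal_def] using hm
    have h5 : ENNReal.ofReal (∫ ω in s, f ω ∂P) ≤ ENNReal.ofReal (K * (P s).toReal) := by
      apply ENNReal.ofReal_le_ofReal; rw [h2]; exact h3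
    refine h5.trans ?_
    rw [ENNReal.ofReal_mul hK, ENNReal.ofReal_toReal (measure_ne_top P s)]
    simp [Measure.smul_apply]
  have hhm0 : Measurable[m0] h := hh.mono hF le_rfl
  have e1 : ∫⁻ ω, h ω ∂μ = ∫⁻ ω, h ω * ENNReal.ofReal (f ω) ∂P := by
    rw [hμ, lintegral_withDensity_eq_lintegral_mul₀ hfae hhm0.aemeasurable]
    exact lintegral_congr fun ω => mul_comm _ _
  have e2 : ∫⁻ ω, h ω ∂μ = ∫⁻ ω, h ω ∂(μ.trim hF) := (lintegral_trim hF hh).symm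
  have e3 : ∫⁻ ω, h ω ∂(μ.trim hF) ≤ ∫⁻ ω, h ω ∂(((ENNReal.ofReal K) • P).trim hF) :=
    lintegral_mono' key le_rfl
  have e4 : ∫⁻ ω, h ω ∂(((ENNReal.ofReal K) • P).trim hF)
      = ENNReal.ofReal K * ∫⁻ ω, h ω ∂P := by
    rw [lintegral_trim hF hh, lintegral_smul_measure, smul_eq_mul]
  rw [← e1, e2]
  exact e3.trans_eq e4

theorem aux_bernstein {Ω : Type*} {m0 : MeasurableSpace Ω}
    (P : Measure Ω) [IsProbabilityMeasure P] (𝓕 : Filtration ℕ m0)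
    (D : ℕ → Ω → ℝ) (bB v : ℝ) (hbB : 0 < bB) (hv : 0 < v)
    (hadp : ∀ j, 1 ≤ j → Measurable[𝓕 j] (D j))
    (hint1 : ∀ j, 1 ≤ j → Integrable (D j) P)
    (hmean : ∀ j, 1 ≤ j → P[D j | 𝓕 (j - 1)] =ᵐ[P] 0)
    (hintk : ∀ j, 1 ≤ j → ∀ k : ℕ, 2 ≤ k → Integrable (fun ω => |D j ω| ^ k) P)
    (hmom : ∀ j, 1 ≤ j → ∀ k : ℕ, 2 ≤ k → ∀ᵐ ω ∂P,
      (P[fun ω' => |D j ω'| ^ k | 𝓕 (j - 1)]) ω ≤ (k.factorial : ℝ) / 2 * bB ^ (k - 2) * v)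
    (c : ℝ) (hc : 0 < c) (n : ℕ) :
    P {ω | (n : ℝ) * c ≤ ∑ j ∈ Finset.Icc 1 n, D j ω}
      ≤ ENNReal.ofReal (Real.exp (-((n : ℝ) * c ^ 2 / (2 * (bB * c + v))))) := by
  set S := bB * c + v with hSdef
  have hS : 0 < S := by rw [hSdef]; positivity
  set lam := c / S with hlamdef
  have hlam : 0 < lam := div_pos hc hS
  have hlambB : lam * bB < 1 := by
    rw [hlamdef, div_mul_eq_mul_div, div_lt_one hS, hSdef]
    nlinarith
  set Cr := c ^ 2 / (2 * S) with hCrdef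
  have hCr0 : 0 < Cr := by rw [hCrdef]; positivity
  have h1mlb : 1 - lam * bB = v / S := by
    rw [hlamdef, hSdef]; field_simp; ring
  have hCreq : lam ^ 2 * v / 2 * (1 - lam * bB)⁻¹ = Cr := by
    rw [h1mlb, hlamdef, hCrdef]
    field_simp
  -- conditional bound on |D j| (first moment)
  have habs : ∀ j, 1 ≤ j → ∀ᵐ ω ∂P,
      (P[fun ω' => |D j ω'| | 𝓕 (j - 1)]) ω ≤ (1 + v) / 2 := by
    intro j hj
    have hint2 : Integrable (fun ω => |D j ω| ^ 2) P := hintk j hj 2 le_rfl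
    have hintg : Integrable (fun ω => (1 + |D j ω| ^ 2) / 2) P :=
      ((integrable_const (1 : ℝ)).add hint2).div_const 2
    have hmono := condExp_mono (μ := P) (m := 𝓕 (j - 1)) (hint1 j hj).abs hintg
      (Filter.Eventually.of_forall fun ω => by nlinarith [sq_nonneg (|D j ω| - 1)])
    have hsmul : (fun ω => (1 + |D j ω| ^ 2) / 2)
        = (2⁻¹ : ℝ) • ((fun _ => (1 : ℝ)) + fun ω => |D j ω| ^ 2) := by
      funext ω; simp [Pi.smul_apply, Pi.add_apply]; ring
    have hc2' : P[(fun ω => (1 + |D j ω| ^ 2) / 2)|𝓕 (j - 1)]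
        =ᵐ[P] (2⁻¹ : ℝ) • P[((fun _ => (1 : ℝ)) + fun ω => |D j ω| ^ 2)|𝓕 (j - 1)] := by
      rw [hsmul]; exact condExp_smul _ _ _
    have hadd := condExp_add (μ := P) (m := 𝓕 (j - 1)) (integrable_const (1 : ℝ)) hint2
    have hconst := condExp_const (μ := P) (𝓕.le (j - 1)) (1 : ℝ)
    have hm2 := hmom j hj 2 le_rfl
    filter_upwards [hmono, hc2', hadd, hm2] with ω h1 h2 h3 h4
    have h4' : (P[fun ω' => |D j ω'| ^ 2|𝓕 (j - 1)]) ω ≤ v := by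
      have : ((2 : ℕ).factorial : ℝ) / 2 * bB ^ (2 - 2) * v = v := by
        norm_num [Nat.factorial]
      linarith [this ▸ h4]
    have h3' : (P[((fun _ => (1 : ℝ)) + fun ω => |D j ω| ^ 2)|𝓕 (j - 1)]) ω
        = 1 + (P[fun ω' => |D j ω'| ^ 2|𝓕 (j - 1)]) ω := by
      rw [h3]; simp [hconst]
    have h2' : (P[(fun ω => (1 + |D j ω| ^ 2) / 2)|𝓕 (j - 1)]) ω
        = 2⁻¹ * (1 + (P[fun ω' => |D j ω'| ^ 2|𝓕 (j - 1)]) ω) := by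
      rw [h2, Pi.smul_apply, smul_eq_mul, h3']
    have := h1.trans_eq h2'
    linarith
  -- series bound
  have hseries : ∀ j, 1 ≤ j → ∀ h : Ω → ℝ≥0∞, Measurable[𝓕 (j - 1)] h →
      ∫⁻ ω, h ω * ENNReal.ofReal (Real.exp (lam * |D j ω|) - 1 - lam * |D j ω|) ∂P
        ≤ ENNReal.ofReal Cr * ∫⁻ ω, h ω ∂P := by
    intro j hj h hh
    have hDm : Measurable[m0] (D j) := (hadp j hj).mono (𝓕.le j) le_rfl
    have hhm : Measurable[m0] h := hh.mono (𝓕.le (j - 1)) le_rfl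
    have hpt : ∀ ω, h ω * ENNReal.ofReal (Real.exp (lam * |D j ω|) - 1 - lam * |D j ω|)
        = ∑' m : ℕ, ENNReal.ofReal (lam ^ (m + 2) / ((m + 2).factorial : ℝ)) *
            (h ω * ENNReal.ofReal (|D j ω| ^ (m + 2))) := by
      intro ω
      have ht : (0:ℝ) ≤ lam * |D j ω| := by positivity
      calc h ω * ENNReal.ofReal (Real.exp (lam * |D j ω|) - 1 - lam * |D j ω|)
          = h ω * ∑' m : ℕ, ENNReal.ofReal ((lam * |D j ω|) ^ (m + 2) / ((m + 2).factorial : ℝ)) := by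
            rw [series_aux ht, ENNReal.ofReal_tsum_of_nonneg (fun m => by positivity)
              ((summable_nat_add_iff 2).2 (Real.summable_pow_div_factorial _))]
        _ = ∑' m : ℕ, h ω * ENNReal.ofReal ((lam * |D j ω|) ^ (m + 2) / ((m + 2).factorial : ℝ)) :=
            ENNReal.tsum_mul_left.symm
        _ = _ := by
            refine tsum_congr fun m => ?_
            rw [show (lam * |D j ω|) ^ (m + 2) / ((m + 2).factorial : ℝ)
                = lam ^ (m + 2) / ((m + 2).factorial : ℝ) * |D j ω| ^ (m + 2) by
                  rw [mul_pow]; ring,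
              ENNReal.ofReal_mul (by positivity)]
            ring
    have hmeas : ∀ m : ℕ, Measurable[m0] fun ω =>
        ENNReal.ofReal (lam ^ (m + 2) / ((m + 2).factorial : ℝ)) *
          (h ω * ENNReal.ofReal (|D j ω| ^ (m + 2))) := fun m =>
      (hhm.mul (ENNReal.measurable_ofReal.comp (hDm.abs.pow_const _))).const_mul _
    have hterm : ∀ m : ℕ, ∫⁻ ω, ENNReal.ofReal (lam ^ (m + 2) / ((m + 2).factorial : ℝ)) *
        (h ω * ENNReal.ofReal (|D j ω| ^ (m + 2))) ∂P
        ≤ ENNReal.ofReal (lam ^ 2 * v / 2 * (lam * bB) ^ m) * ∫⁻ ω, h ω ∂P := by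
      intro m
      have hmf : Measurable fun ω => h ω * ENNReal.ofReal (|D j ω| ^ (m + 2)) :=
        hhm.mul (ENNReal.measurable_ofReal.comp (hDm.abs.pow_const _))
      rw [lintegral_const_mul _ hmf]
      have hmm : ∀ᵐ ω ∂P, (P[fun ω' => |D j ω'| ^ (m + 2)|𝓕 (j - 1)]) ω
          ≤ ((m + 2).factorial : ℝ) / 2 * bB ^ m * v := by
        simpa using hmom j hj (m + 2) (by omega)
      have hw := weighted_bound P (𝓕.le (j - 1)) (hintk j hj (m + 2) (by omega))
        (fun ω => by positivity) (K := ((m + 2).factorial : ℝ) / 2 * bB ^ m * v)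
        (by positivity) hmm hh
      calc ENNReal.ofReal (lam ^ (m + 2) / ((m + 2).factorial : ℝ)) *
            ∫⁻ ω, h ω * ENNReal.ofReal (|D j ω| ^ (m + 2)) ∂P
          ≤ ENNReal.ofReal (lam ^ (m + 2) / ((m + 2).factorial : ℝ)) *
            (ENNReal.ofReal (((m + 2).factorial : ℝ) / 2 * bB ^ m * v) * ∫⁻ ω, h ω ∂P) :=
            mul_le_mul_right hw _
        _ = _ := by
            rw [← mul_assoc, ← ENNReal.ofReal_mul (by positivity)]
            congr 2
            have hfac : ((m + 2).factorial : ℝ) ≠ 0 := by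
              exact_mod_cast (Nat.factorial_pos (m + 2)).ne'
            field_simp
            ring
    calc ∫⁻ ω, h ω * ENNReal.ofReal (Real.exp (lam * |D j ω|) - 1 - lam * |D j ω|) ∂P
        = ∑' m : ℕ, ∫⁻ ω, ENNReal.ofReal (lam ^ (m + 2) / ((m + 2).factorial : ℝ)) *
            (h ω * ENNReal.ofReal (|D j ω| ^ (m + 2))) ∂P := by
          rw [← lintegral_tsum fun m => (hmeas m).aemeasurable]
          exact lintegral_congr hpt
      _ ≤ ∑' m : ℕ, ENNReal.ofReal (lam ^ 2 * v / 2 * (lam * bB) ^ m) * ∫⁻ ω, h ω ∂P :=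
          ENNReal.tsum_le_tsum hterm
      _ = (∑' m : ℕ, ENNReal.ofReal (lam ^ 2 * v / 2 * (lam * bB) ^ m)) * ∫⁻ ω, h ω ∂P :=
          ENNReal.tsum_mul_right
      _ = ENNReal.ofReal (∑' m : ℕ, lam ^ 2 * v / 2 * (lam * bB) ^ m) * ∫⁻ ω, h ω ∂P := by
          rw [ENNReal.ofReal_tsum_of_nonneg (fun m => by positivity)
            ((summable_geometric_of_lt_one (by positivity) hlambB).mul_left _)]
      _ = ENNReal.ofReal Cr * ∫⁻ ω, h ω ∂P := by
          rw [tsum_mul_left, tsum_geometric_of_lt_one (by positivity) hlambB, hCreq]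
  -- main induction on exponential moments
  have hkey : ∀ N : ℕ, ∫⁻ ω, ENNReal.ofReal (Real.exp (lam * ∑ j ∈ Finset.Icc 1 N, D j ω)) ∂P
      ≤ ENNReal.ofReal (Real.exp (N * Cr)) := by
    intro N
    induction N with
    | zero => simp
    | succ n ih =>
      have hj : (1 : ℕ) ≤ n + 1 := Nat.le_add_left 1 n
      have hFle : (𝓕 n : MeasurableSpace Ω) ≤ m0 := 𝓕.le n
      have hTmeas : Measurable[𝓕 n] fun ω => ∑ j ∈ Finset.Icc 1 n, D j ω := by
        apply Finset.measurable_sum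
        intro j hjm
        have hm := Finset.mem_Icc.1 hjm
        exact (hadp j hm.1).mono (𝓕.mono hm.2) le_rfl
      have hTm0 : Measurable[m0] fun ω => ∑ j ∈ Finset.Icc 1 n, D j ω :=
        hTmeas.mono hFle le_rfl
      have hsum : ∀ ω, ∑ j ∈ Finset.Icc 1 (n + 1), D j ω
          = (∑ j ∈ Finset.Icc 1 n, D j ω) + D (n + 1) ω := fun ω =>
        Finset.sum_Icc_succ_top hj (fun j => D j ω)
      have hDm : Measurable[m0] (D (n + 1)) := (hadp (n + 1) hj).mono (𝓕.le (n + 1)) le_rfl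
      set hR : Ω → ℝ := fun ω => Real.exp (lam * ∑ j ∈ Finset.Icc 1 n, D j ω) with hRdef
      set h : Ω → ℝ≥0∞ := fun ω => ENNReal.ofReal (hR ω) with hhdef
      have hRmeasF : Measurable[𝓕 n] hR := Real.measurable_exp.comp (hTmeas.const_mul lam)
      have hRm0 : Measurable[m0] hR := hRmeasF.mono hFle le_rfl
      have hh : Measurable[𝓕 n] h := ENNReal.measurable_ofReal.comp hRmeasF
      have hhm0 : Measurable[m0] h := hh.mono hFle le_rfl
      set L := ∫⁻ ω, h ω ∂P with hLdef
      have hL : L ≤ ENNReal.ofReal (Real.exp (n * Cr)) := ih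
      have hLne : L ≠ ⊤ := (hL.trans_lt ENNReal.ofReal_lt_top).ne
      set r : Ω → ℝ := fun ω => Real.exp (lam * |D (n + 1) ω|) - 1 - lam * |D (n + 1) ω|
        with hrdef
      have hr0 : ∀ ω, 0 ≤ r ω := fun ω => by
        have := Real.add_one_le_exp (lam * |D (n + 1) ω|)
        simp only [hrdef]; linarith
      have hrm0 : Measurable[m0] r := by
        apply Measurable.sub
        apply Measurable.sub
        · exact Real.measurable_exp.comp (hDm.abs.const_mul lam)
        · exact measurable_const
        · exact hDm.abs.const_mul lam
      have hB1 : ∫⁻ ω, h ω * ENNReal.ofReal |D (n + 1) ω| ∂P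
          ≤ ENNReal.ofReal ((1 + v) / 2) * L :=
        weighted_bound P (𝓕.le n) (hint1 (n + 1) hj).abs (fun ω => abs_nonneg _)
          (by positivity) (habs (n + 1) hj) hh
      have hB2 : ∫⁻ ω, h ω * ENNReal.ofReal (r ω) ∂P ≤ ENNReal.ofReal Cr * L :=
        hseries (n + 1) hj h hh
      -- finiteness of the dominating function
      have hg1eq : ∀ ω, h ω * ENNReal.ofReal (Real.exp (lam * |D (n + 1) ω|))
          = h ω + (ENNReal.ofReal lam * (h ω * ENNReal.ofReal |D (n + 1) ω|)
            + h ω * ENNReal.ofReal (r ω)) := by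
        intro ω
        have hde : Real.exp (lam * |D (n + 1) ω|) = 1 + lam * |D (n + 1) ω| + r ω := by
          simp only [hrdef]; ring
        have ht0 : (0:ℝ) ≤ lam * |D (n + 1) ω| := by positivity
        rw [hde, ENNReal.ofReal_add (by linarith) (hr0 ω),
          ENNReal.ofReal_add (by norm_num) ht0, ENNReal.ofReal_one,
          ENNReal.ofReal_mul hlam.le]
        ring
      have hDabs_meas : Measurable[m0] fun ω => h ω * ENNReal.ofReal |D (n + 1) ω| :=
        hhm0.mul (ENNReal.measurable_ofReal.comp hDm.abs)
      have hrprod_meas : Measurable[m0] fun ω => h ω * ENNReal.ofReal (r ω) :=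
        hhm0.mul (ENNReal.measurable_ofReal.comp hrm0)
      have hfin : ∫⁻ ω, h ω * ENNReal.ofReal (Real.exp (lam * |D (n + 1) ω|)) ∂P
          ≤ L + (ENNReal.ofReal lam * (ENNReal.ofReal ((1 + v) / 2) * L)
            + ENNReal.ofReal Cr * L) := by
        calc ∫⁻ ω, h ω * ENNReal.ofReal (Real.exp (lam * |D (n + 1) ω|)) ∂P
            = ∫⁻ ω, (h ω + (ENNReal.ofReal lam * (h ω * ENNReal.ofReal |D (n + 1) ω|)
              + h ω * ENNReal.ofReal (r ω))) ∂P := lintegral_congr hg1eq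
          _ = L + ∫⁻ ω, (ENNReal.ofReal lam * (h ω * ENNReal.ofReal |D (n + 1) ω|)
              + h ω * ENNReal.ofReal (r ω)) ∂P := by
              rw [lintegral_add_left hhm0]
          _ = L + (ENNReal.ofReal lam * ∫⁻ ω, h ω * ENNReal.ofReal |D (n + 1) ω| ∂P
              + ∫⁻ ω, h ω * ENNReal.ofReal (r ω) ∂P) := by
              rw [lintegral_add_left (hDabs_meas.const_mul _), lintegral_const_mul _ hDabs_meas]
          _ ≤ _ := by
              refine add_le_add le_rfl (add_le_add ?_ hB2)
              exact mul_le_mul_right hB1 _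
      have hfinlt : ∫⁻ ω, h ω * ENNReal.ofReal (Real.exp (lam * |D (n + 1) ω|)) ∂P < ⊤ :=
        hfin.trans_lt (by
          have hLlt : L < ⊤ := hLne.lt_top
          refine ENNReal.add_lt_top.2 ⟨hLlt, ENNReal.add_lt_top.2 ⟨?_, ?_⟩⟩
          · exact ENNReal.mul_lt_top ENNReal.ofReal_lt_top
              (ENNReal.mul_lt_top ENNReal.ofReal_lt_top hLlt)
          · exact ENNReal.mul_lt_top ENNReal.ofReal_lt_top hLlt)
      -- integrability facts
      set g1 : Ω → ℝ := fun ω => hR ω * Real.exp (lam * |D (n + 1) ω|) with hg1def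
      have hg1m0 : Measurable[m0] g1 :=
        hRm0.mul (Real.measurable_exp.comp (hDm.abs.const_mul lam))
      have hg1nn : ∀ ω, 0 ≤ g1 ω := fun ω => by
        simp only [hg1def, hRdef]; positivity
      have hg1int : Integrable g1 P := by
        refine ⟨hg1m0.aestronglyMeasurable, ?_⟩
        rw [hasFiniteIntegral_iff_ofReal (Filter.Eventually.of_forall hg1nn)]
        calc ∫⁻ ω, ENNReal.ofReal (g1 ω) ∂P
            = ∫⁻ ω, h ω * ENNReal.ofReal (Real.exp (lam * |D (n + 1) ω|)) ∂P :=
              lintegral_congr fun ω => by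
                simp only [hg1def, hhdef]
                rw [ENNReal.ofReal_mul (Real.exp_nonneg _)]
          _ < ⊤ := hfinlt
      have hRint : Integrable hR P := by
        refine ⟨hRm0.aestronglyMeasurable, ?_⟩
        rw [hasFiniteIntegral_iff_ofReal
          (Filter.Eventually.of_forall fun ω => Real.exp_nonneg _)]
        exact hLne.lt_top
      have hGint : Integrable (fun ω => Real.exp (lam * ∑ j ∈ Finset.Icc 1 (n + 1), D j ω)) P := by
        refine Integrable.mono' hg1int ?_ (Filter.Eventually.of_forall fun ω => ?_)
        · refine (Real.measurable_exp.comp ?_).aestronglyMeasurable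
          exact ((Finset.measurable_sum _ fun j hjm =>
            (hadp j (Finset.mem_Icc.1 hjm).1).mono (𝓕.le j) le_rfl).const_mul lam)
        · rw [Real.norm_eq_abs, abs_of_nonneg (Real.exp_nonneg _), hsum ω, mul_add,
            Real.exp_add]
          simp only [hg1def, hRdef]
          refine mul_le_mul_of_nonneg_left ?_ (Real.exp_nonneg _)
          exact Real.exp_le_exp.2 (mul_le_mul_of_nonneg_left (le_abs_self _) hlam.le)
      have hhDint : Integrable (fun ω => hR ω * D (n + 1) ω) P := by
        refine Integrable.mono' (hg1int.div_const lam) ((hRm0.mul hDm).aestronglyMeasurable)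
          (Filter.Eventually.of_forall fun ω => ?_)
        rw [Real.norm_eq_abs, abs_mul, abs_of_nonneg (Real.exp_nonneg _)]
        rw [div_eq_mul_inv, mul_comm (g1 ω), hg1def]
        simp only
        rw [← mul_assoc]
        have hd : |D (n + 1) ω| ≤ lam⁻¹ * Real.exp (lam * |D (n + 1) ω|) := by
          rw [le_inv_mul_iff₀ hlam]
          have := Real.add_one_le_exp (lam * |D (n + 1) ω|)
          linarith
        calc hR ω * |D (n + 1) ω| ≤ hR ω * (lam⁻¹ * Real.exp (lam * |D (n + 1) ω|)) :=
              mul_le_mul_of_nonneg_left hd (Real.exp_nonneg _)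
          _ = lam⁻¹ * hR ω * Real.exp (lam * |D (n + 1) ω|) := by ring
      have hhrint : Integrable (fun ω => hR ω * r ω) P := by
        refine Integrable.mono' hg1int ((hRm0.mul hrm0).aestronglyMeasurable)
          (Filter.Eventually.of_forall fun ω => ?_)
        rw [Real.norm_eq_abs, abs_mul, abs_of_nonneg (Real.exp_nonneg _), abs_of_nonneg (hr0 ω)]
        refine mul_le_mul_of_nonneg_left ?_ (Real.exp_nonneg _)
        have ht0 : (0:ℝ) ≤ lam * |D (n + 1) ω| := by positivity
        simp only [hrdef]
        linarith
      -- the real-variable estimate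
      have hzero : ∫ ω, hR ω * D (n + 1) ω ∂P = 0 := by
        have hpull := condExp_mul_of_stronglyMeasurable_left (μ := P) (m := 𝓕 n)
          hRmeasF.stronglyMeasurable hhDint (hint1 (n + 1) hj)
        have hpull' : P[(fun ω => hR ω * D (n + 1) ω)|𝓕 n]
            =ᵐ[P] fun ω => hR ω * (P[D (n + 1)|𝓕 n]) ω := hpull
        have hz : P[(fun ω => hR ω * D (n + 1) ω)|𝓕 n] =ᵐ[P] 0 := by
          filter_upwards [hpull', hmean (n + 1) hj] with ω h1 h2
          have h2' : (P[D (n + 1)|𝓕 n]) ω = 0 := by simpa using h2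
          rw [h1, h2', mul_zero]
          rfl
        calc ∫ ω, hR ω * D (n + 1) ω ∂P
            = ∫ ω, (P[(fun ω => hR ω * D (n + 1) ω)|𝓕 n]) ω ∂P :=
              (integral_condExp hFle).symm
          _ = ∫ ω, (0 : Ω → ℝ) ω ∂P := integral_congr_ae hz
          _ = 0 := by simp
      have hIR : ENNReal.ofReal (∫ ω, hR ω ∂P) = L := by
        rw [hLdef, ofReal_integral_eq_lintegral_ofReal hRint
          (Filter.Eventually.of_forall fun ω => Real.exp_nonneg _)]
      have hIRnn : 0 ≤ ∫ ω, hR ω ∂P := integral_nonneg fun ω => Real.exp_nonneg _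
      have hrle : ∫ ω, hR ω * r ω ∂P ≤ Cr * ∫ ω, hR ω ∂P := by
        have e : ENNReal.ofReal (∫ ω, hR ω * r ω ∂P) = ∫⁻ ω, h ω * ENNReal.ofReal (r ω) ∂P := by
          rw [ofReal_integral_eq_lintegral_ofReal hhrint
            (Filter.Eventually.of_forall fun ω => mul_nonneg (Real.exp_nonneg _) (hr0 ω))]
          exact lintegral_congr fun ω => by rw [ENNReal.ofReal_mul (Real.exp_nonneg _)]
        have hle : ENNReal.ofReal (∫ ω, hR ω * r ω ∂P)
            ≤ ENNReal.ofReal (Cr * ∫ ω, hR ω ∂P) := by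
          rw [e]
          calc ∫⁻ ω, h ω * ENNReal.ofReal (r ω) ∂P ≤ ENNReal.ofReal Cr * L := hB2
            _ = ENNReal.ofReal Cr * ENNReal.ofReal (∫ ω, hR ω ∂P) := by rw [hIR]
            _ = ENNReal.ofReal (Cr * ∫ ω, hR ω ∂P) := (ENNReal.ofReal_mul hCr0.le).symm
        exact (ENNReal.ofReal_le_ofReal_iff (mul_nonneg hCr0.le hIRnn)).1 hle
      have hIRle : ∫ ω, hR ω ∂P ≤ Real.exp (n * Cr) := by
        have h' := hL
        rw [← hIR] at h'
        exact (ENNReal.ofReal_le_ofReal_iff (Real.exp_nonneg _)).1 h'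
      have hstep1 : ∫ ω, Real.exp (lam * ∑ j ∈ Finset.Icc 1 (n + 1), D j ω) ∂P
          ≤ ∫ ω, (hR ω + (lam * (hR ω * D (n + 1) ω) + hR ω * r ω)) ∂P := by
        refine integral_mono hGint (hRint.add ((hhDint.const_mul lam).add hhrint)) fun ω => ?_
        have hx := exp_le_aux (lam * D (n + 1) ω)
        have habsx : |lam * D (n + 1) ω| = lam * |D (n + 1) ω| := by
          rw [abs_mul, abs_of_pos hlam]
        have hx' : Real.exp (lam * D (n + 1) ω) ≤ 1 + lam * D (n + 1) ω + r ω := by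
          simp only [hrdef]
          rw [← habsx]
          exact hx
        calc Real.exp (lam * ∑ j ∈ Finset.Icc 1 (n + 1), D j ω)
            = hR ω * Real.exp (lam * D (n + 1) ω) := by
              rw [hsum ω, mul_add, Real.exp_add]
          _ ≤ hR ω * (1 + lam * D (n + 1) ω + r ω) :=
              mul_le_mul_of_nonneg_left hx' (Real.exp_nonneg _)
          _ = hR ω + (lam * (hR ω * D (n + 1) ω) + hR ω * r ω) := by ring
      have hint_a : Integrable (fun ω => lam * (hR ω * D (n + 1) ω) + hR ω * r ω) P :=
        (hhDint.const_mul lam).add hhrint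
      have hstep2 : ∫ ω, (hR ω + (lam * (hR ω * D (n + 1) ω) + hR ω * r ω)) ∂P
          = ∫ ω, hR ω ∂P + (lam * ∫ ω, hR ω * D (n + 1) ω ∂P + ∫ ω, hR ω * r ω ∂P) := by
        have e0 : ∫ ω, (hR ω + (lam * (hR ω * D (n + 1) ω) + hR ω * r ω)) ∂P
            = ∫ ω, hR ω ∂P + ∫ ω, (lam * (hR ω * D (n + 1) ω) + hR ω * r ω) ∂P :=
          integral_add hRint hint_a
        have e1 : ∫ ω, (lam * (hR ω * D (n + 1) ω) + hR ω * r ω) ∂P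
            = ∫ ω, lam * (hR ω * D (n + 1) ω) ∂P + ∫ ω, hR ω * r ω ∂P :=
          integral_add (hhDint.const_mul lam) hhrint
        have e2 : ∫ ω, lam * (hR ω * D (n + 1) ω) ∂P = lam * ∫ ω, hR ω * D (n + 1) ω ∂P :=
          integral_const_mul lam _
        rw [e0, e1, e2]
      have hfinal : ∫ ω, Real.exp (lam * ∑ j ∈ Finset.Icc 1 (n + 1), D j ω) ∂P
          ≤ Real.exp ((n + 1 : ℕ) * Cr) := by
        have h1plus : (1 : ℝ) + Cr ≤ Real.exp Cr := by
          have := Real.add_one_le_exp Cr; linarith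
        calc ∫ ω, Real.exp (lam * ∑ j ∈ Finset.Icc 1 (n + 1), D j ω) ∂P
            ≤ ∫ ω, hR ω ∂P + (lam * ∫ ω, hR ω * D (n + 1) ω ∂P + ∫ ω, hR ω * r ω ∂P) :=
              hstep1.trans_eq hstep2
          _ ≤ ∫ ω, hR ω ∂P + (lam * 0 + Cr * ∫ ω, hR ω ∂P) := by
              rw [hzero]
              exact add_le_add le_rfl (add_le_add le_rfl hrle)
          _ = (1 + Cr) * ∫ ω, hR ω ∂P := by ring
          _ ≤ Real.exp Cr * ∫ ω, hR ω ∂P := mul_le_mul_of_nonneg_right h1plus hIRnn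
          _ ≤ Real.exp Cr * Real.exp (n * Cr) :=
              mul_le_mul_of_nonneg_left hIRle (Real.exp_nonneg _)
          _ = Real.exp ((n + 1 : ℕ) * Cr) := by
              rw [← Real.exp_add]
              congr 1
              push_cast
              ring
      calc ∫⁻ ω, ENNReal.ofReal (Real.exp (lam * ∑ j ∈ Finset.Icc 1 (n + 1), D j ω)) ∂P
          = ENNReal.ofReal (∫ ω, Real.exp (lam * ∑ j ∈ Finset.Icc 1 (n + 1), D j ω) ∂P) :=
            (ofReal_integral_eq_lintegral_ofReal hGint
              (Filter.Eventually.of_forall fun ω => Real.exp_nonneg _)).symm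
        _ ≤ ENNReal.ofReal (Real.exp ((n + 1 : ℕ) * Cr)) := ENNReal.ofReal_le_ofReal hfinal
  -- Chernoff bound
  have hTm0' : Measurable[m0] fun ω => ∑ j ∈ Finset.Icc 1 n, D j ω :=
    Finset.measurable_sum _ fun j hjm =>
      (hadp j (Finset.mem_Icc.1 hjm).1).mono (𝓕.le j) le_rfl
  have hch : ENNReal.ofReal (Real.exp (lam * ((n : ℝ) * c)))
      * P {ω | (n : ℝ) * c ≤ ∑ j ∈ Finset.Icc 1 n, D j ω}
      ≤ ENNReal.ofReal (Real.exp (n * Cr)) := by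
    calc ENNReal.ofReal (Real.exp (lam * ((n : ℝ) * c)))
        * P {ω | (n : ℝ) * c ≤ ∑ j ∈ Finset.Icc 1 n, D j ω}
        = ∫⁻ ω in {ω | (n : ℝ) * c ≤ ∑ j ∈ Finset.Icc 1 n, D j ω},
            ENNReal.ofReal (Real.exp (lam * ((n : ℝ) * c))) ∂P := (setLIntegral_const _ _).symm
      _ ≤ ∫⁻ ω in {ω | (n : ℝ) * c ≤ ∑ j ∈ Finset.Icc 1 n, D j ω},
            ENNReal.ofReal (Real.exp (lam * ∑ j ∈ Finset.Icc 1 n, D j ω)) ∂P := by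
          refine setLIntegral_mono
            (ENNReal.measurable_ofReal.comp (Real.measurable_exp.comp (hTm0'.const_mul lam)))
            fun ω hω => ?_
          exact ENNReal.ofReal_le_ofReal
            (Real.exp_le_exp.2 (mul_le_mul_of_nonneg_left hω hlam.le))
      _ ≤ ∫⁻ ω, ENNReal.ofReal (Real.exp (lam * ∑ j ∈ Finset.Icc 1 n, D j ω)) ∂P :=
          setLIntegral_le_lintegral _ _
      _ ≤ ENNReal.ofReal (Real.exp (n * Cr)) := hkey n
  have hPA : P {ω | (n : ℝ) * c ≤ ∑ j ∈ Finset.Icc 1 n, D j ω}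
      ≤ ENNReal.ofReal (Real.exp ((n : ℝ) * Cr)) / ENNReal.ofReal (Real.exp (lam * ((n : ℝ) * c))) := by
    rw [ENNReal.le_div_iff_mul_le
      (Or.inl (ENNReal.ofReal_pos.2 (Real.exp_pos _)).ne') (Or.inl ENNReal.ofReal_ne_top)]
    rw [mul_comm]
    exact hch
  refine hPA.trans ?_
  rw [← ENNReal.ofReal_div_of_pos (Real.exp_pos _), ← Real.exp_sub]
  apply ENNReal.ofReal_le_ofReal
  apply le_of_eq
  congr 1
  rw [hCrdef, hlamdef, hSdef]
  field_simp
  ring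


end Stmt5Aux

open Stmt5Aux


open MeasureTheory ProbabilityTheory
open scoped ENNReal

/-- **Bernstein bound for CRN observation-error differences.** If
`D j = X j − Y j` is a martingale difference sequence where `X j` and `Y j`
each satisfy the conditional Bernstein moment condition with parameters
`(b, σ²)` and the conditional variance of `D j` is at most `Δ σ_B²` with
`σ_B² ≥ 4σ²`, then `P(∑_{j=1}^n D j ≥ n c) ≤ exp(−n c²/(2(b_B c + Δ σ_B²)))`
with `b_B = max{2b/Δ, 2b}`. -/
theorem stmt_5
    {Ω : Type*} {m0 : MeasurableSpace Ω} (P : Measure Ω) [IsProbabilityMeasure P]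
    (𝓕 : Filtration ℕ m0) (h0 : 𝓕 0 = ⊥)
    (X Y : ℕ → Ω → ℝ) (b σ : ℝ) (hb : 0 < b) (hσ : 0 < σ ^ 2)
    (hXadapted : ∀ j, 1 ≤ j → StronglyMeasurable[𝓕 j] (X j))
    (hYadapted : ∀ j, 1 ≤ j → StronglyMeasurable[𝓕 j] (Y j))
    (hDint : ∀ j, 1 ≤ j → Integrable (fun ω => X j ω - Y j ω) P)
    (hmean : ∀ j, 1 ≤ j → P[fun ω => X j ω - Y j ω | 𝓕 (j - 1)] =ᵐ[P] 0)
    (hXint : ∀ j, 1 ≤ j → ∀ m : ℕ, 2 ≤ m → Integrable (fun ω => |X j ω| ^ m) P)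
    (hYint : ∀ j, 1 ≤ j → ∀ m : ℕ, 2 ≤ m → Integrable (fun ω => |Y j ω| ^ m) P)
    (hXmom : ∀ j, 1 ≤ j → ∀ m : ℕ, 2 ≤ m →
      ∀ᵐ ω ∂P, (P[fun ω' => |X j ω'| ^ m | 𝓕 (j - 1)]) ω
        ≤ (m.factorial : ℝ) / 2 * b ^ (m - 2) * σ ^ 2)
    (hYmom : ∀ j, 1 ≤ j → ∀ m : ℕ, 2 ≤ m →
      ∀ᵐ ω ∂P, (P[fun ω' => |Y j ω'| ^ m | 𝓕 (j - 1)]) ω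
        ≤ (m.factorial : ℝ) / 2 * b ^ (m - 2) * σ ^ 2)
    (Δ σB2 : ℝ) (hΔ : 0 < Δ) (hσB : 4 * σ ^ 2 ≤ σB2)
    (hcondvar : ∀ j, 1 ≤ j →
      ∀ᵐ ω ∂P, (P[fun ω' => (X j ω' - Y j ω') ^ 2 | 𝓕 (j - 1)]) ω ≤ Δ * σB2) :
    ∀ c : ℝ, 0 < c → ∀ n : ℕ,
      P {ω | (n : ℝ) * c ≤ ∑ j ∈ Finset.Icc 1 n, (X j ω - Y j ω)}
        ≤ ENNReal.ofReal (Real.exp (-((n : ℝ) * c ^ 2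
            / (2 * (max (2 * b / Δ) (2 * b) * c + Δ * σB2))))) := by
  intro c hc n
  have hσB2 : 0 < σB2 := lt_of_lt_of_le (by positivity) hσB
  have hbB : (0:ℝ) < max (2 * b / Δ) (2 * b) :=
    lt_of_lt_of_le (by positivity) (le_max_right _ _)
  have hv : (0:ℝ) < Δ * σB2 := by positivity
  -- pointwise bound for differences
  have hptw : ∀ (x y : ℝ) (k : ℕ), |x - y| ^ k ≤ 2 ^ (k - 1) * (|x| ^ k + |y| ^ k) := by
    intro x y k
    calc |x - y| ^ k ≤ (|x| + |y|) ^ k := by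
          refine pow_le_pow_left₀ (abs_nonneg _) ?_ k
          rw [sub_eq_add_neg]
          exact (abs_add_le _ _).trans_eq (by rw [abs_neg])
      _ ≤ 2 ^ (k - 1) * (|x| ^ k + |y| ^ k) := add_pow_le (abs_nonneg _) (abs_nonneg _) k
  have hadp : ∀ j, 1 ≤ j → Measurable[𝓕 j] fun ω => X j ω - Y j ω := fun j hj =>
    (hXadapted j hj).measurable.sub (hYadapted j hj).measurable
  have hintk : ∀ j, 1 ≤ j → ∀ k : ℕ, 2 ≤ k →
      Integrable (fun ω => |X j ω - Y j ω| ^ k) P := by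
    intro j hj k hk
    refine Integrable.mono' (((hXint j hj k hk).add (hYint j hj k hk)).const_mul
      ((2:ℝ) ^ (k - 1))) ?_ (Filter.Eventually.of_forall fun ω => ?_)
    · exact ((((hadp j hj).mono (𝓕.le j) le_rfl).abs.pow_const k)).aestronglyMeasurable
    · rw [Real.norm_eq_abs, abs_of_nonneg (by positivity)]
      exact hptw _ _ k
  have hmom : ∀ j, 1 ≤ j → ∀ k : ℕ, 2 ≤ k → ∀ᵐ ω ∂P,
      (P[fun ω' => |X j ω' - Y j ω'| ^ k | 𝓕 (j - 1)]) ω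
        ≤ (k.factorial : ℝ) / 2 * (max (2 * b / Δ) (2 * b)) ^ (k - 2) * (Δ * σB2) := by
    intro j hj k hk
    rcases eq_or_lt_of_le hk with hk2 | hk3
    · -- k = 2
      subst hk2
      have heq : (fun ω' => |X j ω' - Y j ω'| ^ 2) = fun ω' => (X j ω' - Y j ω') ^ 2 :=
        funext fun ω' => sq_abs _
      rw [heq]
      filter_upwards [hcondvar j hj] with ω hω
      have hnum : ((2:ℕ).factorial : ℝ) / 2 * (max (2 * b / Δ) (2 * b)) ^ (2 - 2) * (Δ * σB2)
          = Δ * σB2 := by norm_num [Nat.factorial]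
      rw [hnum]
      exact hω
    · -- 3 ≤ k
      have hk3' : 3 ≤ k := hk3
      have hg_int : Integrable (fun ω => (2:ℝ) ^ (k - 1) * (|X j ω| ^ k + |Y j ω| ^ k)) P :=
        ((hXint j hj k hk).add (hYint j hj k hk)).const_mul _
      have hmono := condExp_mono (μ := P) (m := 𝓕 (j - 1)) (hintk j hj k hk) hg_int
        (Filter.Eventually.of_forall fun ω => hptw _ _ k)
      have hsmul : (fun ω => (2:ℝ) ^ (k - 1) * (|X j ω| ^ k + |Y j ω| ^ k))
          = ((2:ℝ) ^ (k - 1)) • ((fun ω => |X j ω| ^ k) + fun ω => |Y j ω| ^ k) := by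
        funext ω; simp [Pi.smul_apply, Pi.add_apply]
      have hcs : P[(fun ω => (2:ℝ) ^ (k - 1) * (|X j ω| ^ k + |Y j ω| ^ k))|𝓕 (j - 1)]
          =ᵐ[P] ((2:ℝ) ^ (k - 1)) • P[((fun ω => |X j ω| ^ k) + fun ω => |Y j ω| ^ k)|𝓕 (j - 1)] := by
        rw [hsmul]; exact condExp_smul _ _ _
      have hca := condExp_add (μ := P) (m := 𝓕 (j - 1)) (hXint j hj k hk) (hYint j hj k hk)
      -- arithmetic facts
      have hk1 : k - 1 + 1 = k := by omega
      have hk2' : k - 2 + 2 = k := by omega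
      have hk3'' : k - 3 + 1 = k - 2 := by omega
      have h2b : (2:ℝ) * b ≤ max (2 * b / Δ) (2 * b) := le_max_right _ _
      have h2bΔ : (2:ℝ) * b ≤ Δ * max (2 * b / Δ) (2 * b) := by
        have hh := le_max_left (2 * b / Δ) (2 * b)
        rw [div_le_iff₀ hΔ] at hh
        linarith
      have e2b : ((2:ℝ) * b) ^ (k - 2) ≤ Δ * (max (2 * b / Δ) (2 * b)) ^ (k - 2) := by
        calc ((2:ℝ) * b) ^ (k - 2) = ((2:ℝ) * b) ^ (k - 3) * ((2:ℝ) * b) := by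
              rw [← pow_succ, hk3'']
          _ ≤ (max (2 * b / Δ) (2 * b)) ^ (k - 3) * (Δ * max (2 * b / Δ) (2 * b)) :=
              mul_le_mul (pow_le_pow_left₀ (by positivity) h2b _) h2bΔ (by positivity)
                (by positivity)
          _ = Δ * (max (2 * b / Δ) (2 * b)) ^ (k - 2) := by
              rw [← hk3'', pow_succ]; ring
      have e0 : (2:ℝ) ^ k = (2:ℝ) ^ (k - 2) * 4 := by
        have h4 : (2:ℝ) ^ (k - 2 + 2) = (2:ℝ) ^ (k - 2) * 4 := by rw [pow_add]; norm_num
        rw [← h4, hk2']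
      have emain : (2:ℝ) ^ k * (b ^ (k - 2) * σ ^ 2)
          ≤ Δ * (max (2 * b / Δ) (2 * b)) ^ (k - 2) * σB2 := by
        calc (2:ℝ) ^ k * (b ^ (k - 2) * σ ^ 2)
            = ((2:ℝ) * b) ^ (k - 2) * (4 * σ ^ 2) := by rw [e0, mul_pow]; ring
          _ ≤ ((2:ℝ) * b) ^ (k - 2) * σB2 :=
              mul_le_mul_of_nonneg_left hσB (by positivity)
          _ ≤ (Δ * (max (2 * b / Δ) (2 * b)) ^ (k - 2)) * σB2 :=
              mul_le_mul_of_nonneg_right e2b hσB2.le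
          _ = _ := by ring
      have e2k : (2:ℝ) ^ (k - 1) * ((k.factorial : ℝ) * (b ^ (k - 2) * σ ^ 2))
          = (k.factorial : ℝ) / 2 * ((2:ℝ) ^ k * (b ^ (k - 2) * σ ^ 2)) := by
        have h2' : (2:ℝ) ^ k = (2:ℝ) ^ (k - 1) * 2 := by rw [← pow_succ, hk1]
        rw [h2']; ring
      filter_upwards [hmono, hcs, hca, hXmom j hj k hk, hYmom j hj k hk]
        with ω h1 h2 h3 h4 h5
      have h3' : (P[((fun ω => |X j ω| ^ k) + fun ω => |Y j ω| ^ k)|𝓕 (j - 1)]) ω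
          = (P[fun ω => |X j ω| ^ k|𝓕 (j - 1)]) ω + (P[fun ω => |Y j ω| ^ k|𝓕 (j - 1)]) ω := by
        rw [h3]; rfl
      have hval : (P[fun ω' => |X j ω' - Y j ω'| ^ k|𝓕 (j - 1)]) ω
          ≤ (2:ℝ) ^ (k - 1) * ((k.factorial : ℝ) * (b ^ (k - 2) * σ ^ 2)) := by
        calc (P[fun ω' => |X j ω' - Y j ω'| ^ k|𝓕 (j - 1)]) ω
            ≤ (P[(fun ω => (2:ℝ) ^ (k - 1) * (|X j ω| ^ k + |Y j ω| ^ k))|𝓕 (j - 1)]) ω := h1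
          _ = (2:ℝ) ^ (k - 1) * ((P[fun ω => |X j ω| ^ k|𝓕 (j - 1)]) ω
              + (P[fun ω => |Y j ω| ^ k|𝓕 (j - 1)]) ω) := by
              rw [h2, Pi.smul_apply, smul_eq_mul, h3']
          _ ≤ (2:ℝ) ^ (k - 1) * ((k.factorial : ℝ) / 2 * b ^ (k - 2) * σ ^ 2
              + (k.factorial : ℝ) / 2 * b ^ (k - 2) * σ ^ 2) := by
              refine mul_le_mul_of_nonneg_left (add_le_add h4 h5) (by positivity)
          _ = (2:ℝ) ^ (k - 1) * ((k.factorial : ℝ) * (b ^ (k - 2) * σ ^ 2)) := by ring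
      refine hval.trans ?_
      rw [e2k]
      calc (k.factorial : ℝ) / 2 * ((2:ℝ) ^ k * (b ^ (k - 2) * σ ^ 2))
          ≤ (k.factorial : ℝ) / 2 * (Δ * (max (2 * b / Δ) (2 * b)) ^ (k - 2) * σB2) :=
            mul_le_mul_of_nonneg_left emain (by positivity)
        _ = (k.factorial : ℝ) / 2 * (max (2 * b / Δ) (2 * b)) ^ (k - 2) * (Δ * σB2) := by
            ring
  exact aux_bernstein P 𝓕 (fun j ω => X j ω - Y j ω) (max (2 * b / Δ) (2 * b)) (Δ * σB2)
    hbB hv hadp hDint hmean hintk hmom c hc n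
end

section
/- Let (Ω, F, P) be a probability space with a filtration F_0 ⊆ F_1 ⊆ … where F_0 is trivial, and let Δ > 0, κ_{Lm} > 0, κ_{Lg} > 0. For j ≥ 1 let Z_j be an F_j-measurable real random variable such that |Z_j| ≤ K_j·Δ almost surely, where K_j ≥ 0 satisfies (E[K_j^m | F_{j−1}])^{1/m} ≤ κ_{Lm} almost surely for every integer m ≥ 2, and suppose the conditional mean μ_j = E[Z_j | F_{j−1}] satisfies |μ_j| ≤ κ_{Lg}·Δ almost surely. Set D_j = Z_j − μ_j. Then for every c > 0 and every n ∈ ℕ, P( Σ_{j=1}^n D_j ≥ n·c ) ≤ exp( − n·c² / (2(Δ·b_C·c + Δ²·σ_C²)) ), where b_C = σ_C = κ_{Lg} + κ_{Lm}. -/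
open MeasureTheory ProbabilityTheory
open scoped ENNReal

lemma crn_exp_eq_tsum (x : ℝ) : Real.exp x = ∑' n : ℕ, x ^ n / n.factorial := by
  rw [Real.exp_eq_exp_ℝ, NormedSpace.exp_eq_tsum_div]

lemma crn_summable_shift (x : ℝ) :
    Summable (fun n : ℕ => x ^ (n + 2) / ((n + 2).factorial : ℝ)) := by
  have := (summable_nat_add_iff (f := fun n : ℕ => x ^ n / (n.factorial : ℝ)) 2).2
    (Real.summable_pow_div_factorial x)
  exact this

lemma crn_tail_eq (x : ℝ) :
    Real.exp x = 1 + x + ∑' n : ℕ, x ^ (n + 2) / (n + 2).factorial := by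
  have hs : Summable (fun n : ℕ => x ^ n / n.factorial) := Real.summable_pow_div_factorial x
  have h1 : Summable (fun n : ℕ => x ^ (n + 1) / (n + 1).factorial) :=
    (summable_nat_add_iff 1).2 hs
  rw [crn_exp_eq_tsum, Summable.tsum_eq_zero_add hs, Summable.tsum_eq_zero_add h1]
  simp [Nat.factorial]
  ring

lemma crn_exp_le (x : ℝ) : Real.exp x ≤ 1 + x + (Real.exp |x| - 1 - |x|) := by
  have h1 := crn_tail_eq x
  have h2 := crn_tail_eq |x|
  have hle : ∑' n : ℕ, x ^ (n + 2) / ((n + 2).factorial : ℝ)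
      ≤ ∑' n : ℕ, |x| ^ (n + 2) / ((n + 2).factorial : ℝ) := by
    refine Summable.tsum_le_tsum (fun n => ?_) (crn_summable_shift x) (crn_summable_shift |x|)
    have hx : x ^ (n + 2) ≤ |x| ^ (n + 2) := (le_abs_self _).trans_eq (abs_pow x (n + 2))
    gcongr
  linarith

lemma crn_exp_sub_le_geom {t : ℝ} (h0 : 0 ≤ t) (h1 : t < 1) :
    Real.exp t - 1 - t ≤ t ^ 2 / (2 * (1 - t)) := by
  have h2 := crn_tail_eq t
  have key : ∑' n : ℕ, t ^ (n + 2) / ((n + 2).factorial : ℝ) ≤ t ^ 2 / (2 * (1 - t)) := by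
    have hb : ∀ n : ℕ, t ^ (n + 2) / ((n + 2).factorial : ℝ) ≤ t ^ 2 / 2 * t ^ n := by
      intro n
      have hfac : (2 : ℝ) ≤ ((n + 2).factorial : ℝ) := by
        exact_mod_cast le_trans (by omega : 2 ≤ n + 2) (Nat.self_le_factorial (n + 2))
      have h3 : t ^ (n + 2) / ((n + 2).factorial : ℝ) ≤ t ^ (n + 2) / 2 := by
        apply div_le_div_of_nonneg_left (by positivity) (by norm_num) hfac
      calc t ^ (n + 2) / ((n + 2).factorial : ℝ) ≤ t ^ (n + 2) / 2 := h3
        _ = t ^ 2 / 2 * t ^ n := by ring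
    have hgeo : Summable (fun n : ℕ => t ^ 2 / 2 * t ^ n) :=
      Summable.mul_left _ (summable_geometric_of_lt_one h0 h1)
    have h1t : (1 : ℝ) - t ≠ 0 := by linarith
    calc ∑' n : ℕ, t ^ (n + 2) / ((n + 2).factorial : ℝ)
        ≤ ∑' n : ℕ, t ^ 2 / 2 * t ^ n := Summable.tsum_le_tsum hb (crn_summable_shift t) hgeo
      _ = t ^ 2 / 2 * (1 - t)⁻¹ := by
          rw [tsum_mul_left, tsum_geometric_of_lt_one h0 h1]
      _ = t ^ 2 / (2 * (1 - t)) := by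
          rw [eq_div_iff (by positivity : (2:ℝ) * (1 - t) ≠ 0)]
          field_simp
  linarith

lemma crn_condexp_le_const {Ω : Type*} {m m0 : MeasurableSpace Ω} (hm : m ≤ m0)
    (P : Measure Ω) [IsFiniteMeasure P] {h : Ω → ℝ} (hh : Integrable h P) {C : ℝ}
    (H : ∀ s : Set Ω, MeasurableSet[m] s → ∫ ω in s, h ω ∂P ≤ C * (P s).toReal) :
    ∀ᵐ ω ∂P, (P[h|m]) ω ≤ C := by
  have hint : Integrable (P[h|m]) (P.trim hm) :=
    Integrable.trim hm integrable_condExp stronglyMeasurable_condExp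
  have hconst : Integrable (fun _ : Ω => C) (P.trim hm) := integrable_const C
  have key : (P[h|m]) ≤ᵐ[P.trim hm] fun _ => C := by
    refine ae_le_of_forall_setIntegral_le hint hconst fun s hs hμs => ?_
    have h1 : ∫ ω in s, (P[h|m]) ω ∂(P.trim hm) = ∫ ω in s, (P[h|m]) ω ∂P :=
      (setIntegral_trim hm stronglyMeasurable_condExp hs).symm
    have h2 : ∫ ω in s, (P[h|m]) ω ∂P = ∫ ω in s, h ω ∂P := setIntegral_condExp hm hh hs
    have h3 : ∫ ω in s, (fun _ : Ω => C) ω ∂(P.trim hm) = C * ((P.trim hm) s).toReal := by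
      simp [Measure.restrict_apply_univ, mul_comm, measureReal_def]
    rw [h1, h2, h3, trim_measurableSet_eq hm hs]
    exact H s hs
  exact ae_of_ae_trim hm key

lemma crn_sm_min {Ω : Type*} {m : MeasurableSpace Ω} {f : Ω → ℝ}
    (hf : StronglyMeasurable[m] f) (c : ℝ) :
    StronglyMeasurable[m] (fun ω => min (f ω) c) :=
  hf.inf stronglyMeasurable_const


lemma crn_tower {Ω : Type*} {m m0 : MeasurableSpace Ω} (hm : m ≤ m0)
    (P : Measure Ω) [IsFiniteMeasure P] {f h : Ω → ℝ}
    (hf : StronglyMeasurable[m] f) (hf0 : ∀ ω, 0 ≤ f ω)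
    (hh : Integrable h P) (hh0 : 0 ≤ᵐ[P] h) {C : ℝ} (hC : 0 ≤ C)
    (hcond : ∀ᵐ ω ∂P, (P[h|m]) ω ≤ C) :
    ∫⁻ ω, ENNReal.ofReal (f ω * h ω) ∂P ≤ ENNReal.ofReal C * ∫⁻ ω, ENNReal.ofReal (f ω) ∂P := by
  set fM : ℕ → Ω → ℝ := fun M ω => min (f ω) M with hfM
  have hfMsm : ∀ M : ℕ, StronglyMeasurable[m] (fM M) := fun M => crn_sm_min hf (M : ℝ)
  have hfMaesm : ∀ M : ℕ, AEStronglyMeasurable (fM M) P := fun M =>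
    ((hfMsm M).mono hm).aestronglyMeasurable
  have hfaesm : AEStronglyMeasurable f P := (hf.mono hm).aestronglyMeasurable
  have hfM0 : ∀ M ω, 0 ≤ fM M ω := fun M ω => le_min (hf0 ω) (Nat.cast_nonneg M)
  have hfMbdd : ∀ M : ℕ, ∀ᵐ ω ∂P, |fM M ω| ≤ (M : ℝ) := by
    intro M
    filter_upwards with ω
    rw [abs_of_nonneg (hfM0 M ω)]
    exact min_le_right _ _
  -- step 1 : per-truncation bound in Bochner integrals
  have step1 : ∀ M : ℕ, ∫ ω, fM M ω * h ω ∂P ≤ C * ∫ ω, fM M ω ∂P := by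
    intro M
    have hint_fMh : Integrable (fun ω => fM M ω * h ω) P :=
      hh.bdd_mul (hfMaesm M) (c := M) (Filter.Eventually.of_forall fun ω => by
        rw [Real.norm_eq_abs, abs_of_nonneg (hfM0 M ω)]; exact min_le_right _ _)
    have hmul := condExp_stronglyMeasurable_mul_of_bound hm (hfMsm M) hh (M : ℝ) (hfMbdd M)
    have hint_fM : Integrable (fM M) P := by
      refine Integrable.mono' (integrable_const (M : ℝ)) (hfMaesm M) ?_
      filter_upwards with ω
      rw [Real.norm_eq_abs, abs_of_nonneg (hfM0 M ω)]
      exact min_le_right _ _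
    have hint_fMce : Integrable (fun ω => fM M ω * (P[h|m]) ω) P :=
      integrable_condExp.bdd_mul (hfMaesm M) (c := M) (Filter.Eventually.of_forall fun ω => by
        rw [Real.norm_eq_abs, abs_of_nonneg (hfM0 M ω)]; exact min_le_right _ _)
    calc ∫ ω, fM M ω * h ω ∂P = ∫ ω, (P[fun ω' => fM M ω' * h ω'|m]) ω ∂P :=
          (integral_condExp hm).symm
      _ = ∫ ω, fM M ω * (P[h|m]) ω ∂P := integral_congr_ae hmul
      _ ≤ ∫ ω, fM M ω * C ∂P := by
          refine integral_mono_ae hint_fMce (hint_fM.mul_const C) ?_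
          filter_upwards [hcond] with ω hω
          exact mul_le_mul_of_nonneg_left hω (hfM0 M ω)
      _ = C * ∫ ω, fM M ω ∂P := by rw [integral_mul_const]; ring
  -- step 2 : per-truncation bound in lintegrals
  have step2 : ∀ M : ℕ, ∫⁻ ω, ENNReal.ofReal (fM M ω * h ω) ∂P
      ≤ ENNReal.ofReal C * ∫⁻ ω, ENNReal.ofReal (f ω) ∂P := by
    intro M
    have hint_fMh : Integrable (fun ω => fM M ω * h ω) P :=
      hh.bdd_mul (hfMaesm M) (c := M) (Filter.Eventually.of_forall fun ω => by
        rw [Real.norm_eq_abs, abs_of_nonneg (hfM0 M ω)]; exact min_le_right _ _)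
    have hnn : 0 ≤ᵐ[P] fun ω => fM M ω * h ω := by
      filter_upwards [hh0] with ω hω
      exact mul_nonneg (hfM0 M ω) hω
    have hint_fM : Integrable (fM M) P := by
      refine Integrable.mono' (integrable_const (M : ℝ)) (hfMaesm M) ?_
      filter_upwards with ω
      rw [Real.norm_eq_abs, abs_of_nonneg (hfM0 M ω)]
      exact min_le_right _ _
    calc ∫⁻ ω, ENNReal.ofReal (fM M ω * h ω) ∂P
        = ENNReal.ofReal (∫ ω, fM M ω * h ω ∂P) :=
          (ofReal_integral_eq_lintegral_ofReal hint_fMh hnn).symm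
      _ ≤ ENNReal.ofReal (C * ∫ ω, fM M ω ∂P) := ENNReal.ofReal_le_ofReal (step1 M)
      _ = ENNReal.ofReal C * ENNReal.ofReal (∫ ω, fM M ω ∂P) :=
          ENNReal.ofReal_mul hC
      _ = ENNReal.ofReal C * ∫⁻ ω, ENNReal.ofReal (fM M ω) ∂P := by
          rw [ofReal_integral_eq_lintegral_ofReal hint_fM
            (Filter.Eventually.of_forall (hfM0 M))]
      _ ≤ ENNReal.ofReal C * ∫⁻ ω, ENNReal.ofReal (f ω) ∂P := by
          refine mul_le_mul_right (lintegral_mono fun ω => ?_) _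
          exact ENNReal.ofReal_le_ofReal (min_le_left _ _)
  -- step 3 : monotone convergence
  have hmono : ∀ᵐ ω ∂P, Monotone fun M : ℕ => ENNReal.ofReal (fM M ω * h ω) := by
    filter_upwards [hh0] with ω hω
    intro a b hab
    refine ENNReal.ofReal_le_ofReal (mul_le_mul_of_nonneg_right ?_ hω)
    exact min_le_min le_rfl (Nat.cast_le.2 hab)
  have haem : ∀ M : ℕ, AEMeasurable (fun ω => ENNReal.ofReal (fM M ω * h ω)) P :=
    fun M => (((hfMaesm M).aemeasurable.mul hh.aestronglyMeasurable.aemeasurable)).ennreal_ofReal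
  have hsup : ∀ᵐ ω ∂P, (⨆ M : ℕ, ENNReal.ofReal (fM M ω * h ω))
      = ENNReal.ofReal (f ω * h ω) := by
    filter_upwards [hh0] with ω hω
    refine le_antisymm (iSup_le fun M => ENNReal.ofReal_le_ofReal
      (mul_le_mul_of_nonneg_right (min_le_left _ _) hω)) ?_
    refine le_iSup_of_le ⌈f ω⌉₊ (le_of_eq ?_)
    have : fM ⌈f ω⌉₊ ω = f ω := min_eq_left (Nat.le_ceil (f ω))
    rw [this]
  calc ∫⁻ ω, ENNReal.ofReal (f ω * h ω) ∂P
      = ∫⁻ ω, ⨆ M : ℕ, ENNReal.ofReal (fM M ω * h ω) ∂P := lintegral_congr_ae (hsup.mono fun ω hω => hω.symm)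
    _ = ⨆ M : ℕ, ∫⁻ ω, ENNReal.ofReal (fM M ω * h ω) ∂P := lintegral_iSup' haem hmono
    _ ≤ ENNReal.ofReal C * ∫⁻ ω, ENNReal.ofReal (f ω) ∂P := iSup_le step2

lemma crn_moments {Ω : Type*} {m m0 : MeasurableSpace Ω} (hm : m ≤ m0) (P : Measure Ω)
    [IsProbabilityMeasure P] {K : Ω → ℝ} {κLm κLg : ℝ} (hκLm : 0 < κLm) (hκLg : 0 ≤ κLg)
    (hK0 : ∀ᵐ ω ∂P, 0 ≤ K ω)
    (hKint : ∀ k : ℕ, 2 ≤ k → Integrable (fun ω => K ω ^ k) P)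
    (hKm : ∀ k : ℕ, 2 ≤ k → ∀ᵐ ω ∂P, (P[fun ω' => K ω' ^ k|m]) ω ≤ κLm ^ k)
    (hKaesm : AEStronglyMeasurable K P) (hKint1 : Integrable K P) :
    ∀ s : Set Ω, MeasurableSet[m] s → ∀ k : ℕ,
      ∫ ω in s, (K ω + κLg) ^ k ∂P ≤ (κLm + κLg) ^ k * (P s).toReal := by
  intro s hs k
  have hsm0 : MeasurableSet s := hm s hs
  have hPs : (0:ℝ) ≤ (P s).toReal := ENNReal.toReal_nonneg
  have hKik : ∀ i : ℕ, Integrable (fun ω => K ω ^ i) P := by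
    intro i
    match i, Nat.lt_or_ge i 2 with
    | 0, _ => simpa using integrable_const (1:ℝ)
    | 1, _ => simpa using hKint1
    | (n+2), _ => exact hKint (n+2) (by omega)
  -- individual moment bounds
  have hmom : ∀ i : ℕ, ∫ ω in s, K ω ^ i ∂P ≤ κLm ^ i * (P s).toReal := by
    intro i
    have hge2 : ∀ j : ℕ, 2 ≤ j → ∫ ω in s, K ω ^ j ∂P ≤ κLm ^ j * (P s).toReal := by
      intro j hj
      have h1 : ∫ ω in s, K ω ^ j ∂P = ∫ ω in s, (P[fun ω' => K ω' ^ j|m]) ω ∂P :=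
        (setIntegral_condExp hm (hKint j hj) hs).symm
      have h2 : ∫ ω in s, (P[fun ω' => K ω' ^ j|m]) ω ∂P ≤ ∫ _ω in s, κLm ^ j ∂P := by
        refine integral_mono_ae integrable_condExp.integrableOn (integrableOn_const ?_) ?_
        · exact measure_ne_top P s
        · exact ae_restrict_of_ae (hKm j hj)
      have h3 : ∫ _ω in s, (κLm ^ j : ℝ) ∂P = κLm ^ j * (P s).toReal := by
        simp [mul_comm, measureReal_def]
      linarith [h1 ▸ h2.trans_eq h3]
    match i with
    | 0 => simp [measureReal_def]
    | 1 =>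
      have h2 := hge2 2 le_rfl
      have hpt : ∀ᵐ ω ∂(P.restrict s), 2 * κLm * K ω ≤ K ω ^ 2 + κLm ^ 2 := by
        filter_upwards with ω
        nlinarith [sq_nonneg (K ω - κLm)]
      have hint1 : IntegrableOn (fun ω => 2 * κLm * K ω) s P :=
        (hKint1.const_mul _).integrableOn
      have hint2 : IntegrableOn (fun ω => K ω ^ 2 + κLm ^ 2) s P :=
        ((hKint 2 le_rfl).add (integrable_const _)).integrableOn
      have h4 : ∫ ω in s, 2 * κLm * K ω ∂P ≤ ∫ ω in s, (K ω ^ 2 + κLm ^ 2) ∂P :=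
        integral_mono_ae hint1 hint2 hpt
      rw [MeasureTheory.integral_const_mul] at h4
      rw [integral_add (hKint 2 le_rfl).integrableOn (integrable_const _).integrableOn] at h4
      have h5 : ∫ _ω in s, (κLm ^ 2 : ℝ) ∂P = κLm ^ 2 * (P s).toReal := by simp [mul_comm, measureReal_def]
      rw [h5] at h4
      simp only [pow_one]
      nlinarith [h2, h4, hκLm]
    | (n+2) => exact hge2 (n+2) (by omega)
  -- binomial expansion
  have hbinom : ∀ ω, (K ω + κLg) ^ k
      = ∑ i ∈ Finset.range (k+1), K ω ^ i * (κLg ^ (k-i) * (k.choose i : ℝ)) := by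
    intro ω
    rw [add_pow]
    exact Finset.sum_congr rfl fun i _ => by ring
  calc ∫ ω in s, (K ω + κLg) ^ k ∂P
      = ∑ i ∈ Finset.range (k+1), ∫ ω in s, K ω ^ i * (κLg ^ (k-i) * (k.choose i : ℝ)) ∂P := by
        rw [← integral_finset_sum]
        · exact setIntegral_congr_fun hsm0 fun ω _ => hbinom ω
        · exact fun i _ => ((hKik i).mul_const _).integrableOn
    _ ≤ ∑ i ∈ Finset.range (k+1), κLm ^ i * (κLg ^ (k-i) * (k.choose i : ℝ)) * (P s).toReal := by
        refine Finset.sum_le_sum fun i _ => ?_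
        rw [integral_mul_const]
        have hc : (0:ℝ) ≤ κLg ^ (k-i) * (k.choose i : ℝ) := by positivity
        calc (∫ ω in s, K ω ^ i ∂P) * (κLg ^ (k-i) * (k.choose i : ℝ))
            ≤ (κLm ^ i * (P s).toReal) * (κLg ^ (k-i) * (k.choose i : ℝ)) :=
              mul_le_mul_of_nonneg_right (hmom i) hc
          _ = κLm ^ i * (κLg ^ (k-i) * (k.choose i : ℝ)) * (P s).toReal := by ring
    _ = (κLm + κLg) ^ k * (P s).toReal := by
        rw [← Finset.sum_mul, add_pow]
        congr 1
        exact Finset.sum_congr rfl fun i _ => by ring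

lemma crn_expW {Ω : Type*} {m m0 : MeasurableSpace Ω} (hm : m ≤ m0) (P : Measure Ω)
    [IsProbabilityMeasure P] {Y : Ω → ℝ} {c : ℝ} (hc : 0 ≤ c)
    (hY0 : ∀ᵐ ω ∂P, 0 ≤ Y ω) (hYaesm : AEStronglyMeasurable Y P)
    (hYint_pow : ∀ n : ℕ, Integrable (fun ω => Y ω ^ n) P)
    (hYmom : ∀ s : Set Ω, MeasurableSet[m] s → ∀ n : ℕ,
      ∫ ω in s, Y ω ^ n ∂P ≤ c ^ n * (P s).toReal) :
    Integrable (fun ω => Real.exp (Y ω)) P ∧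
    ∀ s : Set Ω, MeasurableSet[m] s →
      ∫ ω in s, (Real.exp (Y ω) - 1 - Y ω) ∂P
        ≤ (Real.exp c - 1 - c) * (P s).toReal := by
  have hexp_aesm : AEStronglyMeasurable (fun ω => Real.exp (Y ω)) P :=
    Real.continuous_exp.comp_aestronglyMeasurable hYaesm
  -- generic term computation over a set
  have hterm : ∀ s : Set Ω, MeasurableSet[m] s → ∀ n : ℕ,
      ∫⁻ ω in s, ENNReal.ofReal (Y ω ^ n / n.factorial) ∂P
        ≤ ENNReal.ofReal (c ^ n / n.factorial * (P s).toReal) := by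
    intro s hs n
    have hint : Integrable (fun ω => Y ω ^ n / n.factorial) ((P.restrict s)) :=
      ((hYint_pow n).div_const _).integrableOn
    have hnn : ∀ᵐ ω ∂(P.restrict s), 0 ≤ Y ω ^ n / n.factorial := by
      filter_upwards [ae_restrict_of_ae hY0] with ω hω
      positivity
    rw [← ofReal_integral_eq_lintegral_ofReal hint hnn]
    refine ENNReal.ofReal_le_ofReal ?_
    rw [integral_div]
    rw [div_mul_eq_mul_div, mul_comm]
    exact div_le_div_of_nonneg_right (by rw [mul_comm]; exact hYmom s hs n) (by positivity)
  have haemeas : ∀ n : ℕ, AEMeasurable (fun ω => ENNReal.ofReal (Y ω ^ n / n.factorial)) P :=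
    fun n => ((hYaesm.aemeasurable.pow_const n).div_const _).ennreal_ofReal
  -- part (i) : integrability of exp Y
  have hi : Integrable (fun ω => Real.exp (Y ω)) P := by
    refine ⟨hexp_aesm, ?_⟩
    rw [hasFiniteIntegral_iff_ofReal (Filter.Eventually.of_forall fun ω => (Real.exp_pos _).le)]
    have heq : ∫⁻ ω, ENNReal.ofReal (Real.exp (Y ω)) ∂P
        = ∑' n : ℕ, ∫⁻ ω, ENNReal.ofReal (Y ω ^ n / n.factorial) ∂P := by
      rw [← lintegral_tsum haemeas]
      refine lintegral_congr_ae ?_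
      filter_upwards [hY0] with ω hω
      rw [crn_exp_eq_tsum]
      exact ENNReal.ofReal_tsum_of_nonneg (fun n => by positivity)
        (Real.summable_pow_div_factorial _)
    rw [heq]
    have hsum : Summable (fun n : ℕ => c ^ n / n.factorial * (P Set.univ).toReal) :=
      (Real.summable_pow_div_factorial c).mul_right _
    calc ∑' n : ℕ, ∫⁻ ω, ENNReal.ofReal (Y ω ^ n / n.factorial) ∂P
        ≤ ∑' n : ℕ, ENNReal.ofReal (c ^ n / n.factorial * (P Set.univ).toReal) := by
          refine ENNReal.tsum_le_tsum fun n => ?_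
          have := hterm Set.univ MeasurableSet.univ n
          rwa [Measure.restrict_univ] at this
      _ = ENNReal.ofReal (∑' n : ℕ, c ^ n / n.factorial * (P Set.univ).toReal) :=
          (ENNReal.ofReal_tsum_of_nonneg (fun n => by positivity) hsum).symm
      _ < ⊤ := ENNReal.ofReal_lt_top
  refine ⟨hi, fun s hs => ?_⟩
  -- part (ii)
  have hr_nn : ∀ᵐ ω ∂P, 0 ≤ Real.exp (Y ω) - 1 - Y ω := by
    filter_upwards [hY0] with ω hω
    have := Real.add_one_le_exp (Y ω)
    linarith
  have hr_int : Integrable (fun ω => Real.exp (Y ω) - 1 - Y ω) P := by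
    have h1 : Integrable (fun ω => Y ω) P := by simpa using hYint_pow 1
    exact (hi.sub (integrable_const 1)).sub h1
  have hPs : (P s).toReal = (P.restrict s Set.univ).toReal := by
    simp [Measure.restrict_apply_univ]
  have hc_nn : 0 ≤ Real.exp c - 1 - c := by
    have := Real.add_one_le_exp c; linarith
  -- compute the set integral via lintegral and tsum
  have key : ∫⁻ ω in s, ENNReal.ofReal (Real.exp (Y ω) - 1 - Y ω) ∂P
      ≤ ENNReal.ofReal ((Real.exp c - 1 - c) * (P s).toReal) := by
    have heq : ∫⁻ ω in s, ENNReal.ofReal (Real.exp (Y ω) - 1 - Y ω) ∂P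
        = ∑' n : ℕ, ∫⁻ ω in s, ENNReal.ofReal (Y ω ^ (n+2) / (n+2).factorial) ∂P := by
      rw [← lintegral_tsum fun n => ((haemeas (n+2)).restrict)]
      refine lintegral_congr_ae ?_
      filter_upwards [ae_restrict_of_ae hY0] with ω hω
      have htail := crn_tail_eq (Y ω)
      have : Real.exp (Y ω) - 1 - Y ω = ∑' n : ℕ, Y ω ^ (n+2) / (n+2).factorial := by
        linarith
      rw [this]
      exact ENNReal.ofReal_tsum_of_nonneg (fun n => by positivity) (crn_summable_shift _)
    rw [heq]
    have hsum : Summable (fun n : ℕ => c ^ (n+2) / (n+2).factorial * (P s).toReal) :=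
      (crn_summable_shift c).mul_right _
    calc ∑' n : ℕ, ∫⁻ ω in s, ENNReal.ofReal (Y ω ^ (n+2) / (n+2).factorial) ∂P
        ≤ ∑' n : ℕ, ENNReal.ofReal (c ^ (n+2) / (n+2).factorial * (P s).toReal) :=
          ENNReal.tsum_le_tsum fun n => hterm s hs (n+2)
      _ = ENNReal.ofReal (∑' n : ℕ, c ^ (n+2) / (n+2).factorial * (P s).toReal) :=
          (ENNReal.ofReal_tsum_of_nonneg (fun n => by positivity) hsum).symm
      _ = ENNReal.ofReal ((Real.exp c - 1 - c) * (P s).toReal) := by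
          congr 1
          rw [tsum_mul_right]
          congr 1
          have := crn_tail_eq c
          linarith
  have heq2 : ∫ ω in s, (Real.exp (Y ω) - 1 - Y ω) ∂P
      = (∫⁻ ω in s, ENNReal.ofReal (Real.exp (Y ω) - 1 - Y ω) ∂P).toReal := by
    rw [integral_eq_lintegral_of_nonneg_ae (ae_restrict_of_ae hr_nn)
      (hr_int.aestronglyMeasurable.restrict)]
  rw [heq2]
  calc (∫⁻ ω in s, ENNReal.ofReal (Real.exp (Y ω) - 1 - Y ω) ∂P).toReal
      ≤ (ENNReal.ofReal ((Real.exp c - 1 - c) * (P s).toReal)).toReal :=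
        ENNReal.toReal_mono ENNReal.ofReal_ne_top key
    _ = (Real.exp c - 1 - c) * (P s).toReal := by
        rw [ENNReal.toReal_ofReal (by positivity)]

lemma crn_r_mono {u v : ℝ} (hu : 0 ≤ u) (huv : u ≤ v) :
    Real.exp u - 1 - u ≤ Real.exp v - 1 - v := by
  have h1 := crn_tail_eq u
  have h2 := crn_tail_eq v
  have hle : ∑' n : ℕ, u ^ (n + 2) / ((n + 2).factorial : ℝ)
      ≤ ∑' n : ℕ, v ^ (n + 2) / ((n + 2).factorial : ℝ) := by
    refine Summable.tsum_le_tsum (fun n => ?_) (crn_summable_shift u) (crn_summable_shift v)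
    have : u ^ (n+2) ≤ v ^ (n+2) := pow_le_pow_left₀ hu huv (n+2)
    gcongr
  linarith

lemma crn_step {Ω : Type*} {m m0 : MeasurableSpace Ω} (hm : m ≤ m0) (P : Measure Ω)
    [IsProbabilityMeasure P] {Z K : Ω → ℝ} {κLm κLg Δ lam : ℝ}
    (hκLm : 0 < κLm) (hκLg : 0 < κLg) (hΔ : 0 < Δ) (hlam : 0 ≤ lam)
    (hlt : lam * ((κLm + κLg) * Δ) < 1)
    (hZint : Integrable Z P)
    (hK0 : ∀ᵐ ω ∂P, 0 ≤ K ω)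
    (hKint : ∀ k : ℕ, 2 ≤ k → Integrable (fun ω => K ω ^ k) P)
    (hKm : ∀ k : ℕ, 2 ≤ k → ∀ᵐ ω ∂P, (P[fun ω' => K ω' ^ k|m]) ω ≤ κLm ^ k)
    (hZb : ∀ᵐ ω ∂P, |Z ω| ≤ K ω * Δ)
    (hmuB : ∀ᵐ ω ∂P, |(P[Z|m]) ω| ≤ κLg * Δ)
    (hKaesm : AEStronglyMeasurable K P) (hKint1 : Integrable K P) :
    Integrable (fun ω => Real.exp (lam * (Z ω - (P[Z|m]) ω))) P ∧
    ∀ᵐ ω ∂P, (P[fun ω' => Real.exp (lam * (Z ω' - (P[Z|m]) ω'))|m]) ω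
      ≤ Real.exp ((lam * ((κLm + κLg) * Δ)) ^ 2 / (2 * (1 - lam * ((κLm + κLg) * Δ)))) := by
  set μf := P[Z|m] with hμf
  set t := lam * ((κLm + κLg) * Δ) with ht
  have ht0 : 0 ≤ t := by positivity
  set Y : Ω → ℝ := fun ω => lam * ((K ω + κLg) * Δ) with hY
  -- Y basics
  have hY0 : ∀ᵐ ω ∂P, 0 ≤ Y ω := by
    filter_upwards [hK0] with ω hω
    have : 0 ≤ K ω + κLg := by linarith
    positivity
  have hYaesm : AEStronglyMeasurable Y P := by
    have h1 : AEStronglyMeasurable (fun ω => lam * Δ * (K ω + κLg)) P :=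
      (hKaesm.add aestronglyMeasurable_const).const_mul _
    refine h1.congr ?_
    filter_upwards with ω
    rw [hY]; ring
  have hKpow_int : ∀ n : ℕ, Integrable (fun ω => (K ω + κLg) ^ n) P := by
    intro n
    have : (fun ω => (K ω + κLg) ^ n)
        = fun ω => ∑ i ∈ Finset.range (n+1), K ω ^ i * (κLg ^ (n-i) * (n.choose i : ℝ)) := by
      funext ω
      rw [add_pow]
      exact Finset.sum_congr rfl fun i _ => by ring
    rw [this]
    refine integrable_finset_sum _ fun i _ => ?_
    have hKi : Integrable (fun ω => K ω ^ i) P := by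
      match i, Nat.lt_or_ge i 2 with
      | 0, _ => simpa using integrable_const (1:ℝ)
      | 1, _ => simpa using hKint1
      | (j+2), _ => exact hKint (j+2) (by omega)
    exact hKi.mul_const _
  have hYint_pow : ∀ n : ℕ, Integrable (fun ω => Y ω ^ n) P := by
    intro n
    have : (fun ω => Y ω ^ n) = fun ω => (lam * Δ) ^ n * (K ω + κLg) ^ n := by
      funext ω; rw [hY, ← mul_pow]; congr 1; ring
    rw [this]
    exact (hKpow_int n).const_mul _
  -- moments of Y
  have hmom := crn_moments hm P hκLm hκLg.le hK0 hKint hKm hKaesm hKint1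
  have hYmom : ∀ s : Set Ω, MeasurableSet[m] s → ∀ n : ℕ,
      ∫ ω in s, Y ω ^ n ∂P ≤ t ^ n * (P s).toReal := by
    intro s hs n
    have h1 : ∀ ω, Y ω ^ n = (lam * Δ) ^ n * (K ω + κLg) ^ n := fun ω => by
      rw [hY, ← mul_pow]; congr 1; ring
    have h2 : t ^ n = (lam * Δ) ^ n * (κLm + κLg) ^ n := by
      rw [ht, ← mul_pow]; congr 1; ring
    calc ∫ ω in s, Y ω ^ n ∂P = (lam * Δ) ^ n * ∫ ω in s, (K ω + κLg) ^ n ∂P := by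
          simp_rw [h1]; rw [integral_const_mul]
      _ ≤ (lam * Δ) ^ n * ((κLm + κLg) ^ n * (P s).toReal) := by
          refine mul_le_mul_of_nonneg_left (hmom s hs n) (by positivity)
      _ = t ^ n * (P s).toReal := by rw [h2]; ring
  obtain ⟨hYexp_int, hYr_set⟩ := crn_expW hm P ht0 hY0 hYaesm hYint_pow hYmom
  -- the pointwise chain
  set D : Ω → ℝ := fun ω => Z ω - μf ω with hD
  have hDb : ∀ᵐ ω ∂P, lam * |D ω| ≤ Y ω := by
    filter_upwards [hZb, hmuB] with ω h1 h2
    have : |D ω| ≤ (K ω + κLg) * Δ := by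
      rw [hD]
      calc |Z ω - μf ω| ≤ |Z ω| + |μf ω| := abs_sub _ _
        _ ≤ K ω * Δ + κLg * Δ := add_le_add h1 h2
        _ = (K ω + κLg) * Δ := by ring
    calc lam * |D ω| ≤ lam * ((K ω + κLg) * Δ) :=
      mul_le_mul_of_nonneg_left this hlam
      _ = Y ω := rfl
  have hpt : ∀ᵐ ω ∂P, Real.exp (lam * D ω)
      ≤ 1 + lam * D ω + (Real.exp (Y ω) - 1 - Y ω) := by
    filter_upwards [hDb, hY0] with ω h1 h2
    have habs : |lam * D ω| = lam * |D ω| := by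
      rw [abs_mul, abs_of_nonneg hlam]
    calc Real.exp (lam * D ω)
        ≤ 1 + lam * D ω + (Real.exp |lam * D ω| - 1 - |lam * D ω|) := crn_exp_le _
      _ ≤ 1 + lam * D ω + (Real.exp (Y ω) - 1 - Y ω) := by
          have := crn_r_mono (abs_nonneg (lam * D ω)) (habs ▸ h1)
          linarith
  -- integrability of exp (lam * D)
  have hDaesm : AEStronglyMeasurable D P :=
    hZint.aestronglyMeasurable.sub
      (stronglyMeasurable_condExp.mono hm).aestronglyMeasurable
  have hμint : Integrable μf P := integrable_condExp
  have hDint : Integrable D P := hZint.sub hμint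
  have hGint : Integrable (fun ω => 1 + lam * D ω + (Real.exp (Y ω) - 1 - Y ω)) P := by
    have hY1 : Integrable Y P := by simpa using hYint_pow 1
    exact ((integrable_const 1).add (hDint.const_mul lam)).add
      ((hYexp_int.sub (integrable_const 1)).sub hY1)
  have hexpD_int : Integrable (fun ω => Real.exp (lam * D ω)) P := by
    refine Integrable.mono' hGint
      (Real.continuous_exp.comp_aestronglyMeasurable (hDaesm.const_mul lam)) ?_
    filter_upwards [hpt] with ω hω
    rw [Real.norm_eq_abs, abs_of_pos (Real.exp_pos _)]
    exact hω
  refine ⟨hexpD_int, ?_⟩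
  -- set integral bound
  have hset : ∀ s : Set Ω, MeasurableSet[m] s →
      ∫ ω in s, Real.exp (lam * D ω) ∂P ≤ Real.exp (t ^ 2 / (2 * (1 - t))) * (P s).toReal := by
    intro s hs
    have hDzero : ∫ ω in s, D ω ∂P = 0 := by
      have h1 : ∫ ω in s, Z ω ∂P = ∫ ω in s, μf ω ∂P := (setIntegral_condExp hm hZint hs).symm
      rw [integral_sub hZint.integrableOn hμint.integrableOn, h1, sub_self]
    have h2 : ∫ ω in s, Real.exp (lam * D ω) ∂P
        ≤ ∫ ω in s, (1 + lam * D ω + (Real.exp (Y ω) - 1 - Y ω)) ∂P :=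
      integral_mono_ae hexpD_int.integrableOn hGint.integrableOn (ae_restrict_of_ae hpt)
    have hint1 : Integrable (fun ω => 1 + lam * D ω) P := by
      exact (integrable_const 1).add (hDint.const_mul lam)
    have hintlD : Integrable (fun ω => lam * D ω) P := by
      exact hDint.const_mul lam
    have hintr : Integrable (fun ω => Real.exp (Y ω) - 1 - Y ω) P := by
      exact (hYexp_int.sub (integrable_const 1)).sub (by simpa using hYint_pow 1)
    have h3 : ∫ ω in s, (1 + lam * D ω + (Real.exp (Y ω) - 1 - Y ω)) ∂P
        = (P s).toReal + lam * ∫ ω in s, D ω ∂P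
          + ∫ ω in s, (Real.exp (Y ω) - 1 - Y ω) ∂P := by
      rw [integral_add hint1.integrableOn hintr.integrableOn,
        integral_add ((integrable_const (1:ℝ)).integrableOn) hintlD.integrableOn,
        MeasureTheory.integral_const_mul, integral_const]
      simp [measureReal_def]
    have h4 := hYr_set s hs
    have hgeo : Real.exp t - 1 - t ≤ t ^ 2 / (2 * (1 - t)) :=
      crn_exp_sub_le_geom ht0 hlt
    have h5 : 1 + t ^ 2 / (2 * (1 - t)) ≤ Real.exp (t ^ 2 / (2 * (1 - t))) := by
      linarith [Real.add_one_le_exp (t ^ 2 / (2 * (1 - t)))]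
    have hPs : (0:ℝ) ≤ (P s).toReal := ENNReal.toReal_nonneg
    have hPs1 : (P s).toReal ≤ 1 := by
      have := prob_le_one (μ := P) (s := s)
      calc (P s).toReal ≤ (1 : ℝ≥0∞).toReal := ENNReal.toReal_mono ENNReal.one_ne_top this
        _ = 1 := by simp
    rw [hDzero] at h3
    have h6 : ∫ ω in s, Real.exp (lam * D ω) ∂P
        ≤ (P s).toReal + (Real.exp t - 1 - t) * (P s).toReal := by
      have := h2.trans (le_of_eq h3)
      linarith
    have h7 : Real.exp t - 1 - t ≤ t ^ 2 / (2 * (1 - t)) := hgeo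
    nlinarith [h6, h5, hPs, hPs1, h7]
  exact crn_condexp_le_const hm P hexpD_int hset

/-- **CRN Bernstein bound under pathwise Lipschitz sample paths.**
If `|Z j| ≤ K j · Δ` with `(E[K j^m | F_{j−1}])^{1/m} ≤ κ_{Lm}` for every
`m ≥ 2`, and the conditional mean `μ j = E[Z j | F_{j−1}]` satisfies
`|μ j| ≤ κ_{Lg} Δ`, then with `D j = Z j − μ j`,
`P(∑_{j=1}^n D j ≥ n c) ≤ exp(−n c² / (2 (Δ b_C c + Δ² σ_C²)))`
where `b_C = σ_C = κ_{Lg} + κ_{Lm}`. -/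
theorem stmt_6
    {Ω : Type*} {m0 : MeasurableSpace Ω} (P : Measure Ω) [IsProbabilityMeasure P]
    (𝓕 : Filtration ℕ m0) (h0 : 𝓕 0 = ⊥)
    (Δ κLm κLg : ℝ) (hΔ : 0 < Δ) (hκLm : 0 < κLm) (hκLg : 0 < κLg)
    (Z K : ℕ → Ω → ℝ)
    (hZadapted : ∀ j, 1 ≤ j → StronglyMeasurable[𝓕 j] (Z j))
    (hZint : ∀ j, 1 ≤ j → Integrable (Z j) P)
    (hK0 : ∀ j, 1 ≤ j → ∀ᵐ ω ∂P, 0 ≤ K j ω)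
    (hKint : ∀ j, 1 ≤ j → ∀ m : ℕ, 2 ≤ m → Integrable (fun ω => K j ω ^ m) P)
    (hZbound : ∀ j, 1 ≤ j → ∀ᵐ ω ∂P, |Z j ω| ≤ K j ω * Δ)
    (hKmom : ∀ j, 1 ≤ j → ∀ m : ℕ, 2 ≤ m →
      ∀ᵐ ω ∂P, ((P[fun ω' => K j ω' ^ m | 𝓕 (j - 1)]) ω) ^ ((1 : ℝ) / m) ≤ κLm)
    (hmu : ∀ j, 1 ≤ j → ∀ᵐ ω ∂P, |(P[Z j | 𝓕 (j - 1)]) ω| ≤ κLg * Δ) :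
    ∀ c : ℝ, 0 < c → ∀ n : ℕ,
      P {ω | (n : ℝ) * c ≤ ∑ j ∈ Finset.Icc 1 n, (Z j ω - (P[Z j | 𝓕 (j - 1)]) ω)}
        ≤ ENNReal.ofReal (Real.exp (-((n : ℝ) * c ^ 2
            / (2 * (Δ * (κLg + κLm) * c + Δ ^ 2 * (κLg + κLm) ^ 2))))) := by
  intro c hc n
  -- constants
  set B : ℝ := (κLm + κLg) * Δ with hB
  have hB0 : 0 < B := by positivity
  set lam : ℝ := c / (B * c + B ^ 2) with hlam_def
  have hden : 0 < B * c + B ^ 2 := by positivity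
  have hlam0 : 0 < lam := div_pos hc hden
  have ht_lt : lam * B < 1 := by
    rw [hlam_def, div_mul_eq_mul_div, div_lt_one hden]
    nlinarith
  set g : ℝ := (lam * B) ^ 2 / (2 * (1 - lam * B)) with hg
  have hg0 : 0 ≤ g := by
    have h1 : 0 < 1 - lam * B := by linarith
    positivity
  -- per-index derived facts
  have hKaesm : ∀ j, 1 ≤ j → AEStronglyMeasurable (K j) P := by
    intro j hj
    have h2 := (hKint j hj 2 le_rfl).aestronglyMeasurable
    have h3 : AEStronglyMeasurable (fun ω => Real.sqrt (K j ω ^ 2)) P :=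
      Real.continuous_sqrt.comp_aestronglyMeasurable h2
    refine h3.congr ?_
    filter_upwards [hK0 j hj] with ω hω
    rw [Real.sqrt_sq hω]
  have hKint1 : ∀ j, 1 ≤ j → Integrable (K j) P := by
    intro j hj
    refine Integrable.mono' ((integrable_const 1).add (hKint j hj 2 le_rfl)) (hKaesm j hj) ?_
    filter_upwards with ω
    have h1 : (0:ℝ) ≤ (|K j ω| - 1) ^ 2 := sq_nonneg _
    have h2 : |K j ω| ^ 2 = K j ω ^ 2 := sq_abs _
    rw [Real.norm_eq_abs]
    show |K j ω| ≤ (fun ω => (1:ℝ) + K j ω ^ 2) ω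
    simp only []
    nlinarith
  have hKm : ∀ j, 1 ≤ j → ∀ k : ℕ, 2 ≤ k →
      ∀ᵐ ω ∂P, (P[fun ω' => K j ω' ^ k|𝓕 (j-1)]) ω ≤ κLm ^ k := by
    intro j hj k hk
    have hnn : ∀ᵐ ω ∂P, 0 ≤ (P[fun ω' => K j ω' ^ k|𝓕 (j-1)]) ω := by
      refine condExp_nonneg ?_
      filter_upwards [hK0 j hj] with ω hω
      positivity
    filter_upwards [hKmom j hj k hk, hnn] with ω h1 h2
    have hk0 : (k:ℝ) ≠ 0 := by positivity
    have heq : ((P[fun ω' => K j ω' ^ k|𝓕 (j-1)]) ω ^ ((1:ℝ)/k)) ^ (k:ℕ)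
        = (P[fun ω' => K j ω' ^ k|𝓕 (j-1)]) ω := by
      rw [← Real.rpow_natCast ((P[fun ω' => K j ω' ^ k|𝓕 (j-1)]) ω ^ ((1:ℝ)/k)) k,
        ← Real.rpow_mul h2, one_div, inv_mul_cancel₀ hk0, Real.rpow_one]
    calc (P[fun ω' => K j ω' ^ k|𝓕 (j-1)]) ω
        = ((P[fun ω' => K j ω' ^ k|𝓕 (j-1)]) ω ^ ((1:ℝ)/k)) ^ (k:ℕ) := heq.symm
      _ ≤ κLm ^ k := pow_le_pow_left₀ (Real.rpow_nonneg h2 _) h1 k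
  -- per-step conclusions
  have hstep : ∀ j, 1 ≤ j →
      Integrable (fun ω => Real.exp (lam * (Z j ω - (P[Z j|𝓕 (j-1)]) ω))) P ∧
      ∀ᵐ ω ∂P, (P[fun ω' => Real.exp (lam * (Z j ω' - (P[Z j|𝓕 (j-1)]) ω'))|𝓕 (j-1)]) ω
        ≤ Real.exp g := by
    intro j hj
    have h := crn_step (𝓕.le (j-1)) P hκLm hκLg hΔ hlam0.le (by rw [← hB]; exact ht_lt)
      (hZint j hj) (hK0 j hj) (hKint j hj) (hKm j hj) (hZbound j hj) (hmu j hj)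
      (hKaesm j hj) (hKint1 j hj)
    exact ⟨h.1, by filter_upwards [h.2] with ω hω; rw [← hB] at hω; exact hω⟩
  -- the partial sums
  set S : ℕ → Ω → ℝ := fun k ω => ∑ j ∈ Finset.Icc 1 k, (Z j ω - (P[Z j|𝓕 (j-1)]) ω) with hS
  have hSsm : ∀ k : ℕ, StronglyMeasurable[𝓕 k] (S k) := by
    intro k
    refine Finset.stronglyMeasurable_fun_sum _ fun j hj => ?_
    obtain ⟨hj1, hj2⟩ := Finset.mem_Icc.1 hj
    exact ((hZadapted j hj1).mono (𝓕.mono hj2)).sub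
      (stronglyMeasurable_condExp.mono (𝓕.mono (le_trans (Nat.sub_le j 1) hj2)))
  -- induction
  have hE : ∀ k : ℕ, ∫⁻ ω, ENNReal.ofReal (Real.exp (lam * S k ω)) ∂P
      ≤ ENNReal.ofReal (Real.exp g) ^ k := by
    intro k
    induction k with
    | zero =>
      simp [hS]
    | succ n ih =>
      have hsplit : ∀ ω, S (n+1) ω = S n ω + (Z (n+1) ω - (P[Z (n+1)|𝓕 n]) ω) := by
        intro ω
        rw [hS]
        simp only []
        rw [Finset.sum_Icc_succ_top (by omega : 1 ≤ n + 1)]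
        norm_num
      have hmul : ∀ ω, Real.exp (lam * S (n+1) ω)
          = Real.exp (lam * S n ω) * Real.exp (lam * (Z (n+1) ω - (P[Z (n+1)|𝓕 n]) ω)) := by
        intro ω
        rw [hsplit ω, mul_add, Real.exp_add]
      have hstep' := hstep (n+1) (by omega)
      rw [(by norm_num : n + 1 - 1 = n)] at hstep'
      have hf_sm : StronglyMeasurable[𝓕 n] (fun ω => Real.exp (lam * S n ω)) :=
        Real.continuous_exp.comp_stronglyMeasurable ((hSsm n).const_mul lam)
      have htow := crn_tower (𝓕.le n) P hf_sm (fun ω => (Real.exp_pos _).le) hstep'.1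
        (Filter.Eventually.of_forall fun ω => (Real.exp_pos _).le)
        (Real.exp_pos g).le hstep'.2
      calc ∫⁻ ω, ENNReal.ofReal (Real.exp (lam * S (n+1) ω)) ∂P
          = ∫⁻ ω, ENNReal.ofReal (Real.exp (lam * S n ω)
              * Real.exp (lam * (Z (n+1) ω - (P[Z (n+1)|𝓕 n]) ω))) ∂P := by
            refine lintegral_congr fun ω => ?_
            rw [hmul ω]
        _ ≤ ENNReal.ofReal (Real.exp g)
            * ∫⁻ ω, ENNReal.ofReal (Real.exp (lam * S n ω)) ∂P := htow
        _ ≤ ENNReal.ofReal (Real.exp g) * ENNReal.ofReal (Real.exp g) ^ n :=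
            mul_le_mul_right ih _
        _ = ENNReal.ofReal (Real.exp g) ^ (n+1) := by rw [pow_succ]; ring
  -- Markov / Chernoff
  have hSaesm : AEStronglyMeasurable (S n) P :=
    ((hSsm n).mono (𝓕.le n)).aestronglyMeasurable
  have haem : AEMeasurable (fun ω => ENNReal.ofReal (Real.exp (lam * S n ω))) P :=
    (Real.continuous_exp.comp_aestronglyMeasurable
      (hSaesm.const_mul lam)).aemeasurable.ennreal_ofReal
  have hsubset : {ω | (n : ℝ) * c ≤ S n ω}
      ⊆ {ω | ENNReal.ofReal (Real.exp (lam * ((n:ℝ) * c)))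
          ≤ ENNReal.ofReal (Real.exp (lam * S n ω))} := by
    intro ω hω
    exact ENNReal.ofReal_le_ofReal (Real.exp_le_exp.2
      (mul_le_mul_of_nonneg_left hω hlam0.le))
  have hmarkov := meas_ge_le_lintegral_div haem
    (ε := ENNReal.ofReal (Real.exp (lam * ((n:ℝ) * c))))
    (by simp [ENNReal.ofReal_eq_zero, not_le, Real.exp_pos]) ENNReal.ofReal_ne_top
  have hM : P {ω | (n : ℝ) * c ≤ S n ω}
      ≤ ENNReal.ofReal (Real.exp g) ^ n / ENNReal.ofReal (Real.exp (lam * ((n:ℝ) * c))) := by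
    refine le_trans (measure_mono hsubset) (le_trans hmarkov ?_)
    exact ENNReal.div_le_div_right (hE n) _
  -- final arithmetic
  have hfinal : ENNReal.ofReal (Real.exp g) ^ n / ENNReal.ofReal (Real.exp (lam * ((n:ℝ) * c)))
      = ENNReal.ofReal (Real.exp (-((n : ℝ) * c ^ 2
          / (2 * (Δ * (κLg + κLm) * c + Δ ^ 2 * (κLg + κLm) ^ 2))))) := by
    rw [← ENNReal.ofReal_pow (Real.exp_pos g).le, ← Real.exp_nat_mul,
      ← ENNReal.ofReal_div_of_pos (Real.exp_pos _), ← Real.exp_sub]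
    congr 1
    have hden' : Δ * (κLg + κLm) * c + Δ ^ 2 * (κLg + κLm) ^ 2 = B * c + B ^ 2 := by
      rw [hB]; ring
    rw [hden']
    have h1mt : 1 - lam * B = B ^ 2 / (B * c + B ^ 2) := by
      rw [hlam_def]; field_simp; ring
    have hgval : g = c ^ 2 / (2 * (B * c + B ^ 2)) := by
      rw [hg, h1mt, hlam_def]
      field_simp
    rw [hgval, hlam_def]
    field_simp
    ring
  exact hM.trans (le_of_eq hfinal)
end

section
/- Let (Ω, F, P) be a probability space with a filtration F_0 ⊆ F_1 ⊆ … where F_0 is trivial, let d ≥ 1, and let (V_j)_{j≥1} be ℝ^d-valued random vectors such that V_j is F_j-measurable and, for each coordinate r ∈ {1, …, d}, E[ [V_j]_r | F_{j−1} ] = 0 almost surely and E[ |[V_j]_r|^m | F_{j−1} ] ≤ (m!/2)·b^{m−2}·σ² almost surely for every integer m ≥ 2, with constants b > 0 and σ² > 0. Then for every c > 0 and every n ∈ ℕ, P( ‖ (1/n)·Σ_{j=1}^n V_j ‖ > c ) ≤ 2d · exp( − n·c² / (2(d·b·c + d²·σ²)) ), where ‖·‖ is the Euclidean norm on ℝ^d.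 -/
open MeasureTheory ProbabilityTheory
open scoped ENNReal

open MeasureTheory Real
open scoped ENNReal
set_option maxHeartbeats 1000000

lemma exp_abs_sub_eq (y : ℝ) :
    Real.exp |y| - 1 - |y| = ∑' k : ℕ, |y| ^ (k + 2) / ((k+2).factorial : ℝ) := by
  have hs : Summable (fun n : ℕ => |y| ^ n / (n.factorial : ℝ)) := Real.summable_pow_div_factorial _
  have h := Summable.sum_add_tsum_nat_add 2 hs
  have hexp : Real.exp |y| = ∑' n : ℕ, |y| ^ n / (n.factorial : ℝ) := by
    rw [Real.exp_eq_exp_ℝ, NormedSpace.exp_eq_tsum_div]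
  rw [hexp, ← h]
  simp [Finset.sum_range_succ]
  ring

lemma exp_le_key (y : ℝ) : Real.exp y ≤ 1 + y + (Real.exp |y| - 1 - |y|) := by
  rcases le_or_gt 0 y with h | h
  · rw [abs_of_nonneg h]; ring_nf; rfl
  · rw [abs_of_neg h]
    have h1 : Real.sinh y ≤ y := Real.sinh_le_self_iff.2 h.le
    have h2 : Real.sinh y = (Real.exp y - Real.exp (-y)) / 2 := Real.sinh_eq y
    linarith

lemma W_nonneg (y : ℝ) : 0 ≤ Real.exp |y| - 1 - |y| := by
  have := Real.add_one_le_exp |y|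
  linarith

section Core
variable {Ω : Type*} {m : MeasurableSpace Ω} {m0 : MeasurableSpace Ω} {P : Measure Ω}
  [IsProbabilityMeasure P]

/-- One-step bound with bounded nonneg weight. -/
lemma bern_onestep (hm : m ≤ m0) {X Y : Ω → ℝ}
    (hXm : Measurable[m0] X) (hXint : Integrable X P)
    (hmean : P[X | m] =ᵐ[P] 0)
    {b σ2 t : ℝ} (hb : 0 < b) (hσ : 0 < σ2) (ht : 0 < t) (htb : t * b < 1)
    (hintm : ∀ k : ℕ, 2 ≤ k → Integrable (fun ω => |X ω| ^ k) P)
    (hmom : ∀ k : ℕ, 2 ≤ k → ∀ᵐ ω ∂P, (P[fun ω' => |X ω'| ^ k | m]) ω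
      ≤ (k.factorial : ℝ) / 2 * b ^ (k - 2) * σ2)
    (hYm : StronglyMeasurable[m] Y) (hY0 : ∀ ω, 0 ≤ Y ω) {C : ℝ} (hYb : ∀ ω, Y ω ≤ C) :
    Integrable (fun ω => Y ω * Real.exp (t * X ω)) P ∧
      ∫ ω, Y ω * Real.exp (t * X ω) ∂P
        ≤ (1 + t ^ 2 * σ2 / (2 * (1 - t * b))) * ∫ ω, Y ω ∂P := by
  haveI : SigmaFinite (P.trim hm) := by
    infer_instance
  set W : Ω → ℝ := fun ω => Real.exp |t * X ω| - 1 - |t * X ω| with hWdef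
  set I : ℝ := ∫ ω, Y ω ∂P with hIdef
  have hYm0 : AEStronglyMeasurable Y P := (hYm.mono hm).aestronglyMeasurable
  have hYbdd : ∀ ω, ‖Y ω‖ ≤ max C 0 := by
    intro ω; rw [Real.norm_eq_abs, abs_of_nonneg (hY0 ω)]
    exact le_max_of_le_left (hYb ω)
  have hYint : Integrable Y P := by
    refine Integrable.mono' (integrable_const (max C 0)) hYm0 ?_
    exact Filter.Eventually.of_forall hYbdd
  have hInonneg : 0 ≤ I := integral_nonneg hY0
  -- per-k moment bound for the weighted integral
  have hk : ∀ k : ℕ, 2 ≤ k →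
      Integrable (fun ω => Y ω * |X ω| ^ k) P ∧
      ∫ ω, Y ω * |X ω| ^ k ∂P ≤ ((k.factorial : ℝ) / 2 * b ^ (k - 2) * σ2) * I := by
    intro k hk2
    have hg : Integrable (fun ω => |X ω| ^ k) P := hintm k hk2
    have hfg : Integrable (fun ω => Y ω * |X ω| ^ k) P :=
      hg.bdd_mul hYm0 (Filter.Eventually.of_forall hYbdd)
    refine ⟨hfg, ?_⟩
    have hpull := condExp_mul_of_stronglyMeasurable_left (μ := P) (m := m) hYm hfg hg
    have h1 : ∫ ω, Y ω * |X ω| ^ k ∂P = ∫ ω, (P[fun ω' => Y ω' * |X ω'| ^ k | m]) ω ∂P :=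
      (integral_condExp (μ := P) hm (f := fun ω => Y ω * |X ω| ^ k)).symm
    have h2 : ∫ ω, (P[fun ω' => Y ω' * |X ω'| ^ k | m]) ω ∂P
        = ∫ ω, Y ω * (P[fun ω' => |X ω'| ^ k | m]) ω ∂P :=
      integral_congr_ae hpull
    rw [h1, h2]
    have hcondint : Integrable (fun ω => Y ω * (P[fun ω' => |X ω'| ^ k | m]) ω) P :=
      (integrable_condExp (f := fun ω' => |X ω'| ^ k) (m := m) (μ := P)).bdd_mul hYm0 (Filter.Eventually.of_forall hYbdd)
    calc ∫ ω, Y ω * (P[fun ω' => |X ω'| ^ k | m]) ω ∂P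
        ≤ ∫ ω, Y ω * ((k.factorial : ℝ) / 2 * b ^ (k - 2) * σ2) ∂P := by
          refine integral_mono_ae hcondint (hYint.mul_const _) ?_
          filter_upwards [hmom k hk2] with ω hω
          exact mul_le_mul_of_nonneg_left hω (hY0 ω)
      _ = ((k.factorial : ℝ) / 2 * b ^ (k - 2) * σ2) * I := by
          rw [integral_mul_const]; ring
  -- notation
  set κ : ℝ := t ^ 2 * σ2 / (2 * (1 - t * b)) with hκdef
  have htb0 : (0:ℝ) ≤ t * b := le_of_lt (mul_pos ht hb)
  have h1tb : (0:ℝ) < 1 - t * b := by linarith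
  have hκ0 : 0 ≤ κ := by positivity
  have hgeom : ∑' (k : ℕ), (t*b)^k = (1 - t*b)⁻¹ := tsum_geometric_of_lt_one htb0 htb
  have hsgeom : Summable (fun k : ℕ => (t*b)^k) := summable_geometric_of_lt_one htb0 htb
  have habs : ∀ ω, |t * X ω| = t * |X ω| := fun ω => by
    rw [abs_mul, abs_of_pos ht]
  set f : ℕ → Ω → ℝ := fun k ω => Y ω * (|t * X ω| ^ (k + 2) / (((k+2).factorial : ℝ))) with hfdef
  have hf_nonneg : ∀ k ω, 0 ≤ f k ω := fun k ω =>
    mul_nonneg (hY0 ω) (by positivity)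
  have hf_eq : ∀ k, f k = fun ω =>
      (t ^ (k+2) / ((k+2).factorial : ℝ)) * (Y ω * |X ω| ^ (k+2)) := by
    intro k; funext ω; rw [hfdef]; simp only
    rw [habs ω, mul_pow]; ring
  have hfint : ∀ k, Integrable (f k) P := by
    intro k; rw [hf_eq k]
    exact ((hk (k+2) (by omega)).1.const_mul _)
  have hfbound : ∀ k, ∫ ω, f k ω ∂P ≤ (t ^ 2 * σ2 / 2) * (t*b)^k * I := by
    intro k
    rw [hf_eq k, integral_const_mul]
    have h1 : (0:ℝ) ≤ t ^ (k+2) / ((k+2).factorial : ℝ) := by positivity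
    calc (t ^ (k+2) / ((k+2).factorial : ℝ)) * ∫ ω, Y ω * |X ω| ^ (k+2) ∂P
        ≤ (t ^ (k+2) / ((k+2).factorial : ℝ)) *
          ((((k+2).factorial : ℝ) / 2 * b ^ ((k+2) - 2) * σ2) * I) :=
          mul_le_mul_of_nonneg_left (hk (k+2) (by omega)).2 h1
      _ = (t ^ 2 * σ2 / 2) * (t*b)^k * I := by
          have hfac : (((k+2).factorial : ℝ)) ≠ 0 := Nat.cast_ne_zero.2 (Nat.factorial_ne_zero _)
          have : (k+2) - 2 = k := by omega
          rw [this]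
          field_simp
          ring
  have hWser : ∀ ω, W ω = ∑' k : ℕ, |t * X ω| ^ (k + 2) / (((k+2).factorial : ℝ)) := fun ω =>
    exp_abs_sub_eq (t * X ω)
  have hssum : ∀ ω, Summable (fun k : ℕ => |t * X ω| ^ (k + 2) / (((k+2).factorial : ℝ))) := by
    intro ω
    exact (summable_nat_add_iff 2).2 (Real.summable_pow_div_factorial _)
  have hYWpt : ∀ ω, Y ω * W ω = ∑' k, f k ω := by
    intro ω; rw [hWser ω, tsum_mul_left]
  have hfsum : ∀ ω, Summable (fun k => f k ω) := fun ω => (hssum ω).mul_left _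
  -- measurability
  have hYmeas : Measurable[m0] Y := (hYm.mono hm).measurable
  have htX : Measurable[m0] fun ω => t * X ω := hXm.const_mul t
  have htXa : Measurable[m0] fun ω => |t * X ω| := htX.abs
  have htXe : Measurable[m0] fun ω => Real.exp |t * X ω| := htXa.exp
  have hWmeas : Measurable[m0] W := by
    rw [hWdef]
    exact (htXe.sub measurable_const).sub htXa
  have hfmeas : ∀ k, Measurable[m0] (f k) := by
    intro k
    have h1 : Measurable[m0] fun ω => |t * X ω| ^ (k + 2) := htXa.pow_const _
    have h2 : Measurable[m0] fun ω => |t * X ω| ^ (k + 2) / ((k+2).factorial : ℝ) :=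
      h1.div_const _
    exact hYmeas.mul h2
  -- lintegral bound on Y * W
  have hL : ∫⁻ ω, ENNReal.ofReal (Y ω * W ω) ∂P ≤ ENNReal.ofReal (κ * I) := by
    have hstep : ∫⁻ ω, ENNReal.ofReal (Y ω * W ω) ∂P
        = ∑' k, ∫⁻ ω, ENNReal.ofReal (f k ω) ∂P := by
      rw [← lintegral_tsum (μ := P) (f := fun k ω => ENNReal.ofReal (f k ω))
        (fun k => ((hfmeas k).ennreal_ofReal).aemeasurable)]
      refine lintegral_congr fun ω => ?_
      rw [hYWpt ω, ENNReal.ofReal_tsum_of_nonneg (fun k => hf_nonneg k ω) (hfsum ω)]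
    rw [hstep]
    calc ∑' k, ∫⁻ ω, ENNReal.ofReal (f k ω) ∂P
        ≤ ∑' k, ENNReal.ofReal ((t ^ 2 * σ2 / 2) * (t*b)^k * I) := by
          refine ENNReal.tsum_le_tsum fun k => ?_
          rw [← ofReal_integral_eq_lintegral_ofReal (hfint k)
            (Filter.Eventually.of_forall (hf_nonneg k))]
          exact ENNReal.ofReal_le_ofReal (hfbound k)
      _ = ENNReal.ofReal (∑' k, (t ^ 2 * σ2 / 2) * (t*b)^k * I) := by
          refine (ENNReal.ofReal_tsum_of_nonneg (fun k => ?_) ?_).symm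
          · positivity
          · exact (hsgeom.mul_left _).mul_right _
      _ = ENNReal.ofReal (κ * I) := by
          congr 1
          have : ∀ k : ℕ, (t ^ 2 * σ2 / 2) * (t*b)^k * I
              = ((t ^ 2 * σ2 / 2) * I) * (t*b)^k := fun k => by ring
          simp_rw [this]
          rw [tsum_mul_left, hgeom, hκdef]
          field_simp
  -- integrability of Y * W
  have hYW_nonneg : ∀ ω, 0 ≤ Y ω * W ω := fun ω => mul_nonneg (hY0 ω) (W_nonneg _)
  have hYWmeas : AEStronglyMeasurable (fun ω => Y ω * W ω) P :=
    (hYmeas.mul hWmeas).aestronglyMeasurable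
  have hYWint : Integrable (fun ω => Y ω * W ω) P := by
    refine ⟨hYWmeas, ?_⟩
    rw [hasFiniteIntegral_iff_ofReal (Filter.Eventually.of_forall hYW_nonneg)]
    exact lt_of_le_of_lt hL ENNReal.ofReal_lt_top
  have hYWle : ∫ ω, Y ω * W ω ∂P ≤ κ * I := by
    rw [integral_eq_lintegral_of_nonneg_ae (Filter.Eventually.of_forall hYW_nonneg) hYWmeas]
    refine ENNReal.toReal_le_of_le_ofReal (by positivity) hL
  -- integrability of Y * X and its zero mean
  have hYX : Integrable (fun ω => Y ω * X ω) P := hXint.bdd_mul hYm0 (Filter.Eventually.of_forall hYbdd)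
  have hYXzero : ∫ ω, Y ω * X ω ∂P = 0 := by
    have hpull := condExp_mul_of_stronglyMeasurable_left (μ := P) (m := m) hYm hYX hXint
    have hzero : (P[Y * X | m]) =ᵐ[P] (0 : Ω → ℝ) := by
      filter_upwards [hpull, hmean] with ω h1 h2
      simp only [Pi.mul_apply] at h1 ⊢
      simp only [Pi.zero_apply] at h2 ⊢
      rw [h1, h2, mul_zero]
    calc ∫ ω, Y ω * X ω ∂P = ∫ ω, (Y * X) ω ∂P := rfl
      _ = ∫ ω, (P[Y * X | m]) ω ∂P := (integral_condExp (μ := P) hm (f := Y * X)).symm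
      _ = 0 := by rw [integral_congr_ae hzero]; simp
  -- integrability of Y * exp(t X)
  have hexp_meas : AEStronglyMeasurable (fun ω => Y ω * Real.exp (t * X ω)) P :=
    (hYmeas.mul (Real.measurable_exp.comp (hXm.const_mul t))).aestronglyMeasurable
  have habsX_int : Integrable (fun ω => |t * X ω|) P := (hXint.const_mul t).abs
  have hdom_int : Integrable (fun ω => Y ω + Y ω * |t * X ω| + Y ω * W ω) P :=
    (hYint.add (habsX_int.bdd_mul hYm0 (Filter.Eventually.of_forall hYbdd))).add hYWint
  have hexp_int : Integrable (fun ω => Y ω * Real.exp (t * X ω)) P := by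
    refine Integrable.mono' hdom_int hexp_meas ?_
    refine Filter.Eventually.of_forall fun ω => ?_
    have h1 : Real.exp (t * X ω) ≤ 1 + |t * X ω| + W ω := by
      rw [hWdef]; simp only; linarith [Real.exp_le_exp.2 (le_abs_self (t * X ω))]
    rw [Real.norm_eq_abs, abs_of_nonneg (mul_nonneg (hY0 ω) (Real.exp_nonneg _))]
    calc Y ω * Real.exp (t * X ω) ≤ Y ω * (1 + |t * X ω| + W ω) :=
          mul_le_mul_of_nonneg_left h1 (hY0 ω)
      _ = Y ω + Y ω * |t * X ω| + Y ω * W ω := by ring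
  refine ⟨hexp_int, ?_⟩
  -- final computation
  have hlin_int : Integrable (fun ω => Y ω + t * (Y ω * X ω) + Y ω * W ω) P :=
    (hYint.add ((hYX).const_mul t)).add hYWint
  calc ∫ ω, Y ω * Real.exp (t * X ω) ∂P
      ≤ ∫ ω, (Y ω + t * (Y ω * X ω) + Y ω * W ω) ∂P := by
        refine integral_mono hexp_int hlin_int fun ω => ?_
        have h1 := exp_le_key (t * X ω)
        have := mul_le_mul_of_nonneg_left h1 (hY0 ω)
        calc Y ω * Real.exp (t * X ω)
            ≤ Y ω * (1 + t * X ω + (Real.exp |t * X ω| - 1 - |t * X ω|)) := this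
          _ = Y ω + t * (Y ω * X ω) + Y ω * W ω := by rw [hWdef]; ring
    _ = I + t * ∫ ω, Y ω * X ω ∂P + ∫ ω, Y ω * W ω ∂P := by
        have hA : Integrable (fun ω => Y ω + t * (Y ω * X ω)) P := by
          exact hYint.add (hYX.const_mul t)
        rw [integral_add (f := fun ω => Y ω + t * (Y ω * X ω))
          (g := fun ω => Y ω * W ω) hA hYWint,
          integral_add (f := fun ω => Y ω) (g := fun ω => t * (Y ω * X ω)) hYint
            (hYX.const_mul t), integral_const_mul]
    _ ≤ I + 0 + κ * I := by rw [hYXzero]; simp only [mul_zero]; linarith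
    _ = (1 + κ) * I := by ring

/-- One-step bound with integrable nonneg weight. -/
lemma bern_onestep' (hm : m ≤ m0) {X Y : Ω → ℝ}
    (hXm : Measurable[m0] X) (hXint : Integrable X P)
    (hmean : P[X | m] =ᵐ[P] 0)
    {b σ2 t : ℝ} (hb : 0 < b) (hσ : 0 < σ2) (ht : 0 < t) (htb : t * b < 1)
    (hintm : ∀ k : ℕ, 2 ≤ k → Integrable (fun ω => |X ω| ^ k) P)
    (hmom : ∀ k : ℕ, 2 ≤ k → ∀ᵐ ω ∂P, (P[fun ω' => |X ω'| ^ k | m]) ω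
      ≤ (k.factorial : ℝ) / 2 * b ^ (k - 2) * σ2)
    (hYm : StronglyMeasurable[m] Y) (hY0 : ∀ ω, 0 ≤ Y ω) (hYint : Integrable Y P) :
    Integrable (fun ω => Y ω * Real.exp (t * X ω)) P ∧
      ∫ ω, Y ω * Real.exp (t * X ω) ∂P
        ≤ (1 + t ^ 2 * σ2 / (2 * (1 - t * b))) * ∫ ω, Y ω ∂P := by
  set K : ℝ := 1 + t ^ 2 * σ2 / (2 * (1 - t * b)) with hKdef
  have h1tb : (0:ℝ) < 1 - t * b := by nlinarith [mul_pos ht hb]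
  have hK0 : 0 ≤ K := by positivity
  set I : ℝ := ∫ ω, Y ω ∂P with hIdef
  have hInonneg : 0 ≤ I := integral_nonneg hY0
  have hYmeas : Measurable[m0] Y := (hYm.mono hm).measurable
  -- truncations
  set Yt : ℕ → Ω → ℝ := fun i ω => min (Y ω) i with hYtdef
  have hYtm : ∀ i, StronglyMeasurable[m] (Yt i) := fun i =>
    (hYm.measurable.min measurable_const).stronglyMeasurable
  have hYt0 : ∀ i ω, 0 ≤ Yt i ω := fun i ω => le_min (hY0 ω) (Nat.cast_nonneg i)
  have hYtb : ∀ i ω, Yt i ω ≤ (i : ℝ) := fun i ω => min_le_right _ _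
  have hYtle : ∀ i ω, Yt i ω ≤ Y ω := fun i ω => min_le_left _ _
  have hYtint : ∀ i, Integrable (Yt i) P := by
    intro i
    refine Integrable.mono' hYint ((hYtm i).mono hm).aestronglyMeasurable ?_
    exact Filter.Eventually.of_forall fun ω => by
      rw [Real.norm_eq_abs, abs_of_nonneg (hYt0 i ω)]; exact hYtle i ω
  have hYtI : ∀ i, ∫ ω, Yt i ω ∂P ≤ I := fun i =>
    integral_mono (hYtint i) hYint (fun ω => hYtle i ω)
  have hstep := fun i : ℕ => bern_onestep hm hXm hXint hmean hb hσ ht htb hintm hmom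
    (hYtm i) (hYt0 i) (hYtb i)
  -- lintegral of the full product
  have hexp_meas : Measurable[m0] fun ω => Real.exp (t * X ω) := (hXm.const_mul t).exp
  have hprodmeas : ∀ i, Measurable[m0] fun ω => ENNReal.ofReal (Yt i ω * Real.exp (t * X ω)) :=
    fun i => ((((hYtm i).mono hm).measurable).mul hexp_meas).ennreal_ofReal
  have hmono : Monotone fun i : ℕ => fun ω => ENNReal.ofReal (Yt i ω * Real.exp (t * X ω)) := by
    intro i j hij
    intro ω
    refine ENNReal.ofReal_le_ofReal (mul_le_mul_of_nonneg_right ?_ (Real.exp_nonneg _))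
    exact min_le_min le_rfl (Nat.cast_le.2 hij)
  have hsup : ∀ ω, (⨆ i : ℕ, ENNReal.ofReal (Yt i ω * Real.exp (t * X ω)))
      = ENNReal.ofReal (Y ω * Real.exp (t * X ω)) := by
    intro ω
    refine le_antisymm (iSup_le fun i => ENNReal.ofReal_le_ofReal
      (mul_le_mul_of_nonneg_right (hYtle i ω) (Real.exp_nonneg _))) ?_
    have : Yt ⌈Y ω⌉₊ ω = Y ω := min_eq_left (Nat.le_ceil _)
    refine le_trans (le_of_eq ?_) (le_iSup _ ⌈Y ω⌉₊)
    rw [this]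
  have hL : ∫⁻ ω, ENNReal.ofReal (Y ω * Real.exp (t * X ω)) ∂P ≤ ENNReal.ofReal (K * I) := by
    have : ∫⁻ ω, ENNReal.ofReal (Y ω * Real.exp (t * X ω)) ∂P
        = ⨆ i, ∫⁻ ω, ENNReal.ofReal (Yt i ω * Real.exp (t * X ω)) ∂P := by
      rw [← lintegral_iSup (fun i => hprodmeas i) hmono]
      exact lintegral_congr fun ω => (hsup ω).symm
    rw [this]
    refine iSup_le fun i => ?_
    rw [← ofReal_integral_eq_lintegral_ofReal (hstep i).1 (Filter.Eventually.of_forall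
      fun ω => mul_nonneg (hYt0 i ω) (Real.exp_nonneg _))]
    refine ENNReal.ofReal_le_ofReal ?_
    exact le_trans (hstep i).2 (mul_le_mul_of_nonneg_left (hYtI i) hK0)
  have hprodmeas' : AEStronglyMeasurable (fun ω => Y ω * Real.exp (t * X ω)) P :=
    (hYmeas.mul hexp_meas).aestronglyMeasurable
  have hnn : ∀ ω, 0 ≤ Y ω * Real.exp (t * X ω) := fun ω =>
    mul_nonneg (hY0 ω) (Real.exp_nonneg _)
  have hint : Integrable (fun ω => Y ω * Real.exp (t * X ω)) P := by
    refine ⟨hprodmeas', ?_⟩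
    rw [hasFiniteIntegral_iff_ofReal (Filter.Eventually.of_forall hnn)]
    exact lt_of_le_of_lt hL ENNReal.ofReal_lt_top
  refine ⟨hint, ?_⟩
  rw [integral_eq_lintegral_of_nonneg_ae (Filter.Eventually.of_forall hnn) hprodmeas']
  exact ENNReal.toReal_le_of_le_ofReal (by positivity) hL

/-- MGF bound for the martingale sum. -/
lemma bern_mgf {m0 : MeasurableSpace Ω} {P : Measure Ω} [IsProbabilityMeasure P]
    (𝓕 : Filtration ℕ m0) (X : ℕ → Ω → ℝ)
    (hadapted : ∀ j, 1 ≤ j → StronglyMeasurable[𝓕 j] (X j))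
    (hint : ∀ j, 1 ≤ j → Integrable (X j) P)
    (hmean : ∀ j, 1 ≤ j → P[X j | 𝓕 (j-1)] =ᵐ[P] 0)
    (hintm : ∀ j, 1 ≤ j → ∀ k : ℕ, 2 ≤ k → Integrable (fun ω => |X j ω| ^ k) P)
    {b σ2 t : ℝ}
    (hmom : ∀ j, 1 ≤ j → ∀ k : ℕ, 2 ≤ k → ∀ᵐ ω ∂P, (P[fun ω' => |X j ω'| ^ k | 𝓕 (j-1)]) ω
      ≤ (k.factorial : ℝ) / 2 * b ^ (k - 2) * σ2)
    (hb : 0 < b) (hσ : 0 < σ2) (ht : 0 < t) (htb : t * b < 1) (n : ℕ) :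
    Integrable (fun ω => Real.exp (t * ∑ j ∈ Finset.Icc 1 n, X j ω)) P ∧
      ∫ ω, Real.exp (t * ∑ j ∈ Finset.Icc 1 n, X j ω) ∂P
        ≤ (1 + t ^ 2 * σ2 / (2 * (1 - t * b))) ^ n := by
  induction n with
  | zero =>
      have : Finset.Icc 1 0 = (∅ : Finset ℕ) := Finset.Icc_eq_empty (by omega)
      simp [this]
  | succ n ih =>
      have h1tb : (0:ℝ) < 1 - t * b := by nlinarith [mul_pos ht hb]
      set K : ℝ := 1 + t ^ 2 * σ2 / (2 * (1 - t * b)) with hKdef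
      have hK0 : 0 ≤ K := by positivity
      have hnot : (n+1) ∉ Finset.Icc 1 n := by simp
      have hIcc : Finset.Icc 1 (n+1) = insert (n+1) (Finset.Icc 1 n) := by
        ext x; simp only [Finset.mem_Icc, Finset.mem_insert]; omega
      have hS : StronglyMeasurable[𝓕 n] fun ω => ∑ j ∈ Finset.Icc 1 n, X j ω := by
        refine Finset.stronglyMeasurable_fun_sum _ fun j hj => ?_
        rw [Finset.mem_Icc] at hj
        exact (hadapted j hj.1).mono (𝓕.mono hj.2)
      have hY : StronglyMeasurable[𝓕 n] fun ω => Real.exp (t * ∑ j ∈ Finset.Icc 1 n, X j ω) :=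
        Real.continuous_exp.comp_stronglyMeasurable (hS.const_mul t)
      have hXm : Measurable[m0] (X (n+1)) :=
        ((hadapted (n+1) (by omega)).mono (𝓕.le (n+1))).measurable
      have hmean' : P[X (n+1) | 𝓕 n] =ᵐ[P] 0 := by
        have := hmean (n+1) (by omega); simpa using this
      have hmom' : ∀ k : ℕ, 2 ≤ k → ∀ᵐ ω ∂P, (P[fun ω' => |X (n+1) ω'| ^ k | 𝓕 n]) ω
          ≤ (k.factorial : ℝ) / 2 * b ^ (k - 2) * σ2 := by
        intro k hk
        have := hmom (n+1) (by omega) k hk; simpa using this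
      have hres := bern_onestep' (P := P) (𝓕.le n) hXm (hint (n+1) (by omega)) hmean'
        hb hσ ht htb (hintm (n+1) (by omega)) hmom' hY
        (fun ω => Real.exp_nonneg _) ih.1
      have heq : (fun ω => Real.exp (t * ∑ j ∈ Finset.Icc 1 (n+1), X j ω))
          = fun ω => Real.exp (t * ∑ j ∈ Finset.Icc 1 n, X j ω) *
              Real.exp (t * X (n+1) ω) := by
        funext ω
        rw [hIcc, Finset.sum_insert hnot, ← Real.exp_add]
        ring_nf
      rw [heq]
      refine ⟨hres.1, ?_⟩
      calc ∫ ω, Real.exp (t * ∑ j ∈ Finset.Icc 1 n, X j ω) * Real.exp (t * X (n+1) ω) ∂P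
          ≤ K * ∫ ω, Real.exp (t * ∑ j ∈ Finset.Icc 1 n, X j ω) ∂P := hres.2
        _ ≤ K * K ^ n := mul_le_mul_of_nonneg_left ih.2 hK0
        _ = K ^ (n+1) := by rw [pow_succ]; ring

/-- Tail bound for the martingale sum. -/
lemma bern_tail {m0 : MeasurableSpace Ω} {P : Measure Ω} [IsProbabilityMeasure P]
    (𝓕 : Filtration ℕ m0) (X : ℕ → Ω → ℝ)
    (hadapted : ∀ j, 1 ≤ j → StronglyMeasurable[𝓕 j] (X j))
    (hint : ∀ j, 1 ≤ j → Integrable (X j) P)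
    (hmean : ∀ j, 1 ≤ j → P[X j | 𝓕 (j-1)] =ᵐ[P] 0)
    (hintm : ∀ j, 1 ≤ j → ∀ k : ℕ, 2 ≤ k → Integrable (fun ω => |X j ω| ^ k) P)
    {b σ2 t : ℝ}
    (hmom : ∀ j, 1 ≤ j → ∀ k : ℕ, 2 ≤ k → ∀ᵐ ω ∂P, (P[fun ω' => |X j ω'| ^ k | 𝓕 (j-1)]) ω
      ≤ (k.factorial : ℝ) / 2 * b ^ (k - 2) * σ2)
    (hb : 0 < b) (hσ : 0 < σ2) (ht : 0 < t) (htb : t * b < 1) (a : ℝ) (n : ℕ) :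
    P {ω | a < ∑ j ∈ Finset.Icc 1 n, X j ω}
      ≤ ENNReal.ofReal (Real.exp (n * (t ^ 2 * σ2 / (2 * (1 - t * b))) - t * a)) := by
  have h1tb : (0:ℝ) < 1 - t * b := by nlinarith [mul_pos ht hb]
  set κ : ℝ := t ^ 2 * σ2 / (2 * (1 - t * b)) with hκdef
  have hκ0 : 0 ≤ κ := by positivity
  set S : Ω → ℝ := fun ω => ∑ j ∈ Finset.Icc 1 n, X j ω with hSdef
  have hSmeas : Measurable[m0] S := by
    rw [hSdef]
    refine Finset.measurable_sum _ fun j hj => ?_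
    rw [Finset.mem_Icc] at hj
    exact ((hadapted j hj.1).mono (𝓕.le j)).measurable
  have hmgf := bern_mgf 𝓕 X hadapted hint hmean hintm hmom hb hσ ht htb n
  have hmgf2 : ∫ ω, Real.exp (t * S ω) ∂P ≤ Real.exp (n * κ) := by
    refine le_trans hmgf.2 ?_
    have h1 : (1 + κ) ^ n ≤ Real.exp κ ^ n := by
      refine pow_le_pow_left₀ (by positivity) ?_ n
      have := Real.add_one_le_exp κ; linarith
    refine le_trans h1 (le_of_eq ?_)
    rw [← Real.exp_nat_mul]
  have hLle : ∫⁻ ω, ENNReal.ofReal (Real.exp (t * S ω)) ∂P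
      ≤ ENNReal.ofReal (Real.exp (n * κ)) := by
    rw [← ofReal_integral_eq_lintegral_ofReal hmgf.1
      (Filter.Eventually.of_forall fun ω => Real.exp_nonneg _)]
    exact ENNReal.ofReal_le_ofReal hmgf2
  have hsub : {ω | a < S ω} ⊆
      {ω | ENNReal.ofReal (Real.exp (t * a)) ≤ ENNReal.ofReal (Real.exp (t * S ω))} := by
    intro ω hω
    simp only [Set.mem_setOf_eq] at hω ⊢
    refine ENNReal.ofReal_le_ofReal (Real.exp_le_exp.2 ?_)
    exact mul_le_mul_of_nonneg_left hω.le (le_of_lt ht)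
  calc P {ω | a < S ω}
      ≤ P {ω | ENNReal.ofReal (Real.exp (t * a)) ≤ ENNReal.ofReal (Real.exp (t * S ω))} :=
        measure_mono hsub
    _ ≤ (∫⁻ ω, ENNReal.ofReal (Real.exp (t * S ω)) ∂P) / ENNReal.ofReal (Real.exp (t * a)) := by
        refine meas_ge_le_lintegral_div ?_ ?_ ?_
        · exact (((hSmeas.const_mul t).exp).ennreal_ofReal).aemeasurable
        · simp [ENNReal.ofReal_eq_zero, Real.exp_pos, not_le, (Real.exp_pos _)]
        · exact ENNReal.ofReal_ne_top
    _ ≤ ENNReal.ofReal (Real.exp (n * κ)) / ENNReal.ofReal (Real.exp (t * a)) := by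
        exact ENNReal.div_le_div_right hLle _
    _ = ENNReal.ofReal (Real.exp (↑n * κ - t * a)) := by
        rw [← ENNReal.ofReal_div_of_pos (Real.exp_pos _), ← Real.exp_sub]
end Core

open MeasureTheory ProbabilityTheory
open scoped ENNReal


/-- **Vector Bernstein bound for the norm of a martingale-difference average.**
If each coordinate of the `ℝ^d`-valued sequence `(V j)` is a martingale
difference satisfying the conditional Bernstein moment condition with
parameters `(b, σ²)`, then
`P(‖(1/n) ∑_{j=1}^n V j‖ > c) ≤ 2d exp(−n c²/(2(d b c + d² σ²)))`. -/
theorem stmt_8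
    {Ω : Type*} {m0 : MeasurableSpace Ω} (P : Measure Ω) [IsProbabilityMeasure P]
    (𝓕 : Filtration ℕ m0) (h0 : 𝓕 0 = ⊥)
    (d : ℕ) (hd : 1 ≤ d)
    (V : ℕ → Ω → EuclideanSpace ℝ (Fin d))
    (b σ : ℝ) (hb : 0 < b) (hσ : 0 < σ ^ 2)
    (hadapted : ∀ j, 1 ≤ j → StronglyMeasurable[𝓕 j] (V j))
    (hint : ∀ j, 1 ≤ j → ∀ r : Fin d, Integrable (fun ω => V j ω r) P)
    (hmean : ∀ j, 1 ≤ j → ∀ r : Fin d, P[fun ω => V j ω r | 𝓕 (j - 1)] =ᵐ[P] 0)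
    (hintm : ∀ j, 1 ≤ j → ∀ r : Fin d, ∀ m : ℕ, 2 ≤ m →
      Integrable (fun ω => |V j ω r| ^ m) P)
    (hmom : ∀ j, 1 ≤ j → ∀ r : Fin d, ∀ m : ℕ, 2 ≤ m →
      ∀ᵐ ω ∂P, (P[fun ω' => |V j ω' r| ^ m | 𝓕 (j - 1)]) ω
        ≤ (m.factorial : ℝ) / 2 * b ^ (m - 2) * σ ^ 2) :
    ∀ c : ℝ, 0 < c → ∀ n : ℕ,
      P {ω | c < ‖(n : ℝ)⁻¹ • ∑ j ∈ Finset.Icc 1 n, V j ω‖}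
        ≤ ENNReal.ofReal (2 * d * Real.exp (-((n : ℝ) * c ^ 2
            / (2 * (d * b * c + d ^ 2 * σ ^ 2))))) := by
  intro c hc n
  rcases Nat.eq_zero_or_pos n with hn | hn
  · subst hn
    have hempty : {ω | c < ‖((0:ℕ) : ℝ)⁻¹ • ∑ j ∈ Finset.Icc 1 0, V j ω‖} = (∅ : Set Ω) := by
      ext ω
      simp only [Set.mem_setOf_eq, Set.mem_empty_iff_false, iff_false, not_lt]
      have : Finset.Icc 1 0 = (∅ : Finset ℕ) := Finset.Icc_eq_empty (by omega)
      rw [this]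
      simp [hc.le]
    rw [hempty, measure_empty]
    exact zero_le
  -- setup
  have hn1 : 1 ≤ n := hn
  have hd0 : (0:ℝ) < d := by exact_mod_cast Nat.lt_of_lt_of_le Nat.zero_lt_one hd
  set u : ℝ := c / d with hudef
  have hu : 0 < u := div_pos hc hd0
  have hden : 0 < b * u + σ ^ 2 := by positivity
  set t : ℝ := u / (b * u + σ ^ 2) with htdef
  have ht : 0 < t := div_pos hu hden
  have htb : t * b < 1 := by
    rw [htdef, div_mul_eq_mul_div, div_lt_one hden]
    nlinarith
  have h1tb : (0:ℝ) < 1 - t * b := by linarith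
  set a : ℝ := n * u with hadef
  set κ : ℝ := t ^ 2 * σ ^ 2 / (2 * (1 - t * b)) with hκdef
  set e : ℝ := Real.exp (-((n : ℝ) * c ^ 2 / (2 * (d * b * c + d ^ 2 * σ ^ 2)))) with hedef
  have hd0' : (d:ℝ) ≠ 0 := ne_of_gt hd0
  have hden' : b * u + σ ^ 2 ≠ 0 := ne_of_gt hden
  have hσ2' : σ ^ 2 ≠ 0 := ne_of_gt hσ
  have h1 : 1 - t * b = σ ^ 2 / (b * u + σ ^ 2) := by
    rw [htdef]; field_simp; ring
  have h3 : t * (b * u + σ ^ 2) = u := by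
    rw [htdef]; field_simp
  have htu : t * u = c ^ 2 / (d * b * c + d ^ 2 * σ ^ 2) := by
    have hbig : (d:ℝ) * b * c + d ^ 2 * σ ^ 2 ≠ 0 := by positivity
    rw [htdef, hudef]
    field_simp
  have hκ' : κ = u ^ 2 / (2 * (b * u + σ ^ 2)) := by
    rw [hκdef, htdef]
    rw [show 1 - u / (b * u + σ ^ 2) * b = σ ^ 2 / (b * u + σ ^ 2) by field_simp; ring]
    field_simp
    ring
    exact mul_inv_cancel₀ (by rintro rfl; simp at hσ2')
  have hbig : (0:ℝ) < d * b * c + d ^ 2 * σ ^ 2 := by positivity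
  have hbig' : (d:ℝ) * b * c + d ^ 2 * σ ^ 2 ≠ 0 := ne_of_gt hbig
  have hexp_eq : (n : ℝ) * κ - t * a = -((n : ℝ) * c ^ 2 / (2 * (d * b * c + d ^ 2 * σ ^ 2))) := by
    have h2 : (n : ℝ) * κ - t * a = -((n : ℝ) * (u * u) / (2 * (b * u + σ ^ 2))) := by
      rw [hκ', hadef, htdef]
      field_simp
      ring
    rw [h2, hudef]
    field_simp
  -- coordinate tail bounds
  have hadco : ∀ j, 1 ≤ j → ∀ r : Fin d, StronglyMeasurable[𝓕 j] fun ω => V j ω r := by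
    intro j hj r
    have hco : Continuous fun v : EuclideanSpace ℝ (Fin d) => v r :=
      (EuclideanSpace.proj r : EuclideanSpace ℝ (Fin d) →L[ℝ] ℝ).continuous
    exact hco.comp_stronglyMeasurable (hadapted j hj)
  have hA : ∀ r : Fin d, P {ω | a < ∑ j ∈ Finset.Icc 1 n, V j ω r}
      ≤ ENNReal.ofReal e := by
    intro r
    have := bern_tail (P := P) 𝓕 (fun j ω => V j ω r)
      (fun j hj => hadco j hj r) (fun j hj => hint j hj r) (fun j hj => hmean j hj r)
      (fun j hj => hintm j hj r) (fun j hj => hmom j hj r) hb hσ ht htb a n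
    rw [hedef, ← hexp_eq]
    exact this
  have hB : ∀ r : Fin d, P {ω | a < ∑ j ∈ Finset.Icc 1 n, -(V j ω r)}
      ≤ ENNReal.ofReal e := by
    intro r
    have hmean' : ∀ j, 1 ≤ j → P[fun ω => -(V j ω r) | 𝓕 (j-1)] =ᵐ[P] 0 := by
      intro j hj
      have h1 : P[fun ω => -(V j ω r) | 𝓕 (j-1)] =ᵐ[P] -P[fun ω => V j ω r | 𝓕 (j-1)] :=
        condExp_neg _ _
      refine h1.trans ?_
      filter_upwards [hmean j hj r] with ω hω
      simp only [Pi.neg_apply, hω, Pi.zero_apply, neg_zero]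
    have := bern_tail (P := P) 𝓕 (fun j ω => -(V j ω r))
      (fun j hj => (hadco j hj r).neg) (fun j hj => (hint j hj r).neg) hmean'
      (fun j hj k hk => by simpa [abs_neg] using hintm j hj r k hk)
      (fun j hj k hk => by simpa [abs_neg] using hmom j hj r k hk) hb hσ ht htb a n
    rw [hedef, ← hexp_eq]
    exact this
  -- inclusion
  have hsub : {ω | c < ‖(n : ℝ)⁻¹ • ∑ j ∈ Finset.Icc 1 n, V j ω‖}
      ⊆ ⋃ r : Fin d, ({ω | a < ∑ j ∈ Finset.Icc 1 n, V j ω r}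
        ∪ {ω | a < ∑ j ∈ Finset.Icc 1 n, -(V j ω r)}) := by
    intro ω hω
    simp only [Set.mem_setOf_eq] at hω
    set v : EuclideanSpace ℝ (Fin d) := ∑ j ∈ Finset.Icc 1 n, V j ω with hvdef
    have hvr : ∀ r : Fin d, v r = ∑ j ∈ Finset.Icc 1 n, V j ω r := by
      intro r
      rw [hvdef]
      rw [WithLp.ofLp_sum]; exact Finset.sum_apply r (Finset.Icc 1 n) fun j => V j ω
    have hn0 : (0:ℝ) < n := by exact_mod_cast hn
    have hnorm : (n:ℝ) * c < ‖v‖ := by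
      have h1 : ‖(n : ℝ)⁻¹ • v‖ = (n:ℝ)⁻¹ * ‖v‖ := by
        rw [norm_smul, Real.norm_eq_abs, abs_of_nonneg (by positivity)]
      rw [h1] at hω
      calc (n:ℝ) * c < (n:ℝ) * ((n:ℝ)⁻¹ * ‖v‖) := by
            exact mul_lt_mul_of_pos_left hω hn0
        _ = ‖v‖ := by field_simp
    have hl1 : ‖v‖ ≤ ∑ r : Fin d, |v r| := by
      rw [EuclideanSpace.norm_eq]
      have h2 : ∑ r : Fin d, ‖v r‖ ^ 2 ≤ (∑ r : Fin d, |v r|) ^ 2 := by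
        simpa [Real.norm_eq_abs] using
          Finset.sum_sq_le_sq_sum_of_nonneg (s := Finset.univ)
            (f := fun r : Fin d => |v r|) (fun r _ => abs_nonneg (v r))
      calc Real.sqrt (∑ r : Fin d, ‖v r‖ ^ 2) ≤ Real.sqrt ((∑ r : Fin d, |v r|) ^ 2) :=
            Real.sqrt_le_sqrt h2
        _ = ∑ r : Fin d, |v r| := Real.sqrt_sq (Finset.sum_nonneg fun r _ => abs_nonneg _)
    have hex : ∃ r : Fin d, a < |v r| := by
      by_contra hcon
      push_neg at hcon
      have hsum : ∑ r : Fin d, |v r| ≤ d * a := by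
        calc ∑ r : Fin d, |v r| ≤ ∑ _r : Fin d, a := Finset.sum_le_sum fun r _ => hcon r
          _ = d * a := by rw [Finset.sum_const, Finset.card_univ, Fintype.card_fin,
                nsmul_eq_mul]
      have hda : (d:ℝ) * a = n * c := by
        rw [hadef, hudef]
        field_simp
        try ring
      linarith
    obtain ⟨r, hr⟩ := hex
    refine Set.mem_iUnion.2 ⟨r, ?_⟩
    rcases lt_abs.1 hr with h | h
    · exact Or.inl (by simpa [Set.mem_setOf_eq, hvr r] using h)
    · refine Or.inr ?_
      simp only [Set.mem_setOf_eq, Finset.sum_neg_distrib]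
      rw [← hvr r]
      linarith
  -- put everything together
  have he0 : 0 ≤ e := Real.exp_nonneg _
  calc P {ω | c < ‖(n : ℝ)⁻¹ • ∑ j ∈ Finset.Icc 1 n, V j ω‖}
      ≤ P (⋃ r : Fin d, ({ω | a < ∑ j ∈ Finset.Icc 1 n, V j ω r}
        ∪ {ω | a < ∑ j ∈ Finset.Icc 1 n, -(V j ω r)})) := measure_mono hsub
    _ ≤ ∑' r : Fin d, P ({ω | a < ∑ j ∈ Finset.Icc 1 n, V j ω r}
        ∪ {ω | a < ∑ j ∈ Finset.Icc 1 n, -(V j ω r)}) := measure_iUnion_le _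
    _ = ∑ r : Fin d, P ({ω | a < ∑ j ∈ Finset.Icc 1 n, V j ω r}
        ∪ {ω | a < ∑ j ∈ Finset.Icc 1 n, -(V j ω r)}) := tsum_fintype _
    _ ≤ ∑ _r : Fin d, (ENNReal.ofReal e + ENNReal.ofReal e) :=
        Finset.sum_le_sum fun r _ =>
          le_trans (measure_union_le _ _) (add_le_add (hA r) (hB r))
    _ = (d : ℝ≥0∞) * (ENNReal.ofReal e + ENNReal.ofReal e) := by
        rw [Finset.sum_const, Finset.card_univ, Fintype.card_fin, nsmul_eq_mul]
    _ = ENNReal.ofReal (2 * d * e) := by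
        rw [← ENNReal.ofReal_add he0 he0, ← ENNReal.ofReal_natCast d,
          ← ENNReal.ofReal_mul (by positivity)]
        congr 1
        ring
end

section
/- Let γ₁ > 1 > γ₂ > 0 and let (Δ_k)_{k≥0} be a sequence of nonnegative real numbers. Let k₀ = −1 < k₁ < k₂ < … be a strictly increasing infinite sequence of integers, and set Δ_{k₀} := Δ₀/γ₂ by convention. Suppose that for every i ≥ 0 and every integer k with k_i < k ≤ k_{i+1}, Δ_k ≤ γ₁ · γ₂^{k − k_i − 1} · Δ_{k_i}. Then Σ_{k=0}^∞ Δ_k² ≤ ( γ₁² / (γ₂²(1 − γ₂²)) ) · Δ₀² + ( γ₁² / (1 − γ₂²) ) · Σ_{i=1}^∞ Δ_{k_i}². -/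
open scoped ENNReal

set_option maxHeartbeats 1600000 in
/-- **Geometric-series bound on the total sum of squared trust-region radii.**
With expansion constant `γ₁ > 1`, shrinkage constant `γ₂ ∈ (0,1)`, successful
iterations `K 1 < K 2 < …` (and the convention `K 0 = −1`,
`Δ_{K 0} = Δ 0 / γ₂`), if between consecutive successful iterations the radius
satisfies `Δ_k ≤ γ₁ γ₂^{k − K i − 1} Δ_{K i}`, then
`∑_k Δ_k² ≤ γ₁²/(γ₂²(1−γ₂²)) Δ₀² + γ₁²/(1−γ₂²) ∑_{i≥1} Δ_{K i}²`. -/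
theorem stmt_9
    (γ₁ γ₂ : ℝ) (hγ₁ : 1 < γ₁) (hγ₂0 : 0 < γ₂) (hγ₂1 : γ₂ < 1)
    (Δ : ℕ → ℝ) (hΔ : ∀ k, 0 ≤ Δ k)
    (K : ℕ → ℤ) (hK0 : K 0 = -1) (hKmono : StrictMono K)
    (hstep0 : ∀ k : ℤ, -1 < k → k ≤ K 1 →
      Δ k.toNat ≤ γ₁ * γ₂ ^ k.toNat * (Δ 0 / γ₂))
    (hstep : ∀ i : ℕ, 1 ≤ i → ∀ k : ℤ, K i < k → k ≤ K (i + 1) →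
      Δ k.toNat ≤ γ₁ * γ₂ ^ (k - K i - 1).toNat * Δ (K i).toNat) :
    ∑' k : ℕ, ENNReal.ofReal (Δ k ^ 2)
      ≤ ENNReal.ofReal (γ₁ ^ 2 / (γ₂ ^ 2 * (1 - γ₂ ^ 2)) * Δ 0 ^ 2)
        + ENNReal.ofReal (γ₁ ^ 2 / (1 - γ₂ ^ 2))
          * ∑' i : ℕ, ENNReal.ofReal (Δ (K (i + 1)).toNat ^ 2) := by
  classical
  have hγ₁0 : (0:ℝ) < γ₁ := lt_trans one_pos hγ₁
  have hq0 : (0:ℝ) < γ₂ ^ 2 := by positivity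
  have hq1 : γ₂ ^ 2 < 1 := by nlinarith
  -- convention value at index 0
  set c : ℕ → ℝ := fun i => if i = 0 then Δ 0 / γ₂ else Δ (K i).toNat with hc
  have hcnonneg : ∀ i, 0 ≤ c i := by
    intro i
    simp only [hc]
    split_ifs with h
    · exact div_nonneg (hΔ 0) hγ₂0.le
    · exact hΔ _
  -- lower bound on K
  have hKge : ∀ i, (-1:ℤ) ≤ K i := by
    intro i
    rw [← hK0]
    exact hKmono.monotone (Nat.zero_le i)
  have hKlb : ∀ i : ℕ, (i:ℤ) - 1 ≤ K i := by
    intro i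
    induction i with
    | zero => simp [hK0]
    | succ n ih =>
      have := hKmono (show n < n + 1 by omega)
      push_cast
      omega
  -- uniform step inequality
  have hstep' : ∀ i : ℕ, ∀ k : ℤ, K i < k → k ≤ K (i + 1) →
      Δ k.toNat ≤ γ₁ * γ₂ ^ (k - K i - 1).toNat * c i := by
    intro i k hk1 hk2
    by_cases h : i = 0
    · subst h
      have h1 : (k - K 0 - 1).toNat = k.toNat := by rw [hK0]; omega
      rw [h1]
      simp only [hc, if_pos rfl]
      exact hstep0 k (by rw [hK0] at hk1; omega) hk2
    · simp only [hc, if_neg h]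
      exact hstep i (Nat.one_le_iff_ne_zero.mpr h) k hk1 hk2
  -- ENNReal constants
  set q : ℝ≥0∞ := ENNReal.ofReal (γ₂ ^ 2) with hqdef
  set A : ℕ → ℝ≥0∞ := fun i => ENNReal.ofReal (γ₁ ^ 2 * c i ^ 2) with hA
  set m : ℕ → ℕ := fun i => (K i + 1).toNat with hm
  set G : ℕ → ℕ → ℝ≥0∞ := fun i k =>
    if (K i < (k:ℤ) ∧ (k:ℤ) ≤ K (i + 1)) then A i * q ^ (k - m i) else 0 with hG
  -- pointwise bound
  have hpoint : ∀ k : ℕ, ENNReal.ofReal (Δ k ^ 2) ≤ ∑' i : ℕ, G i k := by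
    intro k
    have hex : ∃ n : ℕ, (k:ℤ) ≤ K n := ⟨k + 1, by have := hKlb (k+1); push_cast at this ⊢; omega⟩
    have hjspec : (k:ℤ) ≤ K (Nat.find hex) := Nat.find_spec hex
    have hj0 : Nat.find hex ≠ 0 := by
      intro h
      rw [h, hK0] at hjspec
      omega
    set i := Nat.find hex - 1 with hi
    have hji : Nat.find hex = i + 1 := by omega
    rw [hji] at hjspec
    have hilt : K i < (k:ℤ) := by
      have := Nat.find_min hex (show i < Nat.find hex by omega)
      omega
    -- the block inequality
    have hmle : m i ≤ k := by
      have : K i + 1 ≤ (k:ℤ) := by omega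
      simp only [hm]
      omega
    have hexp : ((k:ℤ) - K i - 1).toNat = k - m i := by
      have := hKge i
      simp only [hm]
      omega
    have hb := hstep' i k hilt hjspec
    rw [Int.toNat_natCast] at hb
    have hsq : Δ k ^ 2 ≤ γ₁ ^ 2 * c i ^ 2 * (γ₂ ^ 2) ^ (k - m i) := by
      have h1 : Δ k ^ 2 ≤ (γ₁ * γ₂ ^ ((k:ℤ) - K i - 1).toNat * c i) ^ 2 := by
        apply pow_le_pow_left₀ (hΔ k) hb
      calc Δ k ^ 2 ≤ (γ₁ * γ₂ ^ ((k:ℤ) - K i - 1).toNat * c i) ^ 2 := h1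
        _ = γ₁ ^ 2 * c i ^ 2 * (γ₂ ^ 2) ^ ((k:ℤ) - K i - 1).toNat := by ring
        _ = γ₁ ^ 2 * c i ^ 2 * (γ₂ ^ 2) ^ (k - m i) := by rw [hexp]
    have hGik : ENNReal.ofReal (Δ k ^ 2) ≤ G i k := by
      simp only [hG, if_pos (And.intro hilt hjspec)]
      calc ENNReal.ofReal (Δ k ^ 2)
          ≤ ENNReal.ofReal (γ₁ ^ 2 * c i ^ 2 * (γ₂ ^ 2) ^ (k - m i)) :=
            ENNReal.ofReal_le_ofReal hsq
        _ = A i * q ^ (k - m i) := by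
            rw [ENNReal.ofReal_mul (by positivity), ENNReal.ofReal_pow (le_of_lt hq0)]
    exact le_trans hGik (ENNReal.le_tsum i)
  -- per-block geometric bound
  have hblock : ∀ i : ℕ, (∑' k : ℕ, G i k) ≤ A i * (1 - q)⁻¹ := by
    intro i
    set F : ℕ → ℝ≥0∞ := fun k => if m i ≤ k then A i * q ^ (k - m i) else 0 with hF
    have hGF : ∀ k, G i k ≤ F k := by
      intro k
      simp only [hG, hF]
      split_ifs with h1 h2
      · exact le_refl _
      · exfalso
        apply h2
        simp only [hm]
        omega
      · exact zero_le
      · exact le_refl _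
    have hFsum : (∑' k : ℕ, F k) = A i * (1 - q)⁻¹ := by
      have hinj : Function.Injective (fun j : ℕ => j + m i) := fun a b h => by
        simpa using h
      have hsupp : Function.support F ⊆ Set.range (fun j : ℕ => j + m i) := by
        intro k hk
        simp only [Function.mem_support, hF] at hk
        by_cases h : m i ≤ k
        · exact ⟨k - m i, by simp; omega⟩
        · simp [h] at hk
      rw [← hinj.tsum_eq hsupp]
      have : ∀ j : ℕ, F (j + m i) = A i * q ^ j := by
        intro j
        simp only [hF]
        simp only [le_add_iff_nonneg_left, Nat.zero_le, if_pos, Nat.add_sub_cancel]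
      simp_rw [this]
      rw [ENNReal.tsum_mul_left, ENNReal.tsum_geometric]
    calc (∑' k : ℕ, G i k) ≤ ∑' k : ℕ, F k := ENNReal.tsum_le_tsum hGF
      _ = A i * (1 - q)⁻¹ := hFsum
  -- the inverse constant
  have hinv : (1 - q)⁻¹ = ENNReal.ofReal ((1 - γ₂ ^ 2)⁻¹) := by
    rw [hqdef, ← ENNReal.ofReal_one, ← ENNReal.ofReal_sub _ (le_of_lt hq0),
      ENNReal.ofReal_inv_of_pos (by linarith)]
  -- assemble
  calc ∑' k : ℕ, ENNReal.ofReal (Δ k ^ 2)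
      ≤ ∑' k : ℕ, ∑' i : ℕ, G i k := ENNReal.tsum_le_tsum hpoint
    _ = ∑' i : ℕ, ∑' k : ℕ, G i k := ENNReal.tsum_comm
    _ ≤ ∑' i : ℕ, A i * (1 - q)⁻¹ := ENNReal.tsum_le_tsum hblock
    _ = A 0 * (1 - q)⁻¹ + ∑' i : ℕ, A (i + 1) * (1 - q)⁻¹ :=
        tsum_eq_zero_add' ENNReal.summable
    _ ≤ ENNReal.ofReal (γ₁ ^ 2 / (γ₂ ^ 2 * (1 - γ₂ ^ 2)) * Δ 0 ^ 2)
        + ENNReal.ofReal (γ₁ ^ 2 / (1 - γ₂ ^ 2))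
          * ∑' i : ℕ, ENNReal.ofReal (Δ (K (i + 1)).toNat ^ 2) := by
        gcongr
        · -- first term
          simp only [hA, hinv, hc, if_pos rfl]
          rw [← ENNReal.ofReal_mul (by positivity)]
          apply ENNReal.ofReal_le_ofReal
          apply le_of_eq
          rw [if_pos trivial]
          field_simp
        · -- second term
          have : ∀ i : ℕ, A (i + 1) * (1 - q)⁻¹
              = ENNReal.ofReal (γ₁ ^ 2 / (1 - γ₂ ^ 2))
                * ENNReal.ofReal (Δ (K (i + 1)).toNat ^ 2) := by
            intro i
            simp only [hA, hinv, hc, if_neg (Nat.succ_ne_zero i)]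
            rw [← ENNReal.ofReal_mul (by positivity),
              ← ENNReal.ofReal_mul
                (div_nonneg (by positivity) (by nlinarith : (0:ℝ) ≤ 1 - γ₂ ^ 2))]
            congr 1
            field_simp
          simp_rw [this]
          rw [ENNReal.tsum_mul_left]
end

section
/- Let f : ℝ^d → ℝ be continuously differentiable with ∇f Lipschitz of constant κ_{Lg} > 0 (i.e., ‖∇f(x₁) − ∇f(x₂)‖ ≤ κ_{Lg}‖x₁ − x₂‖ for all x₁, x₂). Let x, s ∈ ℝ^d with ‖s‖ ≤ Δ for some Δ > 0, let g ∈ ℝ^d with ‖g − ∇f(x)‖ ≤ κ_{ge}·Δ, and let B be a symmetric linear map on ℝ^d with operator norm ‖B‖ ≤ κ_H. Let F̄⁰ and F̄ˢ be real numbers whose estimation errors satisfy |(F̄⁰ − f(x)) − (F̄ˢ − f(x+s))| ≤ κ_{fde}·Δ², and define the model value Mˢ = F̄⁰ + gᵀs + (1/2)·sᵀBs. Then |Mˢ − F̄ˢ| ≤ ( κ_{fde} + κ_{ge} + (1/2)(κ_{Lg} + κ_H) ) · Δ². -/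
open MeasureTheory

section Aux

variable {d : ℕ}
local notation "E" => EuclideanSpace ℝ (Fin d)

lemma inner_gradient_eq (f : E → ℝ) (hf : ContDiff ℝ 1 f) (y v : E) :
    (inner ℝ (gradient f y) v : ℝ) = fderiv ℝ f y v := by
  simp only [gradient]
  exact InnerProductSpace.toDual_symm_apply

lemma taylor_bound (f : EuclideanSpace ℝ (Fin d) → ℝ) (κ : ℝ) (hκ : 0 ≤ κ)
    (hf : ContDiff ℝ 1 f)
    (hLip : ∀ x₁ x₂ : EuclideanSpace ℝ (Fin d),
      ‖gradient f x₁ - gradient f x₂‖ ≤ κ * ‖x₁ - x₂‖)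
    (x s : EuclideanSpace ℝ (Fin d)) :
    |f (x + s) - f x - (inner ℝ (gradient f x) s : ℝ)| ≤ κ / 2 * ‖s‖ ^ 2 := by
  set φ : ℝ → ℝ := fun t => f (x + t • s)
  set φ' : ℝ → ℝ := fun t => (inner ℝ (gradient f (x + t • s)) s : ℝ)
  have hder : ∀ t : ℝ, HasDerivAt φ (φ' t) t := by
    intro t
    have h1 : HasDerivAt (fun t : ℝ => x + t • s) s t := by
      simpa using ((hasDerivAt_id t).smul_const s).const_add x
    have h2 : HasFDerivAt f (fderiv ℝ f (x + t • s)) (x + t • s) :=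
      (hf.differentiable one_ne_zero (x + t • s)).hasFDerivAt
    have := h2.comp_hasDerivAt t h1
    simp only [φ, φ', inner_gradient_eq f hf]; exact this
  have hcontg : Continuous fun t : ℝ => gradient f (x + t • s) := by
    have h1 : Continuous (fderiv ℝ f) := hf.continuous_fderiv one_ne_zero
    have : Continuous fun y => gradient f y := by
      simp only [gradient]
      exact ((InnerProductSpace.toDual ℝ _).symm.continuous).comp h1
    exact this.comp (by continuity)
  have hcont : Continuous φ' := by
    apply Continuous.inner hcontg continuous_const
  have hint : φ 1 - φ 0 = ∫ t in (0:ℝ)..1, φ' t := by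
    rw [intervalIntegral.integral_eq_sub_of_hasDerivAt (fun t _ => hder t)
      (hcont.intervalIntegrable 0 1)]
  have hbound : ∀ t ∈ Set.Icc (0:ℝ) 1, |φ' t - φ' 0| ≤ κ * ‖s‖ ^ 2 * t := by
    intro t ht
    have h1 : φ' t - φ' 0 = (inner ℝ (gradient f (x + t • s) - gradient f (x + (0:ℝ) • s)) s : ℝ) := by
      simp [φ', inner_sub_left]
    rw [h1]
    calc |(inner ℝ (gradient f (x + t • s) - gradient f (x + (0:ℝ) • s)) s : ℝ)|
        ≤ ‖gradient f (x + t • s) - gradient f (x + (0:ℝ) • s)‖ * ‖s‖ := by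
          exact abs_real_inner_le_norm _ _
      _ ≤ κ * ‖(x + t • s) - (x + (0:ℝ) • s)‖ * ‖s‖ :=
          mul_le_mul_of_nonneg_right (hLip _ _) (norm_nonneg s)
      _ = κ * ‖s‖ ^ 2 * t := by
          have : (x + t • s) - (x + (0:ℝ) • s) = t • s := by module
          rw [this, norm_smul]
          simp [Real.norm_eq_abs, abs_of_nonneg ht.1]
          ring
  -- ∫ φ' - φ' 0 bound
  have key : |(∫ t in (0:ℝ)..1, φ' t) - φ' 0| ≤ κ / 2 * ‖s‖ ^ 2 := by
    have : (∫ t in (0:ℝ)..1, φ' t) - φ' 0 = ∫ t in (0:ℝ)..1, (φ' t - φ' 0) := by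
      rw [intervalIntegral.integral_sub (hcont.intervalIntegrable 0 1)
        (intervalIntegrable_const)]
      simp
    rw [this]
    have h2 : |∫ t in (0:ℝ)..1, (φ' t - φ' 0)| ≤ ∫ t in (0:ℝ)..1, κ * ‖s‖ ^ 2 * t := by
      calc |∫ t in (0:ℝ)..1, (φ' t - φ' 0)| ≤ ∫ t in (0:ℝ)..1, |φ' t - φ' 0| :=
            intervalIntegral.abs_integral_le_integral_abs zero_le_one
        _ ≤ ∫ t in (0:ℝ)..1, κ * ‖s‖ ^ 2 * t := by
            apply intervalIntegral.integral_mono_on zero_le_one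
            · exact ((hcont.sub continuous_const).abs).intervalIntegrable 0 1
            · exact (continuous_const.mul continuous_id).intervalIntegrable 0 1
            · exact hbound
    calc |∫ t in (0:ℝ)..1, (φ' t - φ' 0)| ≤ ∫ t in (0:ℝ)..1, κ * ‖s‖ ^ 2 * t := h2
      _ = κ / 2 * ‖s‖ ^ 2 := by
        rw [intervalIntegral.integral_const_mul]
        simp [integral_id]
        ring
  have h0 : φ' 0 = (inner ℝ (gradient f x) s : ℝ) := by simp [φ']
  have h1 : φ 1 = f (x + s) := by simp [φ]
  have h2 : φ 0 = f x := by simp [φ]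
  calc |f (x + s) - f x - (inner ℝ (gradient f x) s : ℝ)|
      = |(∫ t in (0:ℝ)..1, φ' t) - φ' 0| := by rw [← h0, ← h1, ← h2, ← hint]
    _ ≤ κ / 2 * ‖s‖ ^ 2 := key

end Aux

/-- **Model prediction error bound in a stochastic trust region.**
With `Mˢ = F̄⁰ + gᵀs + (1/2) sᵀBs`, gradient estimate error `≤ κ_{ge} Δ`,
balance condition `|Ē⁰ − Ēˢ| ≤ κ_{fde} Δ²`, `‖B‖ ≤ κ_H`, `‖s‖ ≤ Δ`, and
`κ_{Lg}`-Lipschitz `∇f`, one has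
`|Mˢ − F̄ˢ| ≤ (κ_{fde} + κ_{ge} + (1/2)(κ_{Lg} + κ_H)) Δ²`. -/
theorem stmt_10
    (d : ℕ) (f : EuclideanSpace ℝ (Fin d) → ℝ)
    (κLg : ℝ) (hκLg : 0 < κLg)
    (hf : ContDiff ℝ 1 f)
    (hLip : ∀ x₁ x₂ : EuclideanSpace ℝ (Fin d),
      ‖gradient f x₁ - gradient f x₂‖ ≤ κLg * ‖x₁ - x₂‖)
    (Δ κge κfde κH : ℝ) (hΔ : 0 < Δ)
    (x s : EuclideanSpace ℝ (Fin d)) (hs : ‖s‖ ≤ Δ)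
    (g : EuclideanSpace ℝ (Fin d)) (hg : ‖g - gradient f x‖ ≤ κge * Δ)
    (B : EuclideanSpace ℝ (Fin d) →L[ℝ] EuclideanSpace ℝ (Fin d))
    (hBsymm : ∀ u v : EuclideanSpace ℝ (Fin d), (inner ℝ (B u) v : ℝ) = inner ℝ u (B v))
    (hB : ‖B‖ ≤ κH)
    (F0 Fs : ℝ)
    (herr : |(F0 - f x) - (Fs - f (x + s))| ≤ κfde * Δ ^ 2) :
    |F0 + (inner ℝ g s : ℝ) + (1 / 2 : ℝ) * (inner ℝ s (B s) : ℝ) - Fs|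
      ≤ (κfde + κge + (1 / 2) * (κLg + κH)) * Δ ^ 2 := by
  have hs0 : (0:ℝ) ≤ ‖s‖ := norm_nonneg s
  have hT : |f (x + s) - f x - (inner ℝ (gradient f x) s : ℝ)| ≤ κLg / 2 * ‖s‖ ^ 2 :=
    taylor_bound f κLg hκLg.le hf hLip x s
  have hge : |(inner ℝ (g - gradient f x) s : ℝ)| ≤ κge * Δ ^ 2 := by
    calc |(inner ℝ (g - gradient f x) s : ℝ)| ≤ ‖g - gradient f x‖ * ‖s‖ :=
          abs_real_inner_le_norm _ _
      _ ≤ (κge * Δ) * Δ := by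
          apply mul_le_mul hg hs hs0 ((norm_nonneg _).trans hg)
      _ = κge * Δ ^ 2 := by ring
  have hBb : |(inner ℝ s (B s) : ℝ)| ≤ κH * Δ ^ 2 := by
    calc |(inner ℝ s (B s) : ℝ)| ≤ ‖s‖ * ‖B s‖ := abs_real_inner_le_norm _ _
      _ ≤ ‖s‖ * (‖B‖ * ‖s‖) := by
          exact mul_le_mul_of_nonneg_left (B.le_opNorm s) hs0
      _ ≤ Δ * (κH * Δ) := by
          apply mul_le_mul hs (mul_le_mul hB hs hs0 ((norm_nonneg B).trans hB))
            (mul_nonneg (norm_nonneg B) hs0) hΔ.le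
      _ = κH * Δ ^ 2 := by ring
  have hT2 : |f x + (inner ℝ (gradient f x) s : ℝ) - f (x + s)| ≤ κLg / 2 * Δ ^ 2 := by
    have : |f x + (inner ℝ (gradient f x) s : ℝ) - f (x + s)|
        = |f (x + s) - f x - (inner ℝ (gradient f x) s : ℝ)| := by
      rw [abs_sub_comm]; ring_nf
    rw [this]
    refine hT.trans ?_
    have : ‖s‖ ^ 2 ≤ Δ ^ 2 := by nlinarith
    nlinarith
  have hsplit : F0 + (inner ℝ g s : ℝ) + (1 / 2 : ℝ) * (inner ℝ s (B s) : ℝ) - Fs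
      = ((F0 - f x) - (Fs - f (x + s))) + (inner ℝ (g - gradient f x) s : ℝ)
        + (f x + (inner ℝ (gradient f x) s : ℝ) - f (x + s))
        + (1 / 2 : ℝ) * (inner ℝ s (B s) : ℝ) := by
    rw [inner_sub_left]; ring
  rw [hsplit]
  calc |((F0 - f x) - (Fs - f (x + s))) + (inner ℝ (g - gradient f x) s : ℝ)
        + (f x + (inner ℝ (gradient f x) s : ℝ) - f (x + s))
        + (1 / 2 : ℝ) * (inner ℝ s (B s) : ℝ)|
      ≤ |((F0 - f x) - (Fs - f (x + s)))| + |(inner ℝ (g - gradient f x) s : ℝ)|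
        + |f x + (inner ℝ (gradient f x) s : ℝ) - f (x + s)|
        + |(1 / 2 : ℝ) * (inner ℝ s (B s) : ℝ)| := by
        exact (abs_add_le _ _).trans (by gcongr; exact (abs_add_le _ _).trans (by gcongr; exact abs_add_le _ _))
    _ ≤ κfde * Δ ^ 2 + κge * Δ ^ 2 + κLg / 2 * Δ ^ 2 + (1/2) * (κH * Δ ^ 2) := by
        gcongr
        rw [abs_mul]
        simp only [abs_of_nonneg (by norm_num : (0:ℝ) ≤ 1/2)]
        exact mul_le_mul_of_nonneg_left hBb (by norm_num)
    _ = (κfde + κge + (1 / 2) * (κLg + κH)) * Δ ^ 2 := by ring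
end

section
/- Let f : ℝ^d → ℝ be continuously differentiable with ∇f Lipschitz of constant κ_{Lg} > 0, let η ∈ (0,1), κ_{fcd} ∈ (0,1], κ_H > 0, κ_{fde} > 0, κ_{ge} > 0, and set κ_{dum} = (1−η)·κ_{fcd} / ( κ_H + 2κ_{fde} + 2κ_{ge} + κ_{Lg} ). Let x, s ∈ ℝ^d with 0 < ‖s‖ ≤ Δ, let g ∈ ℝ^d with ‖g − ∇f(x)‖ ≤ κ_{ge}·Δ, let B be symmetric with ‖B‖ ≤ κ_H, let F̄⁰, F̄ˢ ∈ ℝ satisfy |(F̄⁰ − f(x)) − (F̄ˢ − f(x+s))| ≤ κ_{fde}·Δ², and define M⁰ = F̄⁰ and Mˢ = F̄⁰ + gᵀs + (1/2)·sᵀBs. Suppose the Cauchy decrease condition M⁰ − Mˢ ≥ (κ_{fcd}/2)·‖g‖·min( ‖g‖/κ_H , Δ ) holds, and suppose Δ ≤ κ_{dum}·‖g‖. Then the success ratio ρ̂ = (F̄ˢ − F̄⁰)/(Mˢ − M⁰) satisfies ρ̂ ≥ η. -/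
open InnerProductSpace

lemma taylor_half {d : ℕ} (f : EuclideanSpace ℝ (Fin d) → ℝ) (κLg : ℝ) (hκLg : 0 < κLg)
    (hf : ContDiff ℝ 1 f)
    (hLip : ∀ x₁ x₂ : EuclideanSpace ℝ (Fin d),
      ‖gradient f x₁ - gradient f x₂‖ ≤ κLg * ‖x₁ - x₂‖)
    (x s : EuclideanSpace ℝ (Fin d)) :
    |f (x + s) - f x - (inner ℝ (gradient f x) s : ℝ)| ≤ κLg / 2 * ‖s‖ ^ 2 := by
  have hdiff : Differentiable ℝ f := hf.differentiable one_ne_zero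
  set G : ℝ → ℝ := fun t => (inner ℝ (gradient f (x + t • s)) s : ℝ) with hG
  have hderiv : ∀ t : ℝ, HasDerivAt (fun t : ℝ => f (x + t • s)) (G t) t := by
    intro t
    have h1 : HasDerivAt (fun t : ℝ => x + t • s) s t := by
      simpa using ((hasDerivAt_id t).smul_const s).const_add x
    have h2 := ((hdiff (x + t • s)).hasGradientAt).hasFDerivAt
    have h3 := h2.comp_hasDerivAt t h1
    convert h3 using 1
    · rfl
    · rfl
    · rfl
    · simp [hG]
  have hgradLip : LipschitzWith κLg.toNNReal (gradient f) := by
    apply LipschitzWith.of_dist_le_mul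
    intro a b
    simpa [dist_eq_norm, Real.coe_toNNReal _ hκLg.le] using hLip a b
  have hGcont : Continuous G := by
    apply Continuous.inner
    · exact hgradLip.continuous.comp (by continuity)
    · exact continuous_const
  have hInt : IntervalIntegrable G MeasureTheory.volume 0 1 :=
    hGcont.intervalIntegrable 0 1
  have key : ∫ t in (0:ℝ)..1, G t = f (x + s) - f x := by
    have := intervalIntegral.integral_eq_sub_of_hasDerivAt
      (f := fun t : ℝ => f (x + t • s)) (f' := G) (a := 0) (b := 1)
      (fun t _ => hderiv t) hInt
    simpa using this
  set c : ℝ := (inner ℝ (gradient f x) s : ℝ) with hc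
  have hIntc : IntervalIntegrable (fun t => G t - c) MeasureTheory.volume 0 1 :=
    hInt.sub intervalIntegrable_const
  have key2 : ∫ t in (0:ℝ)..1, (G t - c) = f (x + s) - f x - c := by
    rw [intervalIntegral.integral_sub hInt (intervalIntegrable_const)]
    simp [key]
  have hbound : ∀ t ∈ Set.Icc (0:ℝ) 1, |G t - c| ≤ κLg * t * ‖s‖ ^ 2 := by
    intro t ht
    have h1 : G t - c = (inner ℝ (gradient f (x + t • s) - gradient f x) s : ℝ) := by
      simp [hG, hc, inner_sub_left]
    rw [h1]
    calc |(inner ℝ (gradient f (x + t • s) - gradient f x) s : ℝ)|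
        ≤ ‖gradient f (x + t • s) - gradient f x‖ * ‖s‖ := abs_real_inner_le_norm _ _
      _ ≤ (κLg * ‖(x + t • s) - x‖) * ‖s‖ := by
          gcongr; exact hLip _ _
      _ = κLg * t * ‖s‖ ^ 2 := by
          rw [add_sub_cancel_left, norm_smul]
          rw [Real.norm_eq_abs, abs_of_nonneg ht.1]
          ring
  have habs1 : |∫ t in (0:ℝ)..1, (G t - c)| ≤ ∫ t in (0:ℝ)..1, |G t - c| :=
    intervalIntegral.abs_integral_le_integral_abs (by norm_num)
  have habs2 : ∫ t in (0:ℝ)..1, |G t - c| ≤ ∫ t in (0:ℝ)..1, κLg * t * ‖s‖ ^ 2 := by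
    apply intervalIntegral.integral_mono_on (by norm_num)
    · exact hIntc.abs
    · exact ((continuous_const.mul continuous_id).mul continuous_const).intervalIntegrable 0 1
    · exact hbound
  have hval : ∫ t in (0:ℝ)..1, κLg * t * ‖s‖ ^ 2 = κLg / 2 * ‖s‖ ^ 2 := by
    have heq : (fun t : ℝ => κLg * t * ‖s‖ ^ 2) = fun t : ℝ => (κLg * ‖s‖ ^ 2) * t := by
      funext t; ring
    rw [heq, intervalIntegral.integral_const_mul, integral_id]
    ring
  rw [key2] at habs1
  rw [hval] at habs2
  linarith



/-- **Success guarantee for small trust regions (zeroth/first-order, generic).**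
If the trust-region radius satisfies `Δ ≤ κ_{dum} ‖g‖` with
`κ_{dum} = (1−η)κ_{fcd}/(κ_H + 2κ_{fde} + 2κ_{ge} + κ_{Lg})`, the balance
condition and Cauchy decrease hold, then the success ratio
`ρ̂ = (F̄ˢ − F̄⁰)/(Mˢ − M⁰)` is at least `η`. -/
theorem stmt_11
    (d : ℕ) (f : EuclideanSpace ℝ (Fin d) → ℝ)
    (κLg : ℝ) (hκLg : 0 < κLg)
    (hf : ContDiff ℝ 1 f)
    (hLip : ∀ x₁ x₂ : EuclideanSpace ℝ (Fin d),
      ‖gradient f x₁ - gradient f x₂‖ ≤ κLg * ‖x₁ - x₂‖)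
    (η κfcd κH κfde κge : ℝ)
    (hη : η ∈ Set.Ioo (0 : ℝ) 1) (hκfcd : κfcd ∈ Set.Ioc (0 : ℝ) 1)
    (hκH : 0 < κH) (hκfde : 0 < κfde) (hκge : 0 < κge)
    (κdum : ℝ) (hκdum : κdum = (1 - η) * κfcd / (κH + 2 * κfde + 2 * κge + κLg))
    (Δ : ℝ) (x s : EuclideanSpace ℝ (Fin d)) (hs0 : 0 < ‖s‖) (hsΔ : ‖s‖ ≤ Δ)
    (g : EuclideanSpace ℝ (Fin d)) (hg : ‖g - gradient f x‖ ≤ κge * Δ)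
    (B : EuclideanSpace ℝ (Fin d) →L[ℝ] EuclideanSpace ℝ (Fin d))
    (hBsymm : ∀ u v : EuclideanSpace ℝ (Fin d), (inner ℝ (B u) v : ℝ) = inner ℝ u (B v))
    (hB : ‖B‖ ≤ κH)
    (F0 Fs : ℝ)
    (herr : |(F0 - f x) - (Fs - f (x + s))| ≤ κfde * Δ ^ 2)
    (M0 Ms : ℝ) (hM0 : M0 = F0)
    (hMs : Ms = F0 + (inner ℝ g s : ℝ) + (1 / 2 : ℝ) * (inner ℝ s (B s) : ℝ))
    (hCauchy : M0 - Ms ≥ κfcd / 2 * ‖g‖ * min (‖g‖ / κH) Δ)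
    (hΔg : Δ ≤ κdum * ‖g‖) :
    η ≤ (Fs - F0) / (Ms - M0) := by
  obtain ⟨hη0, hη1⟩ := hη
  obtain ⟨hκfcd0, hκfcd1⟩ := hκfcd
  set D : ℝ := κH + 2 * κfde + 2 * κge + κLg with hDdef
  have hD : 0 < D := by positivity
  have hΔ0 : 0 < Δ := lt_of_lt_of_le hs0 hsΔ
  have hκdum0 : 0 < κdum := by
    rw [hκdum]
    apply div_pos (mul_pos (by linarith) hκfcd0) hD
  have hg0 : 0 < ‖g‖ := by
    nlinarith [norm_nonneg g]
  have hκdumκH : κdum * κH ≤ 1 := by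
    rw [hκdum, div_mul_eq_mul_div, div_le_one hD]
    have e1 : (1 - η) * κfcd ≤ 1 := by nlinarith
    have e2 : (1 - η) * κfcd * κH ≤ 1 * κH :=
      mul_le_mul_of_nonneg_right e1 hκH.le
    rw [hDdef]; linarith
  have hmin : min (‖g‖ / κH) Δ = Δ := by
    apply min_eq_right
    rw [le_div_iff₀ hκH]
    nlinarith
  rw [hmin] at hCauchy
  have hApos : 0 < M0 - Ms := lt_of_lt_of_le (by positivity) hCauchy
  -- bounds on the error terms
  have hginner : |(inner ℝ (g - gradient f x) s : ℝ)| ≤ κge * Δ ^ 2 := by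
    calc |(inner ℝ (g - gradient f x) s : ℝ)|
        ≤ ‖g - gradient f x‖ * ‖s‖ := abs_real_inner_le_norm _ _
      _ ≤ (κge * Δ) * Δ := by gcongr
      _ = κge * Δ ^ 2 := by ring
  have hBinner : |(inner ℝ s (B s) : ℝ)| ≤ κH * Δ ^ 2 := by
    calc |(inner ℝ s (B s) : ℝ)|
        ≤ ‖s‖ * ‖B s‖ := abs_real_inner_le_norm _ _
      _ ≤ ‖s‖ * (‖B‖ * ‖s‖) := by gcongr; exact B.le_opNorm s
      _ ≤ Δ * (κH * Δ) := by
          have hΔ0 : (0:ℝ) < Δ := lt_of_lt_of_le hs0 hsΔ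
          apply mul_le_mul hsΔ (mul_le_mul hB hsΔ (norm_nonneg s) hκH.le)
            (by positivity) hΔ0.le
      _ = κH * Δ ^ 2 := by ring
  have hR := taylor_half f κLg hκLg hf hLip x s
  have hR' : |f (x + s) - f x - (inner ℝ (gradient f x) s : ℝ)| ≤ κLg / 2 * Δ ^ 2 := by
    refine hR.trans ?_
    gcongr
  have hsplit : (inner ℝ (g - gradient f x) s : ℝ)
      = (inner ℝ g s : ℝ) - (inner ℝ (gradient f x) s : ℝ) := inner_sub_left _ _ _
  have hid : Fs - Ms
      = (f (x + s) - f x - (inner ℝ (gradient f x) s : ℝ))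
        - (inner ℝ (g - gradient f x) s : ℝ)
        - (1 / 2 : ℝ) * (inner ℝ s (B s) : ℝ)
        - ((F0 - f x) - (Fs - f (x + s))) := by
    rw [hMs, hsplit]
    ring
  have hFsMs : |Fs - Ms| ≤ D / 2 * Δ ^ 2 := by
    rw [abs_le] at hR' hginner hBinner herr ⊢
    obtain ⟨h1, h2⟩ := hR'
    obtain ⟨h3, h4⟩ := hginner
    obtain ⟨h5, h6⟩ := hBinner
    obtain ⟨h7, h8⟩ := herr
    constructor
    · rw [hid, hDdef]; linarith only [h1, h4, h6, h8]
    · rw [hid, hDdef]; linarith only [h2, h3, h5, h7]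
  -- key inequality : (1 - η) * (M0 - Ms) ≥ D / 2 * Δ ^ 2
  have hkey : D / 2 * Δ ^ 2 ≤ (1 - η) * (M0 - Ms) := by
    have h1 : (1 - η) * κfcd = κdum * D := by
      rw [hκdum, div_mul_cancel₀]
      exact ne_of_gt hD
    have h2 : D * Δ ≤ (1 - η) * κfcd * ‖g‖ := by
      rw [h1]
      calc D * Δ ≤ D * (κdum * ‖g‖) := by gcongr
        _ = κdum * D * ‖g‖ := by ring
    have h3 : (1 - η) * (M0 - Ms) ≥ (1 - η) * (κfcd / 2 * ‖g‖ * Δ) := by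
      apply mul_le_mul_of_nonneg_left hCauchy (by linarith)
    have h4 : D * Δ * Δ ≤ (1 - η) * κfcd * ‖g‖ * Δ :=
      mul_le_mul_of_nonneg_right h2 hΔ0.le
    rw [hDdef] at h4 ⊢
    linarith only [h3, h4]
  -- conclude
  have hdiv : (Fs - F0) / (Ms - M0) = (F0 - Fs) / (M0 - Ms) := by
    rw [← neg_div_neg_eq]; ring_nf
  rw [hdiv, le_div_iff₀ hApos]
  have habs := abs_le.mp hFsMs
  linarith only [habs.2, hkey, hM0]
end

section
/- Let F̄ : ℝ^d → ℝ be differentiable with gradient Ḡ satisfying ‖Ḡ(x₁) − Ḡ(x₂)‖ ≤ κ_{uLG}·‖x₁ − x₂‖ for all x₁, x₂, with κ_{uLG} > 0. Let η ∈ (0,1), κ_{fcd} ∈ (0,1], κ_H > 0, and set κ_{dum} = (1−η)·κ_{fcd} / ( κ_H + κ_{uLG} ). Let x, s ∈ ℝ^d with 0 < ‖s‖ ≤ Δ, let B be symmetric with ‖B‖ ≤ κ_H, and define the model M(x+u) = F̄(x) + Ḡ(x)ᵀu + (1/2)·uᵀBu. Suppose the Cauchy decrease condition M(x) − M(x+s)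 ≥ (κ_{fcd}/2)·‖Ḡ(x)‖·min( ‖Ḡ(x)‖/κ_H , Δ ) holds, and suppose Δ ≤ κ_{dum}·‖Ḡ(x)‖. Then the success ratio ρ̂ = ( F̄(x+s) − F̄(x) ) / ( M(x+s) − M(x) ) satisfies ρ̂ ≥ η. -/
open Set

/-- Quadratic Taylor bound for a function with Lipschitz gradient. -/
lemma taylor_quad_bound
    {d : ℕ} (Fb : EuclideanSpace ℝ (Fin d) → ℝ)
    (Gb : EuclideanSpace ℝ (Fin d) → EuclideanSpace ℝ (Fin d))
    (hgrad : ∀ y, HasGradientAt Fb (Gb y) y)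
    (κuLG : ℝ) (hκuLG : 0 < κuLG)
    (hLip : ∀ x₁ x₂ : EuclideanSpace ℝ (Fin d),
      ‖Gb x₁ - Gb x₂‖ ≤ κuLG * ‖x₁ - x₂‖)
    (x s : EuclideanSpace ℝ (Fin d)) :
    |Fb (x + s) - Fb x - (inner ℝ (Gb x) s : ℝ)| ≤ κuLG * ‖s‖ ^ 2 / 2 := by
  set f : ℝ → ℝ := fun t => Fb (x + t • s) - Fb x - t * (inner ℝ (Gb x) s : ℝ) with hf
  set f' : ℝ → ℝ :=
    fun t => (inner ℝ (Gb (x + t • s) - Gb x) s : ℝ) with hf'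
  have hd : ∀ t : ℝ, HasDerivAt f (f' t) t := by
    intro t
    have hline : HasDerivAt (fun t : ℝ => x + t • s) s t := by
      simpa using ((hasDerivAt_id t).smul_const s).const_add x
    have h1 : HasDerivAt (fun t : ℝ => Fb (x + t • s))
        ((inner ℝ (Gb (x + t • s)) s : ℝ)) t := by
      have := (hgrad (x + t • s)).hasFDerivAt.comp_hasDerivAt t hline
      exact this
    have h2 : HasDerivAt (fun t : ℝ => t * (inner ℝ (Gb x) s : ℝ))
        ((inner ℝ (Gb x) s : ℝ)) t := by
      simpa using (hasDerivAt_id t).mul_const ((inner ℝ (Gb x) s : ℝ))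
    simp only [hf', inner_sub_left]
    exact (h1.sub_const (Fb x)).sub h2
  set Bf : ℝ → ℝ := fun t => κuLG * ‖s‖ ^ 2 * t ^ 2 / 2 with hBf
  set Bf' : ℝ → ℝ := fun t => κuLG * ‖s‖ ^ 2 * t with hBf'
  have hBd : ∀ t : ℝ, HasDerivAt Bf (Bf' t) t := by
    intro t
    have := ((hasDerivAt_pow 2 t).const_mul (κuLG * ‖s‖ ^ 2)).div_const 2
    refine this.congr_deriv ?_
    simp [hBf']
    ring
  have key : ∀ ⦃t⦄, t ∈ Icc (0:ℝ) 1 → ‖f t‖ ≤ Bf t := by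
    apply image_norm_le_of_norm_deriv_right_le_deriv_boundary
      (f' := f') (B := Bf) (B' := Bf')
    · exact fun t _ => (hd t).continuousAt.continuousWithinAt
    · exact fun t _ => (hd t).hasDerivWithinAt
    · simp [hf, hBf]
    · exact hBd
    · intro t ht
      have h1 : ‖f' t‖ ≤ ‖Gb (x + t • s) - Gb x‖ * ‖s‖ := by
        simpa [hf'] using abs_real_inner_le_norm (Gb (x + t • s) - Gb x) s
      have h2 : ‖Gb (x + t • s) - Gb x‖ ≤ κuLG * (t * ‖s‖) := by
        have := hLip (x + t • s) x
        simpa [norm_smul, abs_of_nonneg ht.1] using this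
      calc ‖f' t‖ ≤ (κuLG * (t * ‖s‖)) * ‖s‖ := h1.trans (by
              apply mul_le_mul_of_nonneg_right h2 (norm_nonneg s))
        _ = Bf' t := by simp [hBf']; ring
  have := key (right_mem_Icc.2 zero_le_one)
  simpa [hf, hBf, Real.norm_eq_abs] using this

set_option maxHeartbeats 1000000 in
/-- **Success guarantee for small trust regions (first-order, CRN, smooth
sample paths).** If the sample-path estimate `F̄` is differentiable with
`κ_{uLG}`-Lipschitz gradient `Ḡ`, the model is built from `F̄(x)` and `Ḡ(x)`,
the Cauchy decrease holds, and `Δ ≤ κ_{dum} ‖Ḡ(x)‖` with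
`κ_{dum} = (1−η)κ_{fcd}/(κ_H + κ_{uLG})`, then the success ratio
`ρ̂ = (F̄(x+s) − F̄(x))/(M(x+s) − M(x))` is at least `η`. -/
theorem stmt_12
    (d : ℕ) (Fb : EuclideanSpace ℝ (Fin d) → ℝ)
    (Gb : EuclideanSpace ℝ (Fin d) → EuclideanSpace ℝ (Fin d))
    (hgrad : ∀ y, HasGradientAt Fb (Gb y) y)
    (κuLG : ℝ) (hκuLG : 0 < κuLG)
    (hLip : ∀ x₁ x₂ : EuclideanSpace ℝ (Fin d),
      ‖Gb x₁ - Gb x₂‖ ≤ κuLG * ‖x₁ - x₂‖)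
    (η κfcd κH : ℝ)
    (hη : η ∈ Set.Ioo (0 : ℝ) 1) (hκfcd : κfcd ∈ Set.Ioc (0 : ℝ) 1) (hκH : 0 < κH)
    (κdum : ℝ) (hκdum : κdum = (1 - η) * κfcd / (κH + κuLG))
    (Δ : ℝ) (x s : EuclideanSpace ℝ (Fin d)) (hs0 : 0 < ‖s‖) (hsΔ : ‖s‖ ≤ Δ)
    (B : EuclideanSpace ℝ (Fin d) →L[ℝ] EuclideanSpace ℝ (Fin d))
    (hBsymm : ∀ u v : EuclideanSpace ℝ (Fin d), (inner ℝ (B u) v : ℝ) = inner ℝ u (B v))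
    (hB : ‖B‖ ≤ κH)
    (M : EuclideanSpace ℝ (Fin d) → ℝ)
    (hM : ∀ y, M y = Fb x + (inner ℝ (Gb x) (y - x) : ℝ)
      + (1 / 2 : ℝ) * (inner ℝ (y - x) (B (y - x)) : ℝ))
    (hCauchy : M x - M (x + s) ≥ κfcd / 2 * ‖Gb x‖ * min (‖Gb x‖ / κH) Δ)
    (hΔg : Δ ≤ κdum * ‖Gb x‖) :
    η ≤ (Fb (x + s) - Fb x) / (M (x + s) - M x) := by
  obtain ⟨hη0, hη1⟩ := hη
  obtain ⟨hκf0, hκf1⟩ := hκfcd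
  have hΔ0 : 0 < Δ := lt_of_lt_of_le hs0 hsΔ
  have hsum : 0 < κH + κuLG := by linarith
  have hκdum0 : 0 < κdum := by
    rw [hκdum]
    exact div_pos (by nlinarith) hsum
  have hg : 0 < ‖Gb x‖ := by
    by_contra h
    push_neg at h
    have : ‖Gb x‖ = 0 := le_antisymm h (norm_nonneg _)
    rw [this, mul_zero] at hΔg
    linarith
  -- min = Δ
  have hκdumκH : κdum * κH < 1 := by
    rw [hκdum, div_mul_eq_mul_div, div_lt_one hsum]
    have h1 : (1 - η) * κfcd < 1 := by nlinarith
    nlinarith [mul_lt_mul_of_pos_right h1 hκH]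
  have hΔle : Δ ≤ ‖Gb x‖ / κH := by
    rw [le_div_iff₀ hκH]
    calc Δ * κH ≤ κdum * ‖Gb x‖ * κH := by nlinarith
      _ = (κdum * κH) * ‖Gb x‖ := by ring
      _ ≤ 1 * ‖Gb x‖ := by nlinarith
      _ = ‖Gb x‖ := one_mul _
  have hmin : min (‖Gb x‖ / κH) Δ = Δ := min_eq_right hΔle
  rw [hmin] at hCauchy
  have hD : κfcd / 2 * ‖Gb x‖ * Δ ≤ M x - M (x + s) := hCauchy
  have hDpos : 0 < M x - M (x + s) := by
    calc (0:ℝ) < κfcd / 2 * ‖Gb x‖ * Δ := by positivity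
      _ ≤ _ := hD
  -- M x = Fb x
  have hMx : M x = Fb x := by
    have := hM x
    simpa using this
  -- M (x+s)
  have hMxs : M (x + s) = Fb x + (inner ℝ (Gb x) s : ℝ)
      + (1 / 2 : ℝ) * (inner ℝ s (B s) : ℝ) := by
    have := hM (x + s)
    simpa [add_sub_cancel_left] using this
  -- quadratic bound on the model error
  have hquad0 := taylor_quad_bound Fb Gb hgrad κuLG hκuLG hLip x s
  have hquad : |Fb (x + s) - Fb x - (inner ℝ (Gb x) s : ℝ)| ≤ κuLG / 2 * ‖s‖ ^ 2 := by
    linarith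
  have hBs : |(inner ℝ s (B s) : ℝ)| ≤ κH * ‖s‖ ^ 2 := by
    calc |(inner ℝ s (B s) : ℝ)| ≤ ‖s‖ * ‖B s‖ := abs_real_inner_le_norm s (B s)
      _ ≤ ‖s‖ * (κH * ‖s‖) := by
          apply mul_le_mul_of_nonneg_left _ (norm_nonneg s)
          exact (B.le_opNorm s).trans (mul_le_mul_of_nonneg_right hB (norm_nonneg s))
      _ = κH * ‖s‖ ^ 2 := by ring
  have herr : |Fb (x + s) - M (x + s)| ≤ (κH + κuLG) / 2 * ‖s‖ ^ 2 := by
    have h1 : Fb (x + s) - M (x + s)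
        = (Fb (x + s) - Fb x - (inner ℝ (Gb x) s : ℝ))
          - (1 / 2 : ℝ) * (inner ℝ s (B s) : ℝ) := by
      rw [hMxs]; ring
    rw [h1]
    calc |(Fb (x + s) - Fb x - (inner ℝ (Gb x) s : ℝ))
          - (1 / 2 : ℝ) * (inner ℝ s (B s) : ℝ)|
        ≤ |Fb (x + s) - Fb x - (inner ℝ (Gb x) s : ℝ)|
          + |(1 / 2 : ℝ) * (inner ℝ s (B s) : ℝ)| := abs_sub _ _
      _ ≤ κuLG / 2 * ‖s‖ ^ 2 + (1 / 2) * (κH * ‖s‖ ^ 2) := by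
          refine add_le_add hquad ?_
          rw [abs_mul]
          simp only [abs_of_pos (by norm_num : (0:ℝ) < 1/2)]
          nlinarith
      _ = (κH + κuLG) / 2 * ‖s‖ ^ 2 := by ring
  have hsq : ‖s‖ ^ 2 ≤ Δ ^ 2 := by nlinarith
  have herr' : |Fb (x + s) - M (x + s)| ≤ (κH + κuLG) / 2 * Δ ^ 2 :=
    herr.trans (by nlinarith)
  -- key comparison
  have hkey : (κH + κuLG) / 2 * Δ ^ 2 ≤ (1 - η) * (κfcd / 2 * ‖Gb x‖ * Δ) := by
    have h1 : (κH + κuLG) * Δ ≤ (κH + κuLG) * (κdum * ‖Gb x‖) := by nlinarith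
    have h2 : (κH + κuLG) * κdum = (1 - η) * κfcd := by
      rw [hκdum, mul_comm, div_mul_cancel₀ _ (ne_of_gt hsum)]
    nlinarith [mul_le_mul_of_nonneg_right h1 (le_of_lt hΔ0), h2, hΔ0]
  have hnum : Fb (x + s) - Fb x ≤ η * (M (x + s) - M x) := by
    have h3 : Fb (x + s) - M (x + s) ≤ (1 - η) * (M x - M (x + s)) := by
      calc Fb (x + s) - M (x + s) ≤ |Fb (x + s) - M (x + s)| := le_abs_self _
        _ ≤ (κH + κuLG) / 2 * Δ ^ 2 := herr'
        _ ≤ (1 - η) * (κfcd / 2 * ‖Gb x‖ * Δ) := hkey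
        _ ≤ (1 - η) * (M x - M (x + s)) := by nlinarith
    have : Fb (x + s) - Fb x = (Fb (x + s) - M (x + s)) + (M (x + s) - M x) := by
      rw [hMx]; ring
    rw [this]
    nlinarith
  have hdneg : M (x + s) - M x < 0 := by linarith
  rw [le_div_iff_of_neg hdneg]
  linarith [hnum]
end
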